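/- arXiv:2603.26893 — 3 statements merged into one kernel-verified Lean document; each statement's English description precedes it below -/
import Mathlib

section
/- Given any request sequence E ∈ E_{n,m,q}, there exists a nested sequence Ẽ ∈ E^nest_{n,m,q} satisfying WF(E) ⪯ WF(Ẽ) and OPT(E) ⪰ OPT(Ẽ). -/
open Finset MeasureTheory

/-- A request sequence with `n` offline nodes and `m` online nodes: each online
node `t` has a nonempty neighborhood `N t ⊆ [n]` and a positive quantity `q t`. -/
structure ReqSeq (n m : ℕ) where
  N : Fin m → Finset (Fin n)
  q : Fin m → ℝ
  N_nonempty : ∀ t, (N t).Nonempty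
  q_pos : ∀ t, 0 < q t

/-- `Δ(N, q)`: feasible allocations for a single online node. -/
def allocSet (n : ℕ) (N : Finset (Fin n)) (qt : ℝ) : Set (Fin n → ℝ) :=
  {x | (∀ i, 0 ≤ x i) ∧ (∀ i, i ∉ N → x i = 0) ∧ ∑ i, x i = qt}

/-- A feasible allocation trajectory on a request sequence. -/
def Feasible {n m : ℕ} (E : ReqSeq n m) (x : Fin m → Fin n → ℝ) : Prop :=
  ∀ t, x t ∈ allocSet n (E.N t) (E.q t)

/-- `Δ(E)`: the Minkowski sum of the per-node allocation sets (feasible load vectors). -/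
def loads {n m : ℕ} (E : ReqSeq n m) : Set (Fin n → ℝ) :=
  {ℓ | ∃ x, Feasible E x ∧ ℓ = ∑ t, x t}

/-- Sum of the `k` largest entries of `x`. -/
noncomputable def topSum {n : ℕ} (x : Fin n → ℝ) (k : ℕ) : ℝ :=
  sSup ((fun s : Finset (Fin n) => ∑ i ∈ s, x i) '' {s | s.card = k})

/-- `Majorizes x y` means `x ⪰ y`: equal total sums and every `k`-largest-entries
sum of `x` dominates that of `y`. -/
def Majorizes {n : ℕ} (x y : Fin n → ℝ) : Prop :=
  (∑ i, x i = ∑ i, y i) ∧ ∀ k ≤ n, topSum y k ≤ topSum x k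

/-- `f` is Schur-concave on the nonnegative orthant: `x ⪯ y → f x ≥ f y`. -/
def SchurConcave {n : ℕ} (f : (Fin n → ℝ) → ℝ) : Prop :=
  ∀ x y : Fin n → ℝ, (∀ i, 0 ≤ x i) → (∀ i, 0 ≤ y i) → Majorizes y x → f y ≤ f x

/-- `g` is Schur-convex on the nonnegative orthant: `x ⪯ y → g x ≤ g y`. -/
def SchurConvex {n : ℕ} (g : (Fin n → ℝ) → ℝ) : Prop :=
  ∀ x y : Fin n → ℝ, (∀ i, 0 ≤ x i) → (∀ i, 0 ≤ y i) → Majorizes y x → g x ≤ g y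

/-- Cumulative load strictly before online node `t`. -/
def prevLoad {n m : ℕ} (x : Fin m → Fin n → ℝ) (t : Fin m) : Fin n → ℝ :=
  fun i => ∑ s ∈ Finset.univ.filter (fun s => s < t), x s i

/-- Minimum of `v` over the neighborhood of online node `t`. -/
noncomputable def reqMinOn {n m : ℕ} (E : ReqSeq n m) (t : Fin m) (v : Fin n → ℝ) : ℝ :=
  (E.N t).inf' (E.N_nonempty t) v

/-- `x` is the water-filling allocation trajectory on `E`: at each arrival `t`,
`x t` maximizes the minimum post-allocation load over `N t`. -/
def IsWFAlloc {n m : ℕ} (E : ReqSeq n m) (x : Fin m → Fin n → ℝ) : Prop :=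
  Feasible E x ∧
  ∀ t, ∀ y ∈ allocSet n (E.N t) (E.q t),
    reqMinOn E t (fun i => y i + prevLoad x t i) ≤ reqMinOn E t (fun i => x t i + prevLoad x t i)

-- The load vector produced by water-filling (via choice; the trajectory exists and is unique).
open Classical in
noncomputable def wfLoad {n m : ℕ} (E : ReqSeq n m) : Fin n → ℝ :=
  if h : ∃ x, IsWFAlloc E x then ∑ t, h.choose t else 0

/-- `ℓ` is the majorization-minimal element of `Δ(E)`. -/
def IsOpt {n m : ℕ} (E : ReqSeq n m) (ℓ : Fin n → ℝ) : Prop :=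
  ℓ ∈ loads E ∧ ∀ ℓ' ∈ loads E, Majorizes ℓ' ℓ

-- `OPT(E)`, the majorization-minimal feasible load vector (via choice).
open Classical in
noncomputable def optLoad {n m : ℕ} (E : ReqSeq n m) : Fin n → ℝ :=
  if h : ∃ ℓ, IsOpt E ℓ then h.choose else 0

/-- A request sequence is nested if `N 1 ⊇ N 2 ⊇ ⋯ ⊇ N m`. -/
def IsNested {n m : ℕ} (E : ReqSeq n m) : Prop :=
  ∀ s t : Fin m, s ≤ t → E.N t ⊆ E.N s

/-- `E_{n,m,q}`: request sequences with total quantity `q`. -/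
def seqs (n m : ℕ) (q : ℝ) : Set (ReqSeq n m) := {E | ∑ t, E.q t = q}

/-- The harmonic-series matrix applied to a vector: `(Hℓ)(i) = Σ_{j ≤ i} ℓ(j)/(n − j + 1)`
(in 1-indexed notation). -/
noncomputable def Hvec (n : ℕ) (ℓ : Fin n → ℝ) : Fin n → ℝ :=
  fun i => ∑ j ∈ Finset.univ.filter (fun j => j ≤ i), ℓ j / ((n - (j : ℕ) : ℕ) : ℝ)

/-- The water-filling height of online node `t`: the common post-allocation load of
the offline nodes in the support of `x t`. -/
noncomputable def height {n m : ℕ} (x : Fin m → Fin n → ℝ) (t : Fin m) : ℝ :=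
  sSup {c | ∃ i, 0 < x t i ∧ c = x t i + prevLoad x t i}

section Basics

variable {n m : ℕ}

lemma allocSet_sum_N {N : Finset (Fin n)} {qt : ℝ} {x : Fin n → ℝ}
    (hx : x ∈ allocSet n N qt) : ∑ i ∈ N, x i = qt := by
  rw [Finset.sum_subset (Finset.subset_univ N) (fun i _ hi => hx.2.1 i hi)]
  exact hx.2.2

lemma loads_nonneg {E : ReqSeq n m} {ℓ : Fin n → ℝ} (h : ℓ ∈ loads E) (i : Fin n) :
    0 ≤ ℓ i := by
  obtain ⟨x, hx, rfl⟩ := h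
  rw [Finset.sum_apply]
  exact Finset.sum_nonneg fun t _ => (hx t).1 i

lemma loads_total {E : ReqSeq n m} {ℓ : Fin n → ℝ} (h : ℓ ∈ loads E) :
    ∑ i, ℓ i = ∑ t, E.q t := by
  obtain ⟨x, hx, rfl⟩ := h
  simp only [Finset.sum_apply]
  rw [Finset.sum_comm]
  exact Finset.sum_congr rfl fun t _ => (hx t).2.2

lemma loads_mass {E : ReqSeq n m} {ℓ : Fin n → ℝ} (h : ℓ ∈ loads E) (U : Finset (Fin n)) :
    ∑ t ∈ Finset.univ.filter (fun t => E.N t ⊆ U), E.q t ≤ ∑ i ∈ U, ℓ i := by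
  obtain ⟨x, hx, rfl⟩ := h
  simp only [Finset.sum_apply]
  rw [Finset.sum_comm]
  calc ∑ t ∈ Finset.univ.filter (fun t => E.N t ⊆ U), E.q t
      = ∑ t ∈ Finset.univ.filter (fun t => E.N t ⊆ U), ∑ i ∈ U, x t i := by
        refine Finset.sum_congr rfl fun t ht => ?_
        have hNU : E.N t ⊆ U := (Finset.mem_filter.mp ht).2
        rw [← allocSet_sum_N (hx t)]
        exact Finset.sum_subset hNU (fun i _ hiN => (hx t).2.1 i hiN)
    _ ≤ ∑ t, ∑ i ∈ U, x t i := by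
        refine Finset.sum_le_sum_of_subset_of_nonneg (Finset.filter_subset _ _) ?_
        intro t _ _
        exact Finset.sum_nonneg fun i _ => (hx t).1 i

end Basics

section WaterStep

variable {n : ℕ}

lemma exists_wfLevel {N : Finset (Fin n)} (hN : N.Nonempty) {qt : ℝ} (hq : 0 < qt)
    (p : Fin n → ℝ) : ∃ c, ∑ i ∈ N, max (c - p i) 0 = qt := by
  set c0 := N.inf' hN p with hc0
  have hcont : Continuous fun c : ℝ => ∑ i ∈ N, max (c - p i) 0 := by
    apply continuous_finset_sum
    intro i _
    exact (continuous_id.sub continuous_const).max continuous_const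
  have h0 : ∑ i ∈ N, max (c0 - p i) 0 = 0 := by
    refine Finset.sum_eq_zero fun i hi => ?_
    have : c0 ≤ p i := Finset.inf'_le _ hi
    simp [max_eq_right, sub_nonpos.mpr this]
  have h1 : qt ≤ ∑ i ∈ N, max (c0 + qt - p i) 0 := by
    obtain ⟨i0, hi0, hval⟩ := Finset.exists_mem_eq_inf' hN p
    have : max (c0 + qt - p i0) 0 = qt := by
      rw [← hc0] at hval
      rw [← hval]; simp [le_of_lt hq]
    calc qt = max (c0 + qt - p i0) 0 := this.symm
      _ ≤ ∑ i ∈ N, max (c0 + qt - p i) 0 :=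
        Finset.single_le_sum (f := fun i => max (c0 + qt - p i) 0)
          (fun i _ => le_max_right _ _) hi0
  have := intermediate_value_Icc (by linarith : c0 ≤ c0 + qt) hcont.continuousOn
  have hmem : qt ∈ Set.Icc (∑ i ∈ N, max (c0 - p i) 0) (∑ i ∈ N, max (c0 + qt - p i) 0) := by
    constructor
    · rw [h0]; exact le_of_lt hq
    · exact h1
  obtain ⟨c, _, hc⟩ := this hmem
  exact ⟨c, hc⟩

noncomputable def wfLevel (N : Finset (Fin n)) (qt : ℝ) (p : Fin n → ℝ) : ℝ :=
  if h : N.Nonempty ∧ 0 < qt then (exists_wfLevel h.1 h.2 p).choose else 0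

lemma wfLevel_spec {N : Finset (Fin n)} (hN : N.Nonempty) {qt : ℝ} (hq : 0 < qt)
    (p : Fin n → ℝ) : ∑ i ∈ N, max (wfLevel N qt p - p i) 0 = qt := by
  rw [wfLevel, dif_pos ⟨hN, hq⟩]
  exact (exists_wfLevel hN hq p).choose_spec

noncomputable def wfAlloc (N : Finset (Fin n)) (qt : ℝ) (p : Fin n → ℝ) : Fin n → ℝ :=
  fun i => if i ∈ N then max (wfLevel N qt p - p i) 0 else 0

lemma wfAlloc_mem {N : Finset (Fin n)} (hN : N.Nonempty) {qt : ℝ} (hq : 0 < qt)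
    (p : Fin n → ℝ) : wfAlloc N qt p ∈ allocSet n N qt := by
  refine ⟨fun i => ?_, fun i hi => by simp [wfAlloc, hi], ?_⟩
  · unfold wfAlloc
    split
    · exact le_max_right _ _
    · exact le_refl 0
  · calc ∑ i, wfAlloc N qt p i = ∑ i ∈ N, wfAlloc N qt p i :=
          (Finset.sum_subset (Finset.subset_univ N)
            (fun i _ hi => by simp [wfAlloc, hi])).symm
      _ = ∑ i ∈ N, max (wfLevel N qt p - p i) 0 :=
          Finset.sum_congr rfl fun i hi => by simp [wfAlloc, hi]
      _ = qt := wfLevel_spec hN hq p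

lemma wfAlloc_form {N : Finset (Fin n)} {qt : ℝ} {p : Fin n → ℝ} {i : Fin n} (hi : i ∈ N) :
    wfAlloc N qt p i = max (wfLevel N qt p - p i) 0 := by simp [wfAlloc, hi]

/-- In an allocation with positive total, some coordinate in `N` is positive. -/
lemma alloc_exists_pos {N : Finset (Fin n)} {qt : ℝ} (hq : 0 < qt) {x : Fin n → ℝ}
    (hx : x ∈ allocSet n N qt) : ∃ i ∈ N, 0 < x i := by
  have hsum : ∑ i ∈ N, (0:ℝ) < ∑ i ∈ N, x i := by
    rw [allocSet_sum_N hx]; simpa using hq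
  obtain ⟨i, hi, hlt⟩ := Finset.exists_lt_of_sum_lt hsum
  exact ⟨i, hi, hlt⟩

/-- Any allocation of water-filling form `(c - p)⁺` attains min-level `c`,
and `c` is an upper bound for the min-level of every allocation. -/
lemma form_opt {N : Finset (Fin n)} (hN : N.Nonempty) {qt c : ℝ} (hq : 0 < qt)
    {p x : Fin n → ℝ} (hx : x ∈ allocSet n N qt)
    (hform : ∀ i ∈ N, x i = max (c - p i) 0) :
    (∀ y ∈ allocSet n N qt, N.inf' hN (fun i => y i + p i) ≤ c)
    ∧ N.inf' hN (fun i => x i + p i) = c := by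
  obtain ⟨i0, hi0, hpos⟩ := alloc_exists_pos hq hx
  have hxi0 : x i0 = c - p i0 := by
    have h := hform i0 hi0
    rcases le_or_gt (c - p i0) 0 with hle | hlt
    · rw [h, max_eq_right hle] at hpos; exact absurd hpos (lt_irrefl 0)
    · rw [h, max_eq_left (le_of_lt hlt)]
  constructor
  · intro y hy
    by_contra hcon
    push_neg at hcon
    have hylt : ∀ i ∈ N, x i ≤ y i := by
      intro i hi
      have h1 : c < y i + p i := lt_of_lt_of_le hcon (Finset.inf'_le _ hi)
      rw [hform i hi]
      exact max_le (by linarith) (hy.1 i)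
    have hstrict : x i0 < y i0 := by
      have h1 : c < y i0 + p i0 := lt_of_lt_of_le hcon (Finset.inf'_le _ hi0)
      rw [hxi0]; linarith
    have : ∑ i ∈ N, x i < ∑ i ∈ N, y i :=
      Finset.sum_lt_sum hylt ⟨i0, hi0, hstrict⟩
    rw [allocSet_sum_N hx, allocSet_sum_N hy] at this
    exact lt_irrefl _ this
  · apply le_antisymm
    · calc N.inf' hN (fun i => x i + p i) ≤ x i0 + p i0 := Finset.inf'_le _ hi0
        _ = c := by rw [hxi0]; ring
    · apply Finset.le_inf'
      intro i hi
      rw [hform i hi]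
      rcases le_total (p i) c with h | h
      · rw [max_eq_left (by linarith)]; linarith
      · rw [max_eq_right (by linarith)]; linarith

/-- Any maximizer of the min-level equals the water-filling-form allocation. -/
lemma form_unique {N : Finset (Fin n)} (hN : N.Nonempty) {qt c : ℝ} (hq : 0 < qt)
    {p x : Fin n → ℝ} (hx : x ∈ allocSet n N qt)
    (hform : ∀ i ∈ N, x i = max (c - p i) 0)
    {y : Fin n → ℝ} (hy : y ∈ allocSet n N qt)
    (hmax : ∀ z ∈ allocSet n N qt,
      N.inf' hN (fun i => z i + p i) ≤ N.inf' hN (fun i => y i + p i)) : y = x := by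
  have hopt := form_opt hN hq hx hform
  have hygec : c ≤ N.inf' hN (fun i => y i + p i) := by
    rw [← hopt.2]; exact hmax x hx
  have hpt : ∀ i ∈ N, x i ≤ y i := by
    intro i hi
    have h1 : c ≤ y i + p i := le_trans hygec (Finset.inf'_le _ hi)
    rw [hform i hi]
    exact max_le (by linarith) (hy.1 i)
  have hsums : ∑ i ∈ N, x i = ∑ i ∈ N, y i := by
    rw [allocSet_sum_N hx, allocSet_sum_N hy]
  have heq : ∀ i ∈ N, x i = y i :=
    (Finset.sum_eq_sum_iff_of_le hpt).mp hsums
  funext i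
  by_cases hi : i ∈ N
  · exact (heq i hi).symm
  · rw [hx.2.1 i hi, hy.2.1 i hi]

end WaterStep
section Trajectory

variable {n m : ℕ}

def embLt (t : Fin m) : Fin t.val ↪ Fin m :=
  ⟨fun j => ⟨j.val, lt_trans j.isLt t.isLt⟩, by
    intro a b h
    simpa [Fin.ext_iff] using h⟩

lemma filter_lt_eq (t : Fin m) :
    Finset.univ.filter (fun s => s < t) = Finset.univ.map (embLt t) := by
  ext s
  simp only [Finset.mem_filter, Finset.mem_univ, true_and, Finset.mem_map, embLt,
    Function.Embedding.coeFn_mk]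
  constructor
  · intro hs
    exact ⟨⟨s.val, hs⟩, Fin.ext rfl⟩
  · rintro ⟨j, rfl⟩
    exact j.isLt

lemma sum_filter_lt (t : Fin m) (f : ℕ → ℝ) :
    ∑ s ∈ Finset.univ.filter (fun s => s < t), f s.val = ∑ j ∈ Finset.range t.val, f j := by
  rw [filter_lt_eq, Finset.sum_map]
  exact Fin.sum_univ_eq_sum_range (fun j => f j) t.val

lemma filter_le_eq (t : Fin m) :
    Finset.univ.filter (fun s => s ≤ t) = insert t (Finset.univ.filter (fun s => s < t)) := by
  ext s
  simp only [Finset.mem_filter, Finset.mem_univ, true_and, Finset.mem_insert]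
  constructor
  · intro h
    rcases eq_or_lt_of_le h with h1 | h1
    · exact Or.inl h1
    · exact Or.inr h1
  · rintro (rfl | h)
    · exact le_refl s
    · exact le_of_lt h

lemma sum_filter_le_split (t : Fin m) (f : Fin m → ℝ) :
    ∑ s ∈ Finset.univ.filter (fun s => s ≤ t), f s
      = f t + ∑ s ∈ Finset.univ.filter (fun s => s < t), f s := by
  rw [filter_le_eq, Finset.sum_insert (by simp)]

noncomputable def wfx (E : ReqSeq n m) : Fin m → Fin n → ℝ
  | t => wfAlloc (E.N t) (E.q t)
      (fun i => ∑ s ∈ (Finset.univ.filter (fun s => s < t)).attach, wfx E s.1 i)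
  termination_by t => t.val
  decreasing_by
    exact (Finset.mem_filter.mp s.2).2

lemma wfx_eq (E : ReqSeq n m) (t : Fin m) :
    wfx E t = wfAlloc (E.N t) (E.q t) (prevLoad (wfx E) t) := by
  have harg : (fun i => ∑ s ∈ (Finset.univ.filter (fun s => s < t)).attach, wfx E s.1 i)
      = prevLoad (wfx E) t := by
    funext i
    exact Finset.sum_attach _ (fun s => wfx E s i)
  rw [wfx, harg]

noncomputable def wfLevelAt (E : ReqSeq n m) (t : Fin m) : ℝ :=
  wfLevel (E.N t) (E.q t) (prevLoad (wfx E) t)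

lemma wfx_mem (E : ReqSeq n m) (t : Fin m) : wfx E t ∈ allocSet n (E.N t) (E.q t) := by
  rw [wfx_eq]
  exact wfAlloc_mem (E.N_nonempty t) (E.q_pos t) _

lemma wfx_form (E : ReqSeq n m) (t : Fin m) :
    ∀ i ∈ E.N t, wfx E t i = max (wfLevelAt E t - prevLoad (wfx E) t i) 0 := by
  intro i hi
  rw [wfx_eq]
  exact wfAlloc_form hi

lemma isWFAlloc_wfx (E : ReqSeq n m) : IsWFAlloc E (wfx E) := by
  refine ⟨fun t => wfx_mem E t, fun t y hy => ?_⟩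
  have h := form_opt (E.N_nonempty t) (E.q_pos t) (wfx_mem E t) (wfx_form E t)
  exact le_trans (h.1 y hy) (le_of_eq h.2.symm)

lemma isWFAlloc_unique {E : ReqSeq n m} {x : Fin m → Fin n → ℝ}
    (h : IsWFAlloc E x) : x = wfx E := by
  suffices H : ∀ k, ∀ t : Fin m, t.val = k → x t = wfx E t by
    funext t; exact H t.val t rfl
  intro k
  induction k using Nat.strong_induction_on with
  | _ k ih =>
    intro t ht
    have hprev : prevLoad x t = prevLoad (wfx E) t := by
      funext i
      unfold prevLoad
      refine Finset.sum_congr rfl fun s hs => ?_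
      have hst : s < t := (Finset.mem_filter.mp hs).2
      rw [ih s.val (ht ▸ hst) s rfl]
    refine form_unique (E.N_nonempty t) (E.q_pos t) (wfx_mem E t) (wfx_form E t) (h.1 t) ?_
    intro z hz
    have h2 := h.2 t z hz
    unfold reqMinOn at h2
    rw [hprev] at h2
    exact h2

lemma wfLoad_eq (E : ReqSeq n m) : wfLoad E = ∑ t, wfx E t := by
  have hex : ∃ x, IsWFAlloc E x := ⟨wfx E, isWFAlloc_wfx E⟩
  rw [wfLoad, dif_pos hex, isWFAlloc_unique hex.choose_spec]

lemma wfx_nonneg (E : ReqSeq n m) (t : Fin m) (i : Fin n) : 0 ≤ wfx E t i :=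
  (wfx_mem E t).1 i

lemma wfx_level_of_pos {E : ReqSeq n m} {t : Fin m} {i : Fin n} (h : 0 < wfx E t i) :
    prevLoad (wfx E) t i + wfx E t i = wfLevelAt E t := by
  have hiN : i ∈ E.N t := by
    by_contra hiN
    rw [(wfx_mem E t).2.1 i hiN] at h
    exact absurd h (lt_irrefl 0)
  have hf := wfx_form E t i hiN
  rcases le_or_gt (wfLevelAt E t - prevLoad (wfx E) t i) 0 with hle | hlt
  · rw [hf, max_eq_right hle] at h
    exact absurd h (lt_irrefl 0)
  · rw [hf, max_eq_left hlt.le]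
    ring

lemma wfx_level_le {E : ReqSeq n m} {t : Fin m} {i : Fin n} (hiN : i ∈ E.N t) :
    wfLevelAt E t ≤ prevLoad (wfx E) t i + wfx E t i := by
  rw [wfx_form E t i hiN]
  rcases le_total (wfLevelAt E t - prevLoad (wfx E) t i) 0 with h | h
  · rw [max_eq_right h]; linarith
  · rw [max_eq_left h]; linarith

lemma cum_eq (E : ReqSeq n m) (t : Fin m) (i : Fin n) :
    prevLoad (wfx E) t i + wfx E t i = ∑ s ∈ Finset.univ.filter (fun s => s ≤ t), wfx E s i := by
  rw [sum_filter_le_split]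
  unfold prevLoad
  ring

lemma cum_le_total (E : ReqSeq n m) (t : Fin m) (i : Fin n) :
    prevLoad (wfx E) t i + wfx E t i ≤ (∑ s, wfx E s) i := by
  rw [cum_eq, Finset.sum_apply]
  exact Finset.sum_le_sum_of_subset_of_nonneg (Finset.filter_subset _ _)
    (fun s _ _ => wfx_nonneg E s i)

/-- Every positive coordinate of the water-filling load is a water level. -/
lemma total_eq_level {E : ReqSeq n m} {i : Fin n} (hvi : 0 < (∑ s, wfx E s) i) :
    ∃ t, wfLevelAt E t = (∑ s, wfx E s) i := by
  have hDne : (Finset.univ.filter (fun t => 0 < wfx E t i)).Nonempty := by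
    by_contra hne
    rw [Finset.not_nonempty_iff_eq_empty] at hne
    have hz : (∑ s, wfx E s) i = 0 := by
      rw [Finset.sum_apply]
      refine Finset.sum_eq_zero fun s _ => ?_
      rcases lt_or_eq_of_le (wfx_nonneg E s i) with hlt | heq
      · exfalso
        have hsD : s ∈ Finset.univ.filter (fun t => 0 < wfx E t i) := by simp [hlt]
        rw [hne] at hsD
        exact absurd hsD (Finset.notMem_empty s)
      · exact heq.symm
    rw [hz] at hvi
    exact absurd hvi (lt_irrefl 0)
  have hmem := Finset.max'_mem _ hDne
  have hpos : 0 < wfx E ((Finset.univ.filter (fun t => 0 < wfx E t i)).max' hDne) i :=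
    (Finset.mem_filter.mp hmem).2
  refine ⟨(Finset.univ.filter (fun t => 0 < wfx E t i)).max' hDne, ?_⟩
  rw [← wfx_level_of_pos hpos, cum_eq]
  rw [Finset.sum_apply]
  refine Finset.sum_subset (Finset.filter_subset _ _) fun s _ hs => ?_
  rcases lt_or_eq_of_le (wfx_nonneg E s i) with hlt | heq
  · exfalso
    have hsD : s ∈ Finset.univ.filter (fun t => 0 < wfx E t i) := by simp [hlt]
    have hle : s ≤ (Finset.univ.filter (fun t => 0 < wfx E t i)).max' hDne :=
      Finset.le_max' _ s hsD
    have : s ∈ Finset.univ.filter (fun s => s ≤ (Finset.univ.filter (fun t => 0 < wfx E t i)).max' hDne) := by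
      simp [hle]
    exact hs this
  · exact heq.symm

end Trajectory
section Zeta

variable {n m : ℕ}

/-- Key inequality: any feasible load `w` puts at least `∑_{v>θ} (v i - θ)` mass on the
set where the water-filling load `v` exceeds `θ`. -/
lemma zeta (E : ReqSeq n m) {w : Fin n → ℝ} (hw : w ∈ loads E) {θ : ℝ} (hθ : 0 ≤ θ) :
    ∑ i ∈ Finset.univ.filter (fun i => θ < (∑ s, wfx E s) i), (∑ s, wfx E s) i
      ≤ (∑ i ∈ Finset.univ.filter (fun i => θ < (∑ s, wfx E s) i), w i)
        + (Finset.univ.filter (fun i => θ < (∑ s, wfx E s) i)).card * θ := by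
  set v := ∑ s, wfx E s with hv
  set C := Finset.univ.filter (fun i => θ < v i) with hC
  set T := Finset.univ.filter
    (fun t => θ < wfLevelAt E t ∧ ∃ i ∈ C, 0 < wfx E t i) with hT
  have step1 : ∀ t ∈ T, E.N t ⊆ C := by
    intro t ht j hj
    have hL : θ < wfLevelAt E t := (Finset.mem_filter.mp ht).2.1
    have h1 : wfLevelAt E t ≤ prevLoad (wfx E) t j + wfx E t j := wfx_level_le hj
    have h2 := cum_le_total E t j
    rw [← hv] at h2
    rw [hC]
    simp only [Finset.mem_filter, Finset.mem_univ, true_and]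
    linarith
  have step2 : ∀ i ∈ C, ∑ t ∈ Finset.univ \ T, wfx E t i ≤ θ := by
    intro i hiC
    by_cases hD : (((Finset.univ \ T)).filter (fun t => 0 < wfx E t i)).Nonempty
    · have hmem := Finset.max'_mem _ hD
      set tstar := (((Finset.univ \ T)).filter (fun t => 0 < wfx E t i)).max' hD with htstar
      have hpos : 0 < wfx E tstar i := (Finset.mem_filter.mp hmem).2
      have hnotT : tstar ∉ T := by
        have := (Finset.mem_filter.mp hmem).1
        exact (Finset.mem_sdiff.mp this).2
      have hlev : wfLevelAt E tstar ≤ θ := by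
        by_contra hcon
        push_neg at hcon
        have : tstar ∈ T := by
          rw [hT]
          simp only [Finset.mem_filter, Finset.mem_univ, true_and]
          exact ⟨hcon, i, hiC, hpos⟩
        exact hnotT this
      calc ∑ t ∈ Finset.univ \ T, wfx E t i
          = ∑ t ∈ ((Finset.univ \ T)).filter (fun t => 0 < wfx E t i), wfx E t i := by
            refine (Finset.sum_subset (Finset.filter_subset _ _) fun t ht hts => ?_).symm
            rcases lt_or_eq_of_le (wfx_nonneg E t i) with hlt | heq
            · exact absurd (Finset.mem_filter.mpr ⟨ht, hlt⟩) hts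
            · exact heq.symm
        _ ≤ ∑ t ∈ Finset.univ.filter (fun s => s ≤ tstar), wfx E t i := by
            refine Finset.sum_le_sum_of_subset_of_nonneg ?_ fun t _ _ => wfx_nonneg E t i
            intro t ht
            simp only [Finset.mem_filter, Finset.mem_univ, true_and]
            exact Finset.le_max' _ t ht
        _ = prevLoad (wfx E) tstar i + wfx E tstar i := (cum_eq E tstar i).symm
        _ = wfLevelAt E tstar := wfx_level_of_pos hpos
        _ ≤ θ := hlev
    · rw [Finset.not_nonempty_iff_eq_empty] at hD
      have hz : ∀ t ∈ Finset.univ \ T, wfx E t i = 0 := by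
        intro t ht
        rcases lt_or_eq_of_le (wfx_nonneg E t i) with hlt | heq
        · exfalso
          have : t ∈ ((Finset.univ \ T)).filter (fun t => 0 < wfx E t i) :=
            Finset.mem_filter.mpr ⟨ht, hlt⟩
          rw [hD] at this
          exact absurd this (Finset.notMem_empty t)
        · exact heq.symm
      rw [Finset.sum_eq_zero hz]
      exact hθ
  have hdecomp : ∑ i ∈ C, v i
      = ∑ t ∈ Finset.univ \ T, (∑ i ∈ C, wfx E t i)
        + ∑ t ∈ T, (∑ i ∈ C, wfx E t i) := by
    have h1 : ∑ i ∈ C, v i = ∑ t : Fin m, (∑ i ∈ C, wfx E t i) := by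
      rw [hv]
      simp only [Finset.sum_apply]
      exact Finset.sum_comm
    rw [h1, ← Finset.sum_sdiff (Finset.subset_univ T)]
  have bound1 : ∑ t ∈ T, (∑ i ∈ C, wfx E t i) ≤ ∑ i ∈ C, w i := by
    calc ∑ t ∈ T, (∑ i ∈ C, wfx E t i) ≤ ∑ t ∈ T, E.q t := by
          refine Finset.sum_le_sum fun t _ => ?_
          rw [← (wfx_mem E t).2.2]
          exact Finset.sum_le_sum_of_subset_of_nonneg (Finset.subset_univ C)
            (fun i _ _ => wfx_nonneg E t i)
      _ ≤ ∑ t ∈ Finset.univ.filter (fun t => E.N t ⊆ C), E.q t := by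
          refine Finset.sum_le_sum_of_subset_of_nonneg ?_ fun t _ _ => (E.q_pos t).le
          intro t ht
          simp only [Finset.mem_filter, Finset.mem_univ, true_and]
          exact step1 t ht
      _ ≤ ∑ i ∈ C, w i := loads_mass hw C
  have bound2 : ∑ t ∈ Finset.univ \ T, (∑ i ∈ C, wfx E t i) ≤ C.card * θ := by
    rw [Finset.sum_comm]
    calc ∑ i ∈ C, ∑ t ∈ Finset.univ \ T, wfx E t i ≤ ∑ _i ∈ C, θ :=
          Finset.sum_le_sum step2
      _ = C.card * θ := by rw [Finset.sum_const, nsmul_eq_mul]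
  linarith

end Zeta
section TopSum

variable {n : ℕ}

lemma topSum_spec (ℓ : Fin n → ℝ) {k : ℕ} (hk : k ≤ n) :
    (∃ S : Finset (Fin n), S.card = k ∧ topSum ℓ k = ∑ i ∈ S, ℓ i) ∧
      ∀ S : Finset (Fin n), S.card = k → ∑ i ∈ S, ℓ i ≤ topSum ℓ k := by
  classical
  have hFne : (Finset.powersetCard k (Finset.univ : Finset (Fin n))).Nonempty := by
    obtain ⟨S, hSsub, hScard⟩ := Finset.exists_subset_card_eq (s := (Finset.univ : Finset (Fin n))) (n := k)
      (by simpa using hk)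
    exact ⟨S, Finset.mem_powersetCard.mpr ⟨hSsub, hScard⟩⟩
  have hGne : ((Finset.powersetCard k (Finset.univ : Finset (Fin n))).image
      (fun s => ∑ i ∈ s, ℓ i)).Nonempty := hFne.image _
  have heq : topSum ℓ k = ((Finset.powersetCard k (Finset.univ : Finset (Fin n))).image
      (fun s => ∑ i ∈ s, ℓ i)).max' hGne := by
    rw [topSum]
    have hset : {s : Finset (Fin n) | s.card = k}
        = ↑(Finset.powersetCard k (Finset.univ : Finset (Fin n))) := by
      ext S
      simp [Finset.mem_powersetCard]
    rw [hset, ← Finset.coe_image]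
    exact Finset.Nonempty.csSup_eq_max' hGne
  constructor
  · have hmax := Finset.max'_mem _ hGne
    rw [Finset.mem_image] at hmax
    obtain ⟨S, hS, hval⟩ := hmax
    exact ⟨S, (Finset.mem_powersetCard.mp hS).2, by rw [heq, ← hval]⟩
  · intro S hS
    rw [heq]
    exact Finset.le_max' ((Finset.powersetCard k (Finset.univ : Finset (Fin n))).image
      (fun s => ∑ i ∈ s, ℓ i)) (∑ i ∈ S, ℓ i) (Finset.mem_image_of_mem _
      (Finset.mem_powersetCard.mpr ⟨Finset.subset_univ S, hS⟩))

lemma topSum_zero (ℓ : Fin n → ℝ) : topSum ℓ 0 = 0 := by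
  obtain ⟨S, hcard, heq⟩ := (topSum_spec ℓ (Nat.zero_le n)).1
  rw [heq, Finset.card_eq_zero.mp hcard, Finset.sum_empty]

lemma topSum_sep {ℓ : Fin n → ℝ} {S : Finset (Fin n)} {k : ℕ} (hk : k ≤ n)
    (hcard : S.card = k) (hsep : ∀ i ∈ S, ∀ j, j ∉ S → ℓ j ≤ ℓ i) :
    topSum ℓ k = ∑ i ∈ S, ℓ i := by
  refine le_antisymm ?_ ((topSum_spec ℓ hk).2 S hcard)
  obtain ⟨T, hTcard, hTeq⟩ := (topSum_spec ℓ hk).1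
  rw [hTeq]
  by_cases hST : S \ T = ∅
  · have hsub : S ⊆ T := Finset.sdiff_eq_empty_iff_subset.mp hST
    have : S = T := Finset.eq_of_subset_of_card_le hsub (by rw [hTcard, hcard])
    rw [this]
  · have hSTne : (S \ T).Nonempty := Finset.nonempty_iff_ne_empty.mpr hST
    have hcards : (T \ S).card = (S \ T).card := by
      have h1 := Finset.card_sdiff_add_card_inter T S
      have h2 := Finset.card_sdiff_add_card_inter S T
      rw [Finset.inter_comm] at h2
      omega
    set c := (S \ T).inf' hSTne ℓ with hc
    have hb1 : ∑ j ∈ T \ S, ℓ j ≤ (T \ S).card • c := by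
      refine Finset.sum_le_card_nsmul _ _ _ fun j hj => ?_
      have hjS : j ∉ S := (Finset.mem_sdiff.mp hj).2
      refine Finset.le_inf' _ _ fun i hi => ?_
      exact hsep i (Finset.mem_sdiff.mp hi).1 j hjS
    have hb2 : (S \ T).card • c ≤ ∑ i ∈ S \ T, ℓ i :=
      Finset.card_nsmul_le_sum _ _ _ fun i hi => Finset.inf'_le _ hi
    have e1 : ∑ i ∈ T, ℓ i = ∑ i ∈ T ∩ S, ℓ i + ∑ i ∈ T \ S, ℓ i :=
      (Finset.sum_inter_add_sum_sdiff T S ℓ).symm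
    have e2 : ∑ i ∈ S, ℓ i = ∑ i ∈ T ∩ S, ℓ i + ∑ i ∈ S \ T, ℓ i := by
      rw [Finset.inter_comm]
      exact (Finset.sum_inter_add_sum_sdiff S T ℓ).symm
    rw [hcards] at hb1
    rw [e1, e2]
    linarith
lemma sum_le_topSum {ℓ : Fin n → ℝ} (h0 : ∀ i, 0 ≤ ℓ i) {C : Finset (Fin n)} {k : ℕ}
    (hCk : C.card ≤ k) (hk : k ≤ n) : ∑ i ∈ C, ℓ i ≤ topSum ℓ k := by
  obtain ⟨u, hCu, _, hucard⟩ := Finset.exists_subsuperset_card_eq (n := k - C.card + C.card) (Finset.subset_univ C)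
    (by omega) (by simpa [Nat.sub_add_cancel hCk] using hk)
  have hcard : u.card = k := by rw [hucard]; omega
  calc ∑ i ∈ C, ℓ i ≤ ∑ i ∈ u, ℓ i :=
        Finset.sum_le_sum_of_subset_of_nonneg hCu (fun i _ _ => h0 i)
    _ ≤ topSum ℓ k := (topSum_spec ℓ hk).2 u hcard

lemma topSum_concave_step {ℓ : Fin n → ℝ} {k : ℕ} (h1 : 1 ≤ k) (h2 : k + 1 ≤ n) :
    topSum ℓ (k+1) + topSum ℓ (k-1) ≤ 2 * topSum ℓ k := by
  obtain ⟨S, hScard, hSeq⟩ := (topSum_spec ℓ h2).1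
  obtain ⟨T, hTcard, hTeq⟩ := (topSum_spec ℓ (show k - 1 ≤ n by omega)).1
  have hex : ∃ a ∈ S, a ∉ T := by
    by_contra hcon
    push_neg at hcon
    have : S.card ≤ T.card := Finset.card_le_card hcon
    omega
  obtain ⟨a, haS, haT⟩ := hex
  have hT'card : (insert a T).card = k := by
    rw [Finset.card_insert_of_notMem haT, hTcard]
    omega
  have hS'card : (S.erase a).card = k := by
    rw [Finset.card_erase_of_mem haS, hScard]
    omega
  have e1 : ∑ i ∈ insert a T, ℓ i = ℓ a + ∑ i ∈ T, ℓ i := Finset.sum_insert haT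
  have e2 : ℓ a + ∑ i ∈ S.erase a, ℓ i = ∑ i ∈ S, ℓ i := Finset.add_sum_erase S ℓ haS
  have hb1 := (topSum_spec ℓ (le_trans (Nat.le_succ k) h2)).2 _ hT'card
  have hb2 := (topSum_spec ℓ (le_trans (Nat.le_succ k) h2)).2 _ hS'card
  rw [hSeq, hTeq]
  linarith

lemma topSum_inc_antitone {ℓ : Fin n → ℝ} :
    ∀ q, ∀ p ≤ q, q + 1 ≤ n →
      topSum ℓ (q+1) - topSum ℓ q ≤ topSum ℓ (p+1) - topSum ℓ p := by
  intro q
  induction q with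
  | zero =>
    intro p hp _
    interval_cases p
    exact le_refl _
  | succ q ih =>
    intro p hp hq
    rcases Nat.lt_or_ge p (q+1) with h | h
    · have step := topSum_concave_step (ℓ := ℓ) (k := q+1) (by omega) (by omega)
      have hq1 : q + 1 - 1 = q := by omega
      rw [hq1] at step
      have := ih p (by omega) (by omega)
      linarith
    · have : p = q + 1 := by omega
      rw [this]

lemma topSum_interp {ℓ : Fin n → ℝ} {a k b : ℕ} (hak : a ≤ k) (hkb : k ≤ b) (hbn : b ≤ n) :
    ((b:ℝ) - k) * topSum ℓ a + ((k:ℝ) - a) * topSum ℓ b ≤ ((b:ℝ) - a) * topSum ℓ k := by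
  rcases eq_or_lt_of_le hak with rfl | hak'
  · apply le_of_eq; ring
  rcases eq_or_lt_of_le hkb with rfl | hkb'
  · apply le_of_eq; ring
  set X := topSum ℓ (k+1) - topSum ℓ k with hX
  have hb1 : ((k:ℝ) - a) * X ≤ topSum ℓ k - topSum ℓ a := by
    have htel : ∑ j ∈ Finset.Ico a k, (topSum ℓ (j+1) - topSum ℓ j)
        = topSum ℓ k - topSum ℓ a := by
      rw [Finset.sum_Ico_eq_sub _ hak, Finset.sum_range_sub (fun j => topSum ℓ j),
        Finset.sum_range_sub (fun j => topSum ℓ j)]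
      ring
    have hbound : (Finset.Ico a k).card • X ≤ ∑ j ∈ Finset.Ico a k, (topSum ℓ (j+1) - topSum ℓ j) := by
      refine Finset.card_nsmul_le_sum _ _ _ fun j hj => ?_
      have hj' := Finset.mem_Ico.mp hj
      exact topSum_inc_antitone k j (by omega) (by omega)
    rw [htel] at hbound
    have hcard : ((Finset.Ico a k).card : ℝ) = (k : ℝ) - a := by
      rw [Nat.card_Ico]
      push_cast [Nat.cast_sub hak]
      ring
    rw [nsmul_eq_mul, hcard] at hbound
    exact hbound
  have hb2 : topSum ℓ b - topSum ℓ k ≤ ((b:ℝ) - k) * X := by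
    have htel : ∑ j ∈ Finset.Ico k b, (topSum ℓ (j+1) - topSum ℓ j)
        = topSum ℓ b - topSum ℓ k := by
      rw [Finset.sum_Ico_eq_sub _ hkb, Finset.sum_range_sub (fun j => topSum ℓ j),
        Finset.sum_range_sub (fun j => topSum ℓ j)]
      ring
    have hbound : ∑ j ∈ Finset.Ico k b, (topSum ℓ (j+1) - topSum ℓ j)
        ≤ (Finset.Ico k b).card • X := by
      refine Finset.sum_le_card_nsmul _ _ _ fun j hj => ?_
      have hj' := Finset.mem_Ico.mp hj
      exact topSum_inc_antitone j k hj'.1 (by omega)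
    rw [htel] at hbound
    have hcard : ((Finset.Ico k b).card : ℝ) = (b : ℝ) - k := by
      rw [Nat.card_Ico]
      push_cast [Nat.cast_sub hkb]
      ring
    rw [nsmul_eq_mul, hcard] at hbound
    exact hbound
  have hbk : (0:ℝ) ≤ (b:ℝ) - k := by
    have : (k:ℝ) ≤ b := by exact_mod_cast hkb
    linarith
  have hka : (0:ℝ) ≤ (k:ℝ) - a := by
    have : (a:ℝ) ≤ k := by exact_mod_cast hak
    linarith
  have h3 := mul_le_mul_of_nonneg_left hb1 hbk
  have h4 := mul_le_mul_of_nonneg_left hb2 hka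
  nlinarith [h3, h4]

end TopSum
section OptExists

variable {n m : ℕ}

lemma loads_nonempty (E : ReqSeq n m) : (loads E).Nonempty := by
  classical
  set x : Fin m → Fin n → ℝ :=
    fun t i => if i = (E.N_nonempty t).choose then E.q t else 0 with hx
  refine ⟨∑ t, x t, x, fun t => ⟨?_, ?_, ?_⟩, rfl⟩
  · intro i
    have hxi : x t i = if i = (E.N_nonempty t).choose then E.q t else 0 := rfl
    rw [hxi]
    split
    · exact (E.q_pos t).le
    · exact le_refl 0
  · intro i hi
    have hxi : x t i = if i = (E.N_nonempty t).choose then E.q t else 0 := rfl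
    rw [hxi, if_neg]
    intro h
    have hch := (E.N_nonempty t).choose_spec
    rw [h] at hi
    exact hi hch
  · have hxi : ∀ i, x t i = if i = (E.N_nonempty t).choose then E.q t else 0 :=
      fun i => rfl
    rw [Finset.sum_congr rfl fun i _ => hxi i]
    simp [Finset.sum_ite_eq']

lemma allocSet_isClosed (N : Finset (Fin n)) (qt : ℝ) : IsClosed (allocSet n N qt) := by
  have hrw : allocSet n N qt =
      (⋂ i, {y : Fin n → ℝ | 0 ≤ y i}) ∩
        ((⋂ i, ⋂ _h : i ∉ N, {y : Fin n → ℝ | y i = 0}) ∩ {y | ∑ i, y i = qt}) := by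
    ext y
    simp only [allocSet, Set.mem_setOf_eq, Set.mem_inter_iff, Set.mem_iInter]
    try tauto
  rw [hrw]
  refine IsClosed.inter (isClosed_iInter fun i => isClosed_le continuous_const (continuous_apply i))
    (IsClosed.inter (isClosed_iInter fun i => isClosed_iInter fun _ =>
      isClosed_eq (continuous_apply i) continuous_const)
      (isClosed_eq (by exact continuous_finset_sum _ fun i _ => continuous_apply i)
        continuous_const))

lemma loads_isCompact (E : ReqSeq n m) : IsCompact (loads E) := by
  have hset : loads E = (fun x : Fin m → Fin n → ℝ => ∑ t, x t) '' {x | Feasible E x} := by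
    ext ℓ
    constructor
    · rintro ⟨x, hx, rfl⟩
      exact ⟨x, hx, rfl⟩
    · rintro ⟨x, hx, rfl⟩
      exact ⟨x, hx, rfl⟩
  rw [hset]
  have hsub : {x : Fin m → Fin n → ℝ | Feasible E x}
      ⊆ Set.Icc (fun _ _ => (0:ℝ)) (fun t _ => E.q t) := by
    intro x hx
    constructor
    · intro t i
      exact (hx t).1 i
    · intro t i
      calc x t i ≤ ∑ j, x t j :=
            Finset.single_le_sum (fun j _ => (hx t).1 j) (Finset.mem_univ i)
        _ = E.q t := (hx t).2.2
  have hclosed : IsClosed {x : Fin m → Fin n → ℝ | Feasible E x} := by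
    have : {x : Fin m → Fin n → ℝ | Feasible E x}
        = ⋂ t, (fun x : Fin m → Fin n → ℝ => x t) ⁻¹' allocSet n (E.N t) (E.q t) := by
      ext x
      simp only [Set.mem_setOf_eq, Set.mem_iInter, Set.mem_preimage]
      rfl
    rw [this]
    exact isClosed_iInter fun t => (allocSet_isClosed _ _).preimage (continuous_apply t)
  have hicc : IsCompact (Set.Icc (fun _ _ => (0:ℝ)) (fun t _ => E.q t) :
      Set (Fin m → Fin n → ℝ)) := isCompact_Icc
  have hcomp := IsCompact.of_isClosed_subset hicc hclosed hsub
  exact hcomp.image (continuous_finset_sum _ fun t _ => continuous_apply t)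

theorem exists_isOpt (E : ReqSeq n m) : ∃ ℓ, IsOpt E ℓ := by
  classical
  obtain ⟨ℓs, hmem, hmin⟩ := (loads_isCompact E).exists_isMinOn (loads_nonempty E)
    ((continuous_finset_sum Finset.univ fun i _ =>
      ((continuous_apply i).mul (continuous_apply i))).continuousOn
      (f := fun ℓ : Fin n → ℝ => ∑ i, ℓ i * ℓ i))
  obtain ⟨xs, hxs, hℓs⟩ := hmem
  have hℓsmem : ℓs ∈ loads E := ⟨xs, hxs, hℓs⟩
  have hℓs0 : ∀ i, 0 ≤ ℓs i := loads_nonneg hℓsmem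
  -- exchange/edge property of the min-norm point
  have edge : ∀ (t : Fin m) (i j : Fin n), 0 < xs t i → j ∈ E.N t → ℓs i ≤ ℓs j := by
    intro t i j hpos hjN
    by_cases hij : i = j
    · rw [hij]
    have hiN : i ∈ E.N t := by
      by_contra hiN
      rw [(hxs t).2.1 i hiN] at hpos
      exact absurd hpos (lt_irrefl 0)
    have key : ∀ δ : ℝ, 0 < δ → δ ≤ xs t i → ℓs i - ℓs j ≤ δ := by
      intro δ hδ hδle
      set g : Fin n → ℝ :=
        fun a => xs t a + (if a = j then δ else 0) - (if a = i then δ else 0) with hg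
      have hga : ∀ a, g a = xs t a + (if a = j then δ else 0) - (if a = i then δ else 0) :=
        fun a => rfl
      have hx'feas : Feasible E (Function.update xs t g) := by
        intro s
        by_cases hst : s = t
        · rw [hst, Function.update_self]
          refine ⟨?_, ?_, ?_⟩
          · intro a
            rw [hga a]
            have h1 : (0:ℝ) ≤ if a = j then δ else 0 := by
              split
              · exact hδ.le
              · exact le_refl 0
            have h2 : (if a = i then δ else 0) ≤ xs t a := by
              split
              · next h => rw [h]; exact hδle
              · exact (hxs t).1 a
            linarith
          · intro a haN
            have haj : a ≠ j := by
              intro h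
              rw [h] at haN
              exact haN hjN
            have hai : a ≠ i := by
              intro h
              rw [h] at haN
              exact haN hiN
            rw [hga a, if_neg haj, if_neg hai, (hxs t).2.1 a haN]
            ring
          · rw [Finset.sum_congr rfl fun a _ => hga a]
            rw [Finset.sum_sub_distrib, Finset.sum_add_distrib]
            simp [Finset.sum_ite_eq', (hxs t).2.2]
        · rw [Function.update_of_ne hst]
          exact hxs s
      have hsum' : (∑ s, Function.update xs t g s)
          = fun a => ℓs a + (if a = j then δ else 0) - (if a = i then δ else 0) := by
        funext a
        rw [Finset.sum_apply]
        have hpt : ∀ s, Function.update xs t g s a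
            = Function.update (fun s => xs s a) t (g a) s := by
          intro s
          by_cases hst : s = t
          · subst hst
            rw [Function.update_self, Function.update_self]
          · rw [Function.update_of_ne hst, Function.update_of_ne hst]
        rw [Finset.sum_congr rfl (fun s _ => hpt s)]
        rw [Finset.sum_update_of_mem (Finset.mem_univ t)]
        have htot : ℓs a = xs t a + ∑ s ∈ Finset.univ \ {t}, xs s a := by
          rw [hℓs, Finset.sum_apply]
          rw [← Finset.sum_update_of_mem (Finset.mem_univ t) (fun s => xs s a) (xs t a)]
          refine Finset.sum_congr rfl fun s _ => ?_
          by_cases hst : s = t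
          · subst hst; rw [Function.update_self]
          · rw [Function.update_of_ne hst]
        rw [hga a, htot]
        ring
      have hmem' : (∑ s, Function.update xs t g s) ∈ loads E :=
        ⟨Function.update xs t g, hx'feas, rfl⟩
      have hle := isMinOn_iff.mp hmin _ hmem'
      rw [hsum'] at hle
      have hptwise : ∀ a : Fin n,
          (ℓs a + (if a = j then δ else 0) - (if a = i then δ else 0))
            * (ℓs a + (if a = j then δ else 0) - (if a = i then δ else 0))
          = ℓs a * ℓs a + ((if a = j then 2*δ*ℓs j + δ^2 else 0)
              + (if a = i then -(2*δ*ℓs i) + δ^2 else 0)) := by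
        intro a
        by_cases haj : a = j
        · subst haj
          rw [if_pos rfl, if_pos rfl, if_neg (fun h => hij h.symm),
            if_neg (fun h => hij h.symm)]
          ring
        · rw [if_neg haj, if_neg haj]
          by_cases hai : a = i
          · subst hai
            rw [if_pos rfl, if_pos rfl]
            ring
          · rw [if_neg hai, if_neg hai]
            ring
      have hexp : ∑ a, (ℓs a + (if a = j then δ else 0) - (if a = i then δ else 0))
            * (ℓs a + (if a = j then δ else 0) - (if a = i then δ else 0))
          = (∑ a, ℓs a * ℓs a) + (2*δ*ℓs j + δ^2) + (-(2*δ*ℓs i) + δ^2) := by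
        rw [Finset.sum_congr rfl (fun a _ => hptwise a)]
        rw [Finset.sum_add_distrib, Finset.sum_add_distrib]
        simp [Finset.sum_ite_eq']
        ring
      rw [hexp] at hle
      by_contra hc
      push_neg at hc
      have hprod : 0 < δ * (ℓs i - ℓs j - δ) :=
        mul_pos hδ (by linarith)
      nlinarith [hle, hprod]
    by_contra hcon
    push_neg at hcon
    have hδ0 : 0 < min (xs t i) ((ℓs i - ℓs j)/2) :=
      lt_min hpos (by linarith)
    have hk := key _ hδ0 (min_le_left _ _)
    have := min_le_right (xs t i) ((ℓs i - ℓs j)/2)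
    linarith
  -- up-set mass bound
  have upbound : ∀ (U : Finset (Fin n)), (∀ i j, i ∈ U → ℓs i ≤ ℓs j → j ∈ U) →
      ∀ ℓ ∈ loads E, ∑ i ∈ U, ℓs i ≤ ∑ i ∈ U, ℓ i := by
    intro U hU ℓ hℓ
    have hdecomp : ∑ i ∈ U, ℓs i = ∑ t : Fin m, ∑ i ∈ U, xs t i := by
      rw [hℓs]
      simp only [Finset.sum_apply]
      exact Finset.sum_comm
    have hsplit : ∀ t : Fin m, ¬ (E.N t ⊆ U) → ∑ i ∈ U, xs t i = 0 := by
      intro t hnsub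
      refine Finset.sum_eq_zero fun i hiU => ?_
      rcases lt_or_eq_of_le ((hxs t).1 i) with hpos | heq
      · exact absurd (fun j hjN => hU i j hiU (edge t i j hpos hjN)) hnsub
      · exact heq.symm
    calc ∑ i ∈ U, ℓs i
        = ∑ t ∈ Finset.univ.filter (fun t => E.N t ⊆ U), ∑ i ∈ U, xs t i := by
          rw [hdecomp]
          refine (Finset.sum_subset (Finset.filter_subset _ _) fun t _ ht => ?_).symm
          refine hsplit t ?_
          intro hsub
          exact ht (Finset.mem_filter.mpr ⟨Finset.mem_univ t, hsub⟩)
      _ ≤ ∑ t ∈ Finset.univ.filter (fun t => E.N t ⊆ U), E.q t := by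
          refine Finset.sum_le_sum fun t _ => ?_
          rw [← (hxs t).2.2]
          exact Finset.sum_le_sum_of_subset_of_nonneg (Finset.subset_univ U)
            (fun i _ _ => (hxs t).1 i)
      _ ≤ ∑ i ∈ U, ℓ i := loads_mass hℓ U
  refine ⟨ℓs, hℓsmem, fun ℓ hℓ => ⟨by rw [loads_total hℓ, loads_total hℓsmem], ?_⟩⟩
  intro k hk
  have hℓ0 : ∀ i, 0 ≤ ℓ i := loads_nonneg hℓ
  rcases Nat.eq_zero_or_pos k with rfl | hkpos
  · rw [topSum_zero, topSum_zero]
  -- θ selection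
  have hTvne : (insert (0:ℝ) (Finset.image ℓs Finset.univ)).Nonempty :=
    ⟨0, Finset.mem_insert_self _ _⟩
  set Tv := insert (0:ℝ) (Finset.image ℓs Finset.univ) with hTv
  set Tgood := Tv.filter
    (fun c => 0 ≤ c ∧ (Finset.univ.filter (fun i => c < ℓs i)).card ≤ k) with hTg
  have hMmem : Tv.max' hTvne ∈ Tgood := by
    refine Finset.mem_filter.mpr ⟨Finset.max'_mem _ _,
      Finset.le_max' _ 0 (Finset.mem_insert_self _ _), ?_⟩
    have hempty : Finset.univ.filter (fun i => Tv.max' hTvne < ℓs i) = ∅ := by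
      refine Finset.filter_eq_empty_iff.mpr fun i _ => ?_
      push_neg
      exact Finset.le_max' _ _ (Finset.mem_insert_of_mem (Finset.mem_image_of_mem ℓs
        (Finset.mem_univ i)))
    rw [hempty]
    simp [Nat.zero_le]
  have hTgne : Tgood.Nonempty := ⟨_, hMmem⟩
  set θ := Tgood.min' hTgne with hθdef
  have hθmem := Finset.mem_filter.mp (Finset.min'_mem Tgood hTgne)
  have hθTv : θ ∈ Tv := hθmem.1
  have hθ0 : 0 ≤ θ := hθmem.2.1
  set A := Finset.univ.filter (fun i => θ < ℓs i) with hA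
  set B := Finset.univ.filter (fun i => θ ≤ ℓs i) with hB
  have hak : A.card ≤ k := hθmem.2.2
  have hAB : A ⊆ B := by
    intro i hi
    rw [hA, Finset.mem_filter] at hi
    rw [hB, Finset.mem_filter]
    exact ⟨hi.1, hi.2.le⟩
  have hsepA : ∀ i ∈ A, ∀ j, j ∉ A → ℓs j ≤ ℓs i := by
    intro i hi j hj
    rw [hA, Finset.mem_filter] at hi hj
    have : ¬ θ < ℓs j := fun h => hj ⟨Finset.mem_univ j, h⟩
    push_neg at this
    linarith [hi.2]
  have hupA : ∀ i j, i ∈ A → ℓs i ≤ ℓs j → j ∈ A := by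
    intro i j hi hij
    rw [hA, Finset.mem_filter] at hi ⊢
    exact ⟨Finset.mem_univ j, lt_of_lt_of_le hi.2 hij⟩
  have hupB : ∀ i j, i ∈ B → ℓs i ≤ ℓs j → j ∈ B := by
    intro i j hi hij
    rw [hB, Finset.mem_filter] at hi ⊢
    exact ⟨Finset.mem_univ j, le_trans hi.2 hij⟩
  have boundA : ∑ i ∈ A, ℓs i ≤ ∑ i ∈ A, ℓ i := upbound A hupA ℓ hℓ
  have hAn : A.card ≤ n := le_trans hak hk
  rcases eq_or_lt_of_le hak with heq | hlt
  · -- |A| = k : direct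
    have h1 : topSum ℓs k = ∑ i ∈ A, ℓs i := topSum_sep hk heq hsepA
    have h2 : ∑ i ∈ A, ℓ i ≤ topSum ℓ k := (topSum_spec ℓ hk).2 A heq
    linarith
  · -- |A| < k ≤ |B|
    have hkB : k ≤ B.card := by
      rcases eq_or_lt_of_le hθ0 with hzero | hθpos
      · have hBuniv : B = Finset.univ := by
          rw [hB]
          refine Finset.filter_true_of_mem fun i _ => ?_
          rw [← hzero]
          exact hℓs0 i
        rw [hBuniv, Finset.card_univ, Fintype.card_fin]
        exact hk
      · set T0 := Tv.filter (fun c => 0 ≤ c ∧ c < θ) with hT0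
        have hT0ne : T0.Nonempty :=
          ⟨0, Finset.mem_filter.mpr ⟨Finset.mem_insert_self _ _, le_refl 0, hθpos⟩⟩
        have hc'mem := Finset.mem_filter.mp (Finset.max'_mem T0 hT0ne)
        have hc'lt : T0.max' hT0ne < θ := hc'mem.2.2
        have hc'notgood : T0.max' hT0ne ∉ Tgood := by
          intro h
          have := Finset.min'_le Tgood _ h
          rw [← hθdef] at this
          linarith
        have hcard : k < (Finset.univ.filter (fun i => T0.max' hT0ne < ℓs i)).card := by
          by_contra hcc
          push_neg at hcc
          exact hc'notgood (Finset.mem_filter.mpr ⟨hc'mem.1, hc'mem.2.1, hcc⟩)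
        have hsub : Finset.univ.filter (fun i => T0.max' hT0ne < ℓs i) ⊆ B := by
          intro i hi
          rw [Finset.mem_filter] at hi
          rw [hB, Finset.mem_filter]
          refine ⟨Finset.mem_univ i, ?_⟩
          by_contra hcc
          push_neg at hcc
          have hiT0 : ℓs i ∈ T0 := by
            rw [hT0]
            refine Finset.mem_filter.mpr ⟨?_, hℓs0 i, hcc⟩
            exact Finset.mem_insert_of_mem (Finset.mem_image_of_mem ℓs (Finset.mem_univ i))
          have := Finset.le_max' T0 _ hiT0
          linarith [hi.2]
        have := Finset.card_le_card hsub
        omega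
    have hbn : B.card ≤ n := by
      have := Finset.card_le_univ B
      simpa using this
    have hBdiff : ∀ i ∈ B, i ∉ A → ℓs i = θ := by
      intro i hiB hiA
      rw [hB, Finset.mem_filter] at hiB
      rw [hA, Finset.mem_filter] at hiA
      have : ¬ θ < ℓs i := fun h => hiA ⟨Finset.mem_univ i, h⟩
      push_neg at this
      linarith [hiB.2]
    obtain ⟨S, hAS, hSB, hScard⟩ := Finset.exists_subsuperset_card_eq (n := k - A.card + A.card) hAB
      (by omega) (by omega)
    have hScard' : S.card = k := by rw [hScard]; omega
    have hsepS : ∀ i ∈ S, ∀ j, j ∉ S → ℓs j ≤ ℓs i := by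
      intro i hiS j hjS
      have hiB : θ ≤ ℓs i := by
        have := hSB hiS
        rw [hB, Finset.mem_filter] at this
        exact this.2
      have hjA : j ∉ A := fun h => hjS (hAS h)
      rw [hA, Finset.mem_filter] at hjA
      have : ¬ θ < ℓs j := fun h => hjA ⟨Finset.mem_univ j, h⟩
      push_neg at this
      linarith
    have hsepB : ∀ i ∈ B, ∀ j, j ∉ B → ℓs j ≤ ℓs i := by
      intro i hiB j hjB
      rw [hB, Finset.mem_filter] at hiB hjB
      have : ¬ θ ≤ ℓs j := fun h => hjB ⟨Finset.mem_univ j, h⟩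
      push_neg at this
      linarith [hiB.2]
    have hsdiffS : ∑ i ∈ S \ A, ℓs i = ((k:ℝ) - A.card) * θ := by
      have hval : ∀ i ∈ S \ A, ℓs i = θ := fun i hi =>
        hBdiff i (hSB (Finset.mem_sdiff.mp hi).1) (Finset.mem_sdiff.mp hi).2
      rw [Finset.sum_congr rfl hval, Finset.sum_const, nsmul_eq_mul,
        Finset.card_sdiff_of_subset hAS, hScard']
      rw [Nat.cast_sub hlt.le]
    have hsdiffB : ∑ i ∈ B \ A, ℓs i = ((B.card:ℝ) - A.card) * θ := by
      have hval : ∀ i ∈ B \ A, ℓs i = θ := fun i hi =>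
        hBdiff i (Finset.mem_sdiff.mp hi).1 (Finset.mem_sdiff.mp hi).2
      rw [Finset.sum_congr rfl hval, Finset.sum_const, nsmul_eq_mul,
        Finset.card_sdiff_of_subset hAB]
      rw [Nat.cast_sub (Finset.card_le_card hAB)]
    have htopk : topSum ℓs k = ∑ i ∈ A, ℓs i + ((k:ℝ) - A.card) * θ := by
      rw [topSum_sep hk hScard' hsepS, ← Finset.sum_sdiff hAS, hsdiffS]
      ring
    have htopa : topSum ℓs A.card = ∑ i ∈ A, ℓs i := topSum_sep hAn rfl hsepA
    have htopb : topSum ℓs B.card = ∑ i ∈ A, ℓs i + ((B.card:ℝ) - A.card) * θ := by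
      rw [topSum_sep hbn rfl hsepB, ← Finset.sum_sdiff hAB, hsdiffB]
      ring
    have h5 : topSum ℓs A.card ≤ topSum ℓ A.card := by
      rw [htopa]
      exact le_trans boundA ((topSum_spec ℓ hAn).2 A rfl)
    have h6 : topSum ℓs B.card ≤ topSum ℓ B.card := by
      have boundB : ∑ i ∈ B, ℓs i ≤ ∑ i ∈ B, ℓ i := upbound B hupB ℓ hℓ
      have : topSum ℓs B.card = ∑ i ∈ B, ℓs i := topSum_sep hbn rfl hsepB
      rw [this]
      exact le_trans boundB ((topSum_spec ℓ hbn).2 B rfl)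
    have h7 := topSum_interp (ℓ := ℓ) hlt.le hkB hbn
    have key : ((B.card:ℝ) - k) * topSum ℓs A.card + ((k:ℝ) - A.card) * topSum ℓs B.card
        = ((B.card:ℝ) - A.card) * topSum ℓs k := by
      rw [htopa, htopb, htopk]
      ring
    have hbk : (0:ℝ) ≤ (B.card:ℝ) - k := by
      have : (k:ℝ) ≤ B.card := by exact_mod_cast hkB
      linarith
    have hka : (0:ℝ) ≤ (k:ℝ) - A.card := by
      have : (A.card:ℝ) ≤ k := by exact_mod_cast hlt.le
      linarith
    have m1 := mul_le_mul_of_nonneg_left h5 hbk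
    have m2 := mul_le_mul_of_nonneg_left h6 hka
    have hgap : (0:ℝ) < (B.card:ℝ) - A.card := by
      have h1 : (A.card:ℝ) < k := by exact_mod_cast hlt
      have h2 : (k:ℝ) ≤ B.card := by exact_mod_cast hkB
      linarith
    have hfin : ((B.card:ℝ) - A.card) * topSum ℓs k
        ≤ ((B.card:ℝ) - A.card) * topSum ℓ k := by
      rw [← key]
      linarith
    exact (mul_le_mul_iff_of_pos_left hgap).mp hfin

end OptExists
section Levels

variable {n m : ℕ}

noncomputable def wfv (E : ReqSeq n m) : Fin n → ℝ := ∑ t, wfx E t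

lemma wfv_nonneg (E : ReqSeq n m) (i : Fin n) : 0 ≤ wfv E i := by
  rw [wfv, Finset.sum_apply]
  exact Finset.sum_nonneg fun t _ => wfx_nonneg E t i

lemma wfv_total (E : ReqSeq n m) : ∑ i, wfv E i = ∑ t, E.q t :=
  loads_total ⟨wfx E, fun t => wfx_mem E t, rfl⟩

noncomputable def Vals (E : ReqSeq n m) : Finset ℝ :=
  (Finset.image (wfv E) Finset.univ).filter (fun c => 0 < c)

lemma Vals_nonempty (E : ReqSeq n m) (hm : 0 < m) : (Vals E).Nonempty := by
  have hq : 0 < ∑ t, E.q t := by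
    refine Finset.sum_pos (fun t _ => E.q_pos t) ?_
    exact ⟨⟨0, hm⟩, Finset.mem_univ _⟩
  have : ∃ i, 0 < wfv E i := by
    by_contra hcon
    push_neg at hcon
    have : ∑ i, wfv E i ≤ 0 := Finset.sum_nonpos fun i _ => hcon i
    rw [wfv_total] at this
    linarith
  obtain ⟨i, hi⟩ := this
  exact ⟨wfv E i, Finset.mem_filter.mpr
    ⟨Finset.mem_image_of_mem _ (Finset.mem_univ i), hi⟩⟩

lemma Vals_card_le (E : ReqSeq n m) (hm : 0 < m) : (Vals E).card ≤ m := by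
  classical
  set f : ℝ → Fin m := fun c =>
    if h : ∃ t, wfLevelAt E t = c then h.choose else ⟨0, hm⟩ with hf
  have hlev : ∀ c ∈ Vals E, wfLevelAt E (f c) = c := by
    intro c hc
    obtain ⟨him, hpos⟩ := Finset.mem_filter.mp hc
    obtain ⟨i, _, hvi⟩ := Finset.mem_image.mp him
    have hvi' : 0 < (∑ s, wfx E s) i := by
      rw [show (∑ s, wfx E s) i = wfv E i from rfl, hvi]
      exact hpos
    obtain ⟨t, ht⟩ := total_eq_level hvi'
    have hex : ∃ t, wfLevelAt E t = c := ⟨t, by rw [ht]; exact hvi⟩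
    have hfc : f c = hex.choose := by rw [hf]; exact dif_pos hex
    rw [hfc]
    exact hex.choose_spec
  have := Finset.card_le_card_of_injOn f (fun c _ => Finset.mem_univ (f c))
    (fun c hc c' hc' heq => by rw [← hlev c hc, ← hlev c' hc', heq])
  simpa using this

/-- Ascending enumeration of the positive values of the water-filling load. -/
noncomputable def eVal (E : ReqSeq n m) (j : ℕ) : ℝ :=
  if h : j < (Vals E).card then ((Vals E).orderIsoOfFin rfl ⟨j, h⟩ : ℝ) else 0

lemma eVal_mem (E : ReqSeq n m) {j : ℕ} (hj : j < (Vals E).card) : eVal E j ∈ Vals E := by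
  rw [eVal, dif_pos hj]
  exact (((Vals E).orderIsoOfFin rfl) ⟨j, hj⟩).2

lemma eVal_pos (E : ReqSeq n m) {j : ℕ} (hj : j < (Vals E).card) : 0 < eVal E j :=
  (Finset.mem_filter.mp (eVal_mem E hj)).2

lemma eVal_lt (E : ReqSeq n m) {j j' : ℕ} (hjj : j < j') (hj' : j' < (Vals E).card) :
    eVal E j < eVal E j' := by
  have hj : j < (Vals E).card := lt_trans hjj hj'
  rw [eVal, dif_pos hj, eVal, dif_pos hj']
  exact ((Vals E).orderIsoOfFin rfl).strictMono (show (⟨j, hj⟩ : Fin _) < ⟨j', hj'⟩ from hjj)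

lemma eVal_le (E : ReqSeq n m) {j j' : ℕ} (hjj : j ≤ j') (hj' : j' < (Vals E).card) :
    eVal E j ≤ eVal E j' := by
  rcases eq_or_lt_of_le hjj with rfl | h
  · exact le_refl _
  · exact (eVal_lt E h hj').le

lemma eVal_surj (E : ReqSeq n m) {c : ℝ} (hc : c ∈ Vals E) :
    ∃ j, ∃ h : j < (Vals E).card, eVal E j = c := by
  obtain ⟨j, hj⟩ := ((Vals E).orderIsoOfFin rfl).surjective ⟨c, hc⟩
  refine ⟨j.val, j.isLt, ?_⟩
  rw [eVal, dif_pos j.isLt]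
  simp only [Fin.eta]
  rw [hj]

lemma eVal_gap (E : ReqSeq n m) {j : ℕ} (hj1 : j + 1 < (Vals E).card) {c : ℝ}
    (hc : c ∈ Vals E) : c ≤ eVal E j ∨ eVal E (j+1) ≤ c := by
  obtain ⟨j', hj', rfl⟩ := eVal_surj E hc
  rcases le_or_gt j' j with h | h
  · exact Or.inl (eVal_le E h (lt_trans (Nat.lt_succ_self j) hj1))
  · exact Or.inr (eVal_le E h hj')

/-- The cumulative level schedule for the nested chain instance. -/
noncomputable def Lv (E : ReqSeq n m) : ℕ → ℝ := fun t =>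
  if t ≤ m - (Vals E).card then
    (t : ℝ) * eVal E 0 / (((m - (Vals E).card : ℕ) : ℝ) + 1)
  else eVal E (t - (m - (Vals E).card) - 1)

lemma Lv_zero (E : ReqSeq n m) : Lv E 0 = 0 := by
  rw [Lv, if_pos (Nat.zero_le _)]
  simp

lemma Lv_strict (E : ReqSeq n m) (hm : 0 < m) (hr : 0 < (Vals E).card)
    (hrm : (Vals E).card ≤ m) :
    ∀ t, t < m → Lv E t < Lv E (t+1) := by
  intro t ht
  set r := (Vals E).card with hrdef
  set K := m - r with hK
  have he0 : 0 < eVal E 0 := eVal_pos E hr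
  have hden : (0:ℝ) < (K : ℕ) + 1 := by positivity
  rcases le_or_gt (t+1) K with h1 | h1
  · rw [Lv, if_pos (by omega), Lv, if_pos h1]
    rw [div_lt_div_iff₀ hden hden]
    have h3 : (t : ℝ) < (t+1 : ℕ) := by exact_mod_cast Nat.lt_succ_self t
    nlinarith [mul_lt_mul_of_pos_right h3 (mul_pos he0 hden)]
  · rcases le_or_gt t K with h2 | h2
    · have htK : t = K := by omega
      rw [Lv, if_pos h2, Lv, if_neg (by omega)]
      have hidx : t + 1 - K - 1 = 0 := by omega
      rw [hidx, htK]
      rw [div_lt_iff₀ hden]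
      have hKlt : (K : ℝ) < (K : ℕ) + 1 := by
        push_cast
        linarith
      nlinarith
    · rw [Lv, if_neg (by omega), Lv, if_neg (by omega)]
      have hidx : t + 1 - K - 1 = (t - K - 1) + 1 := by omega
      rw [hidx]
      refine eVal_lt E (Nat.lt_succ_self _) ?_
      omega

lemma Lv_mono (E : ReqSeq n m) (hm : 0 < m) (hr : 0 < (Vals E).card)
    (hrm : (Vals E).card ≤ m) :
    ∀ a b, a ≤ b → b ≤ m → Lv E a ≤ Lv E b := by
  intro a b hab
  induction b with
  | zero =>
    intro _
    have : a = 0 := by omega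
    rw [this]
  | succ b ih =>
    intro hbm
    rcases Nat.lt_or_ge a (b+1) with h | h
    · have h1 : Lv E a ≤ Lv E b := ih (by omega) (by omega)
      have h2 : Lv E b < Lv E (b+1) := Lv_strict E hm hr hrm b (by omega)
      linarith
    · have : a = b + 1 := by omega
      rw [this]

lemma Lv_nonneg (E : ReqSeq n m) (hm : 0 < m) (hr : 0 < (Vals E).card)
    (hrm : (Vals E).card ≤ m) {t : ℕ} (ht : t ≤ m) : 0 ≤ Lv E t := by
  have := Lv_mono E hm hr hrm 0 t (Nat.zero_le t) ht
  rw [Lv_zero] at this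
  exact this

lemma Lv_top (E : ReqSeq n m) (hm : 0 < m) (hr : 0 < (Vals E).card)
    (hrm : (Vals E).card ≤ m) (i : Fin n) : wfv E i ≤ Lv E m := by
  have hLm : Lv E m = eVal E ((Vals E).card - 1) := by
    rw [Lv, if_neg (by omega)]
    congr 1
    omega
  rcases lt_or_eq_of_le (wfv_nonneg E i) with hpos | heq
  · have hmem : wfv E i ∈ Vals E := Finset.mem_filter.mpr
      ⟨Finset.mem_image_of_mem _ (Finset.mem_univ i), hpos⟩
    obtain ⟨j, hj, hje⟩ := eVal_surj E hmem
    rw [hLm, ← hje]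
    exact eVal_le E (by omega) (by omega)
  · rw [← heq]
    exact Lv_nonneg E hm hr hrm (le_refl m)

lemma Lv_gap (E : ReqSeq n m) (hm : 0 < m) (hr : 0 < (Vals E).card)
    (hrm : (Vals E).card ≤ m) {t : ℕ} (ht : t < m) (i : Fin n) :
    wfv E i ≤ Lv E t ∨ Lv E (t+1) ≤ wfv E i := by
  set r := (Vals E).card with hrdef
  set K := m - r with hK
  rcases lt_or_eq_of_le (wfv_nonneg E i) with hpos | heq
  · have hmem : wfv E i ∈ Vals E := Finset.mem_filter.mpr
      ⟨Finset.mem_image_of_mem _ (Finset.mem_univ i), hpos⟩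
    have he0le : eVal E 0 ≤ wfv E i := by
      obtain ⟨j, hj, hje⟩ := eVal_surj E hmem
      rw [← hje]
      exact eVal_le E (Nat.zero_le j) hj
    rcases le_or_gt (t+1) K with h1 | h1
    · right
      rw [Lv, if_pos h1]
      have hden : (0:ℝ) < (K : ℕ) + 1 := by positivity
      rw [div_le_iff₀ hden]
      have he0 : 0 < eVal E 0 := eVal_pos E hr
      have hc1 : ((t+1 : ℕ) : ℝ) ≤ (K : ℕ) + 1 := by
        push_cast
        have : (t:ℝ) ≤ (K:ℝ) := by exact_mod_cast (by omega : t ≤ K)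
        linarith
      calc ((t+1:ℕ):ℝ) * eVal E 0 ≤ ((K:ℕ) + 1) * eVal E 0 := by nlinarith
        _ ≤ wfv E i * ((K:ℕ)+1) := by nlinarith
    · rcases le_or_gt t K with h2 | h2
      · right
        rw [Lv, if_neg (by omega)]
        have hidx : t + 1 - K - 1 = 0 := by omega
        rw [hidx]
        exact he0le
      · -- t > K : gap between consecutive values
        have := eVal_gap E (show (t - K - 1) + 1 < r by omega) hmem
        rcases this with h | h
        · left
          rw [Lv, if_neg (by omega)]
          exact h
        · right
          rw [Lv, if_neg (by omega)]
          have hidx : t + 1 - K - 1 = (t - K - 1) + 1 := by omega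
          rw [hidx]
          exact h
  · left
    rw [← heq]
    exact Lv_nonneg E hm hr hrm (by omega)

end Levels
section Chain

variable {n m : ℕ}

lemma Lv_top_eq (E : ReqSeq n m) (hr : 0 < (Vals E).card) (hrm : (Vals E).card ≤ m) :
    Lv E m = eVal E ((Vals E).card - 1) := by
  rw [Lv, if_neg (by omega)]
  congr 1
  omega

lemma chainN_nonempty (E : ReqSeq n m) (hm : 0 < m) (t : Fin m) :
    (Finset.univ.filter (fun i => Lv E (t.val+1) ≤ wfv E i)).Nonempty := by
  have hr : 0 < (Vals E).card := Finset.card_pos.mpr (Vals_nonempty E hm)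
  have hrm := Vals_card_le E hm
  have hmem : eVal E ((Vals E).card - 1) ∈ Vals E := eVal_mem E (by omega)
  obtain ⟨hin, _⟩ := Finset.mem_filter.mp hmem
  obtain ⟨i, _, hvi⟩ := Finset.mem_image.mp hin
  refine ⟨i, Finset.mem_filter.mpr ⟨Finset.mem_univ i, ?_⟩⟩
  rw [hvi, ← Lv_top_eq E hr hrm]
  exact Lv_mono E hm hr hrm (t.val+1) m (by omega) (le_refl m)

noncomputable def chainSeq (E : ReqSeq n m) (hm : 0 < m) : ReqSeq n m where
  N := fun t => Finset.univ.filter (fun i => Lv E (t.val+1) ≤ wfv E i)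
  q := fun t => ((Finset.univ.filter (fun i => Lv E (t.val+1) ≤ wfv E i)).card : ℝ)
      * (Lv E (t.val+1) - Lv E t.val)
  N_nonempty := chainN_nonempty E hm
  q_pos := by
    intro t
    have hr : 0 < (Vals E).card := Finset.card_pos.mpr (Vals_nonempty E hm)
    have hrm := Vals_card_le E hm
    refine mul_pos ?_ ?_
    · exact_mod_cast Finset.card_pos.mpr (chainN_nonempty E hm t)
    · have := Lv_strict E hm hr hrm t.val t.isLt
      linarith

noncomputable def chainX (E : ReqSeq n m) : Fin m → Fin n → ℝ :=
  fun t i => min (wfv E i) (Lv E (t.val+1)) - min (wfv E i) (Lv E t.val)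

lemma chainX_on (E : ReqSeq n m) (hm : 0 < m) (t : Fin m) (i : Fin n)
    (hi : Lv E (t.val+1) ≤ wfv E i) :
    chainX E t i = Lv E (t.val+1) - Lv E t.val := by
  have hr : 0 < (Vals E).card := Finset.card_pos.mpr (Vals_nonempty E hm)
  have hrm := Vals_card_le E hm
  have hLle : Lv E t.val ≤ Lv E (t.val+1) :=
    (Lv_strict E hm hr hrm t.val t.isLt).le
  rw [chainX, min_eq_right hi, min_eq_right (le_trans hLle hi)]

lemma chainX_off (E : ReqSeq n m) (hm : 0 < m) (t : Fin m) (i : Fin n)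
    (hi : ¬ Lv E (t.val+1) ≤ wfv E i) : chainX E t i = 0 := by
  have hr : 0 < (Vals E).card := Finset.card_pos.mpr (Vals_nonempty E hm)
  have hrm := Vals_card_le E hm
  have hgap := Lv_gap E hm hr hrm (show t.val < m from t.isLt) i
  have hle : wfv E i ≤ Lv E t.val := by
    rcases hgap with h | h
    · exact h
    · exact absurd h hi
  have hLle : Lv E t.val ≤ Lv E (t.val+1) :=
    (Lv_strict E hm hr hrm t.val t.isLt).le
  rw [chainX, min_eq_left (le_trans hle hLle), min_eq_left hle]
  ring

lemma chainX_mem (E : ReqSeq n m) (hm : 0 < m) (t : Fin m) :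
    chainX E t ∈ allocSet n ((chainSeq E hm).N t) ((chainSeq E hm).q t) := by
  have hr : 0 < (Vals E).card := Finset.card_pos.mpr (Vals_nonempty E hm)
  have hrm := Vals_card_le E hm
  have hLle : Lv E t.val ≤ Lv E (t.val+1) :=
    (Lv_strict E hm hr hrm t.val t.isLt).le
  refine ⟨fun i => ?_, fun i hi => ?_, ?_⟩
  · rw [chainX]
    have : min (wfv E i) (Lv E t.val) ≤ min (wfv E i) (Lv E (t.val+1)) :=
      min_le_min (le_refl _) hLle
    linarith
  · refine chainX_off E hm t i ?_
    intro hcon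
    exact hi (Finset.mem_filter.mpr ⟨Finset.mem_univ i, hcon⟩)
  · show ∑ i, chainX E t i = ((Finset.univ.filter (fun i => Lv E (t.val+1) ≤ wfv E i)).card : ℝ)
      * (Lv E (t.val+1) - Lv E t.val)
    calc ∑ i, chainX E t i
        = ∑ i ∈ Finset.univ.filter (fun i => Lv E (t.val+1) ≤ wfv E i), chainX E t i := by
          refine (Finset.sum_subset (Finset.filter_subset _ _) fun i _ hi => ?_).symm
          refine chainX_off E hm t i fun hcon => ?_
          exact hi (Finset.mem_filter.mpr ⟨Finset.mem_univ i, hcon⟩)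
      _ = ∑ i ∈ Finset.univ.filter (fun i => Lv E (t.val+1) ≤ wfv E i),
            (Lv E (t.val+1) - Lv E t.val) := by
          refine Finset.sum_congr rfl fun i hi => ?_
          exact chainX_on E hm t i (Finset.mem_filter.mp hi).2
      _ = _ := by rw [Finset.sum_const, nsmul_eq_mul]

lemma chainX_prev (E : ReqSeq n m) (i : Fin n) (t : Fin m) :
    prevLoad (chainX E) t i = min (wfv E i) (Lv E t.val) := by
  have h1 : prevLoad (chainX E) t i
      = ∑ s ∈ Finset.univ.filter (fun s => s < t),
          (fun j : ℕ => min (wfv E i) (Lv E (j+1)) - min (wfv E i) (Lv E j)) s.val := rfl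
  rw [h1, sum_filter_lt t (fun j => min (wfv E i) (Lv E (j+1)) - min (wfv E i) (Lv E j)),
    Finset.sum_range_sub (fun j => min (wfv E i) (Lv E j))]
  rw [Lv_zero, min_eq_right (wfv_nonneg E i)]
  ring

lemma chainX_total (E : ReqSeq n m) (hm : 0 < m) (i : Fin n) :
    ∑ s, chainX E s i = wfv E i := by
  have hr : 0 < (Vals E).card := Finset.card_pos.mpr (Vals_nonempty E hm)
  have hrm := Vals_card_le E hm
  have h1 : ∑ s, chainX E s i
      = ∑ j ∈ Finset.range m,
          (fun j : ℕ => min (wfv E i) (Lv E (j+1)) - min (wfv E i) (Lv E j)) j := by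
    have h0 : ∑ s, chainX E s i
        = ∑ s : Fin m,
            (fun j : ℕ => min (wfv E i) (Lv E (j+1)) - min (wfv E i) (Lv E j)) s.val := rfl
    rw [h0]
    exact Fin.sum_univ_eq_sum_range
      (fun j => min (wfv E i) (Lv E (j+1)) - min (wfv E i) (Lv E j)) m
  rw [h1, Finset.sum_range_sub (fun j => min (wfv E i) (Lv E j)), Lv_zero,
    min_eq_right (wfv_nonneg E i), min_eq_left (Lv_top E hm hr hrm i)]
  ring

lemma chain_isWF (E : ReqSeq n m) (hm : 0 < m) : IsWFAlloc (chainSeq E hm) (chainX E) := by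
  have hr : 0 < (Vals E).card := Finset.card_pos.mpr (Vals_nonempty E hm)
  have hrm := Vals_card_le E hm
  refine ⟨fun t => chainX_mem E hm t, fun t y hy => ?_⟩
  have hLle : Lv E t.val ≤ Lv E (t.val+1) :=
    (Lv_strict E hm hr hrm t.val t.isLt).le
  have hform : ∀ i ∈ (chainSeq E hm).N t,
      chainX E t i = max (Lv E (t.val+1) - prevLoad (chainX E) t i) 0 := by
    intro i hi
    have hiv : Lv E (t.val+1) ≤ wfv E i := (Finset.mem_filter.mp hi).2
    rw [chainX_prev, min_eq_right (le_trans hLle hiv), chainX_on E hm t i hiv,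
      max_eq_left (by linarith)]
  have hopt := form_opt ((chainSeq E hm).N_nonempty t) ((chainSeq E hm).q_pos t)
    (chainX_mem E hm t) hform
  exact le_trans (hopt.1 y hy) (le_of_eq hopt.2.symm)

lemma wfLoad_chain (E : ReqSeq n m) (hm : 0 < m) : wfLoad (chainSeq E hm) = wfv E := by
  rw [wfLoad_eq, ← isWFAlloc_unique (chain_isWF E hm)]
  funext i
  rw [Finset.sum_apply]
  exact chainX_total E hm i

lemma chain_sum_q (E : ReqSeq n m) (hm : 0 < m) :
    ∑ t, (chainSeq E hm).q t = ∑ t, E.q t := by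
  have h1 : ∀ t, (chainSeq E hm).q t = ∑ i, chainX E t i :=
    fun t => ((chainX_mem E hm t).2.2).symm
  rw [Finset.sum_congr rfl fun t _ => h1 t, Finset.sum_comm]
  rw [Finset.sum_congr rfl fun i (_ : i ∈ Finset.univ) => chainX_total E hm i]
  exact wfv_total E

lemma chain_nested (E : ReqSeq n m) (hm : 0 < m) : IsNested (chainSeq E hm) := by
  have hr : 0 < (Vals E).card := Finset.card_pos.mpr (Vals_nonempty E hm)
  have hrm := Vals_card_le E hm
  intro s t hst i hi
  have hiv : Lv E (t.val+1) ≤ wfv E i := (Finset.mem_filter.mp hi).2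
  refine Finset.mem_filter.mpr ⟨Finset.mem_univ i, le_trans ?_ hiv⟩
  exact Lv_mono E hm hr hrm (s.val+1) (t.val+1) (by exact Nat.succ_le_succ hst) (by omega)

/-- Tail-greedy feasibility: suffix demands fitting inside neighborhoods suffice. -/
lemma mem_loads_of_tail (E' : ReqSeq n m) (ω : Fin n → ℝ) (hω0 : ∀ i, 0 ≤ ω i)
    (hsum : ∑ i, ω i = ∑ t, E'.q t)
    (hcons : ∀ t : Fin m,
      ∑ s ∈ Finset.univ.filter (fun s => t ≤ s), E'.q s ≤ ∑ i ∈ E'.N t, ω i) :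
    ω ∈ loads E' := by
  classical
  have main : ∀ d : ℕ, d ≤ m → ∃ y : Fin m → Fin n → ℝ,
      (∀ s : Fin m, m - d ≤ s.val → y s ∈ allocSet n (E'.N s) (E'.q s)) ∧
      (∀ s : Fin m, s.val < m - d → y s = fun _ => 0) ∧
      (∀ i, ∑ s, y s i ≤ ω i) := by
    intro d
    induction d with
    | zero =>
      intro _
      refine ⟨fun _ _ => 0, fun s hs => ?_, fun s _ => rfl, fun i => by
        simpa using hω0 i⟩
      exfalso
      have := s.isLt
      omega
    | succ d ih =>
      intro hdm
      obtain ⟨y, h1, h2, h3⟩ := ih (by omega)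
      have hcm : m - (d+1) < m := by omega
      set t0 : Fin m := ⟨m - (d+1), hcm⟩ with ht0
      have ht0val : t0.val = m - (d+1) := rfl
      set ρ : Fin n → ℝ := fun i => ω i - ∑ s, y s i with hρ
      have hρdef : ∀ i, ρ i = ω i - ∑ s, y s i := fun i => rfl
      have hρ0 : ∀ i, 0 ≤ ρ i := fun i => by rw [hρdef]; linarith [h3 i]
      have hDge : E'.q t0 ≤ ∑ i ∈ E'.N t0, ρ i := by
        have hseteq : Finset.univ.filter (fun s : Fin m => t0 ≤ s)
            = insert t0 (Finset.univ.filter (fun s : Fin m => m - d ≤ s.val)) := by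
          ext s
          simp only [Finset.mem_filter, Finset.mem_univ, true_and, Finset.mem_insert]
          constructor
          · intro h
            have hv : t0.val ≤ s.val := h
            rcases Nat.eq_or_lt_of_le hv with heq | hlt
            · exact Or.inl (Fin.ext heq.symm)
            · right
              rw [ht0val] at hlt
              omega
          · rintro (rfl | h)
            · exact le_refl _
            · show t0.val ≤ s.val
              rw [ht0val]
              omega
        have ht0notin : t0 ∉ Finset.univ.filter (fun s : Fin m => m - d ≤ s.val) := by
          simp only [Finset.mem_filter, Finset.mem_univ, true_and, ht0val]
          omega
        have hsplit : ∑ s ∈ Finset.univ.filter (fun s : Fin m => t0 ≤ s), E'.q s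
            = E'.q t0 + ∑ s ∈ Finset.univ.filter (fun s : Fin m => m - d ≤ s.val), E'.q s := by
          rw [hseteq, Finset.sum_insert ht0notin]
        have hub : ∑ s, (∑ i ∈ E'.N t0, y s i)
            ≤ ∑ s ∈ Finset.univ.filter (fun s : Fin m => m - d ≤ s.val), E'.q s := by
          have hz : ∀ s ∈ Finset.univ,
              s ∉ Finset.univ.filter (fun s : Fin m => m - d ≤ s.val) →
              (∑ i ∈ E'.N t0, y s i) = 0 := by
            intro s _ hs
            simp only [Finset.mem_filter, Finset.mem_univ, true_and, not_le] at hs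
            rw [h2 s hs]
            simp
          rw [← Finset.sum_subset (Finset.filter_subset _ _) hz]
          refine Finset.sum_le_sum fun s hs => ?_
          have hsge : m - d ≤ s.val := (Finset.mem_filter.mp hs).2
          have hmem := h1 s hsge
          rw [← hmem.2.2]
          exact Finset.sum_le_sum_of_subset_of_nonneg (Finset.subset_univ _)
            (fun i _ _ => hmem.1 i)
        have hρsum : ∑ i ∈ E'.N t0, ρ i
            = ∑ i ∈ E'.N t0, ω i - ∑ s, (∑ i ∈ E'.N t0, y s i) := by
          rw [Finset.sum_congr rfl fun i (_ : i ∈ E'.N t0) => hρdef i,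
            Finset.sum_sub_distrib, Finset.sum_comm]
        have hcons0 := hcons t0
        rw [hsplit] at hcons0
        rw [hρsum]
        linarith
      have hDpos : 0 < ∑ i ∈ E'.N t0, ρ i := lt_of_lt_of_le (E'.q_pos t0) hDge
      set z : Fin n → ℝ :=
        fun i => if i ∈ E'.N t0 then E'.q t0 * ρ i / (∑ j ∈ E'.N t0, ρ j) else 0 with hz
      have hzdef : ∀ i, z i = if i ∈ E'.N t0 then E'.q t0 * ρ i / (∑ j ∈ E'.N t0, ρ j) else 0 :=
        fun i => rfl
      have hzmem : z ∈ allocSet n (E'.N t0) (E'.q t0) := by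
        refine ⟨fun i => ?_, fun i hi => by rw [hzdef, if_neg hi], ?_⟩
        · rw [hzdef]
          split
          · exact div_nonneg (mul_nonneg (E'.q_pos t0).le (hρ0 i)) hDpos.le
          · exact le_refl 0
        · calc ∑ i, z i
              = ∑ i ∈ E'.N t0, z i := by
                refine (Finset.sum_subset (Finset.subset_univ _) fun i _ hi => ?_).symm
                rw [hzdef, if_neg hi]
            _ = ∑ i ∈ E'.N t0, E'.q t0 * ρ i / (∑ j ∈ E'.N t0, ρ j) := by
                refine Finset.sum_congr rfl fun i hi => ?_
                rw [hzdef, if_pos hi]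
            _ = E'.q t0 := by
                rw [← Finset.sum_div, ← Finset.mul_sum]
                field_simp
      have hzle : ∀ i, z i ≤ ρ i := by
        intro i
        rw [hzdef]
        split
        · rw [div_le_iff₀ hDpos]
          nlinarith [mul_le_mul_of_nonneg_left hDge (hρ0 i)]
        · exact hρ0 i
      refine ⟨Function.update y t0 z, ?_, ?_, ?_⟩
      · intro s hs
        by_cases hst : s = t0
        · rw [hst, Function.update_self]
          exact hzmem
        · rw [Function.update_of_ne hst]
          apply h1
          have hne : s.val ≠ m - (d+1) := fun h => hst (Fin.ext (by rw [h, ht0val]))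
          omega
      · intro s hs
        have hst : s ≠ t0 := by
          intro h
          rw [h, ht0val] at hs
          omega
        rw [Function.update_of_ne hst]
        exact h2 s (by omega)
      · intro i
        have hpt : ∀ s, Function.update y t0 z s i
            = Function.update (fun s => y s i) t0 (z i) s := by
          intro s
          by_cases hst : s = t0
          · rw [hst, Function.update_self, Function.update_self]
          · rw [Function.update_of_ne hst, Function.update_of_ne hst]
        rw [Finset.sum_congr rfl fun s _ => hpt s,
          Finset.sum_update_of_mem (Finset.mem_univ t0)]
        have hy0 : y t0 i = 0 := by
          have := h2 t0 (by rw [ht0val]; omega)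
          rw [this]
        have hsum2 : ∑ s ∈ Finset.univ \ {t0}, y s i = ∑ s, y s i := by
          rw [Finset.sdiff_singleton_eq_erase]
          exact Finset.sum_erase _ hy0
        rw [hsum2]
        have := hzle i
        rw [hρdef i] at this
        linarith
  obtain ⟨y, h1, h2, h3⟩ := main m (le_refl m)
  have hfeas : Feasible E' y := fun t => h1 t (by omega)
  have hsumy : ∑ i, (∑ s, y s i) = ∑ t, E'.q t := by
    rw [Finset.sum_comm]
    exact Finset.sum_congr rfl fun s _ => (h1 s (by omega)).2.2
  have hzero : ∀ i, ω i - ∑ s, y s i = 0 := by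
    have hnn : ∀ i ∈ Finset.univ, 0 ≤ ω i - ∑ s, y s i := fun i _ => by linarith [h3 i]
    have htot : ∑ i, (ω i - ∑ s, y s i) = 0 := by
      rw [Finset.sum_sub_distrib, hsum, hsumy]
      ring
    intro i
    exact (Finset.sum_eq_zero_iff_of_nonneg hnn).mp htot i (Finset.mem_univ i)
  refine ⟨y, hfeas, ?_⟩
  funext i
  rw [Finset.sum_apply]
  linarith [hzero i]

lemma w_mem_chain (E : ReqSeq n m) (hm : 0 < m) {w : Fin n → ℝ} (hw : w ∈ loads E) :
    w ∈ loads (chainSeq E hm) := by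
  have hr : 0 < (Vals E).card := Finset.card_pos.mpr (Vals_nonempty E hm)
  have hrm := Vals_card_le E hm
  refine mem_loads_of_tail _ _ (loads_nonneg hw) ?_ ?_
  · rw [loads_total hw, chain_sum_q]
  · intro t
    have hθ0 : 0 ≤ Lv E t.val := Lv_nonneg E hm hr hrm (by omega)
    have hLlt : Lv E t.val < Lv E (t.val+1) := Lv_strict E hm hr hrm t.val t.isLt
    -- identify the zeta set with the chain neighborhood
    have hCeq : Finset.univ.filter (fun i => Lv E t.val < (∑ s, wfx E s) i)
        = (chainSeq E hm).N t := by
      ext i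
      have hNt : (chainSeq E hm).N t
          = Finset.univ.filter (fun i => Lv E (t.val+1) ≤ wfv E i) := rfl
      rw [hNt]
      simp only [Finset.mem_filter, Finset.mem_univ, true_and]
      have hvv : (∑ s, wfx E s) i = wfv E i := rfl
      rw [hvv]
      constructor
      · intro h
        rcases Lv_gap E hm hr hrm (show t.val < m from t.isLt) i with h' | h'
        · linarith
        · exact h'
      · intro h
        linarith
    have hz := zeta E hw hθ0
    rw [hCeq] at hz
    -- compute the tail sum of chain quantities
    have htail : ∑ s ∈ Finset.univ.filter (fun s => t ≤ s), (chainSeq E hm).q s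
        = ∑ i ∈ (chainSeq E hm).N t, (wfv E i - Lv E t.val) := by
      have h1 : ∀ s, (chainSeq E hm).q s = ∑ i, chainX E s i :=
        fun s => ((chainX_mem E hm s).2.2).symm
      rw [Finset.sum_congr rfl fun s _ => h1 s, Finset.sum_comm]
      have h2 : ∀ i, ∑ s ∈ Finset.univ.filter (fun s => t ≤ s), chainX E s i
          = wfv E i - min (wfv E i) (Lv E t.val) := by
        intro i
        have hset : Finset.univ.filter (fun s : Fin m => t ≤ s)
            = Finset.univ \ Finset.univ.filter (fun s : Fin m => s < t) := by
          ext s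
          simp only [Finset.mem_filter, Finset.mem_univ, true_and, Finset.mem_sdiff, not_lt]
        rw [hset, Finset.sum_sdiff_eq_sub (Finset.filter_subset _ _)]
        have hprev : ∑ s ∈ Finset.univ.filter (fun s : Fin m => s < t), chainX E s i
            = min (wfv E i) (Lv E t.val) := chainX_prev E i t
        rw [hprev, chainX_total E hm i]
      rw [Finset.sum_congr rfl fun i _ => h2 i]
      -- split over membership
      calc ∑ i, (wfv E i - min (wfv E i) (Lv E t.val))
          = ∑ i ∈ (chainSeq E hm).N t, (wfv E i - min (wfv E i) (Lv E t.val)) := by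
            refine (Finset.sum_subset (Finset.subset_univ _) fun i _ hi => ?_).symm
            have hni : ¬ Lv E (t.val+1) ≤ wfv E i := by
              intro hcon
              exact hi (Finset.mem_filter.mpr ⟨Finset.mem_univ i, hcon⟩)
            have hle : wfv E i ≤ Lv E t.val := by
              rcases Lv_gap E hm hr hrm (show t.val < m from t.isLt) i with h' | h'
              · exact h'
              · exact absurd h' hni
            rw [min_eq_left hle]
            ring
        _ = ∑ i ∈ (chainSeq E hm).N t, (wfv E i - Lv E t.val) := by
            refine Finset.sum_congr rfl fun i hi => ?_
            have hiv : Lv E (t.val+1) ≤ wfv E i := (Finset.mem_filter.mp hi).2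
            rw [min_eq_right (by linarith)]
    rw [htail, Finset.sum_sub_distrib, Finset.sum_const, nsmul_eq_mul]
    have hveq : ∀ i, (∑ s, wfx E s) i = wfv E i := fun i => rfl
    rw [Finset.sum_congr rfl fun i (_ : i ∈ (chainSeq E hm).N t) => hveq i] at hz
    linarith

end Chain

lemma Majorizes_refl {n : ℕ} (x : Fin n → ℝ) : Majorizes x x :=
  ⟨rfl, fun _ _ => le_refl _⟩
/-- **Lemma (Majorization Maximality of Nested Sequences).** Given any request sequence
`E ∈ E_{n,m,q}`, there is a nested sequence `Ẽ ∈ E^nest_{n,m,q}` with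
`WF(E) ⪯ WF(Ẽ)` and `OPT(E) ⪰ OPT(Ẽ)`. -/
theorem nested_majorization_maximality (n m : ℕ) (q : ℝ)
    (E : ReqSeq n m) (hE : E ∈ seqs n m q) :
    ∃ Etil : ReqSeq n m, Etil ∈ seqs n m q ∧ IsNested Etil ∧
      Majorizes (wfLoad Etil) (wfLoad E) ∧
      Majorizes (optLoad E) (optLoad Etil) := by
  rcases Nat.eq_zero_or_pos m with hm0 | hm
  · subst hm0
    exact ⟨E, hE, fun s => s.elim0, Majorizes_refl _, Majorizes_refl _⟩
  · refine ⟨chainSeq E hm, ?_, chain_nested E hm, ?_, ?_⟩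
    · show ∑ t, (chainSeq E hm).q t = q
      rw [chain_sum_q]
      exact hE
    · rw [wfLoad_chain E hm, wfLoad_eq E]
      have hv : (∑ t, wfx E t) = wfv E := rfl
      rw [hv]
      exact Majorizes_refl _
    · have hoptE := exists_isOpt E
      have hoptC := exists_isOpt (chainSeq E hm)
      unfold optLoad
      rw [dif_pos hoptE, dif_pos hoptC]
      exact hoptC.choose_spec.2 _ (w_mem_chain E hm hoptE.choose_spec.1)
end

section
/- For any (possibly randomized) allocation policy A and any nested sequence Ẽ ∈ E^nest_{n,m,q}, there exists a nested sequence E' ∈ E^nest_{n,m,q} such that WF(Ẽ) ⪯ 𝔼[A(E')] and OPT(Ẽ) ∼ OPT(E') (i.e., OPT(E') is a permutation of OPT(Ẽ)). -/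
open Finset MeasureTheory

/-- A deterministic allocation policy: maps the history of past
`(neighborhood, quantity, allocation)` triples and the current `(neighborhood, quantity)`
to an allocation. -/
def DetPolicy (n : ℕ) : Type :=
  List (Finset (Fin n) × ℝ × (Fin n → ℝ)) → Finset (Fin n) × ℝ → (Fin n → ℝ)

/-- A valid deterministic policy always outputs a feasible allocation. -/
def ValidDetPolicy {n : ℕ} (A : DetPolicy n) : Prop :=
  ∀ h N qt, N.Nonempty → 0 < qt → A h (N, qt) ∈ allocSet n N qt

/-- The history produced by running policy `A` on sequence `E` for `t` steps. -/
def hist {n m : ℕ} (A : DetPolicy n) (E : ReqSeq n m) :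
    ℕ → List (Finset (Fin n) × ℝ × (Fin n → ℝ))
  | 0 => []
  | t + 1 =>
    if ht : t < m then
      hist A E t ++ [(E.N ⟨t, ht⟩, E.q ⟨t, ht⟩, A (hist A E t) (E.N ⟨t, ht⟩, E.q ⟨t, ht⟩))]
    else hist A E t

/-- The allocation chosen by policy `A` on arrival `t` of sequence `E`. -/
def detAlloc {n m : ℕ} (A : DetPolicy n) (E : ReqSeq n m) (t : Fin m) : Fin n → ℝ :=
  A (hist A E t.val) (E.N t, E.q t)

/-- `A(E)`: the final load vector of deterministic policy `A` on `E`. -/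
def detLoad {n m : ℕ} (A : DetPolicy n) (E : ReqSeq n m) : Fin n → ℝ :=
  ∑ t, detAlloc A E t

instance (n : ℕ) : MeasurableSpace (DetPolicy n) := ⊤

/-- A randomized allocation policy: a probability distribution over deterministic policies
(almost surely valid). -/
structure RandPolicy (n : ℕ) where
  μ : Measure (DetPolicy n)
  prob : IsProbabilityMeasure μ
  valid : ∀ᵐ p ∂μ, ValidDetPolicy p

/-- `𝔼[A(E)]`: coordinatewise expected load of randomized policy `A` on `E`. -/
noncomputable def expLoad {n m : ℕ} (A : RandPolicy n) (E : ReqSeq n m) : Fin n → ℝ :=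
  fun i => ∫ p, detLoad p E i ∂A.μ

namespace PolicyDev
open Finset

variable {n : ℕ}

lemma topSum_bdd (v : Fin n → ℝ) (k : ℕ) :
    BddAbove ((fun s : Finset (Fin n) => ∑ i ∈ s, v i) '' {s | s.card = k}) :=
  (Set.toFinite _).bddAbove

lemma sum_le_topSum {v : Fin n → ℝ} {T : Finset (Fin n)} {k : ℕ} (h : T.card = k) :
    ∑ i ∈ T, v i ≤ topSum v k :=
  le_csSup (topSum_bdd v k) ⟨T, h, rfl⟩

lemma exists_card_eq {k : ℕ} (hk : k ≤ n) : ∃ T : Finset (Fin n), T.card = k := by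
  obtain ⟨T, -, hT⟩ := Finset.exists_subset_card_eq
    (show k ≤ (Finset.univ : Finset (Fin n)).card by simpa using hk)
  exact ⟨T, hT⟩

lemma topSum_le {v : Fin n → ℝ} {k : ℕ} (hk : k ≤ n) {c : ℝ}
    (h : ∀ T : Finset (Fin n), T.card = k → ∑ i ∈ T, v i ≤ c) : topSum v k ≤ c := by
  obtain ⟨T₀, hT₀⟩ := exists_card_eq hk
  refine csSup_le ⟨_, ⟨T₀, hT₀, rfl⟩⟩ ?_
  rintro x ⟨T, hT, rfl⟩
  exact h T hT

lemma exists_topset (v : Fin n → ℝ) {k : ℕ} (hk : k ≤ n) :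
    ∃ T : Finset (Fin n), T.card = k ∧ ∑ i ∈ T, v i = topSum v k ∧
      ∀ i ∉ T, ∀ j ∈ T, v i ≤ v j := by
  classical
  obtain ⟨T₀, hT₀⟩ := exists_card_eq (n := n) hk
  have hne : (Finset.univ.powersetCard k : Finset (Finset (Fin n))).Nonempty := by
    refine ⟨T₀, ?_⟩
    simp [Finset.mem_powersetCard, hT₀]
  obtain ⟨T, hTmem, hTmax⟩ := Finset.exists_max_image _ (fun s => ∑ i ∈ s, v i) hne
  have hTcard : T.card = k := (Finset.mem_powersetCard.1 hTmem).2
  have htop : ∑ i ∈ T, v i = topSum v k := by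
    refine le_antisymm (sum_le_topSum hTcard) (topSum_le hk ?_)
    intro U hU
    exact hTmax U (by simp [Finset.mem_powersetCard, hU])
  refine ⟨T, hTcard, htop, ?_⟩
  intro i hi j hj
  by_contra hlt
  push_neg at hlt
  have hiT : i ∉ T.erase j := fun h => hi (Finset.mem_of_mem_erase h)
  have hcard' : (insert i (T.erase j)).card = k := by
    rw [Finset.card_insert_of_notMem hiT, Finset.card_erase_of_mem hj, hTcard]
    have : 1 ≤ k := by
      rw [← hTcard]; exact Finset.card_pos.2 ⟨j, hj⟩
    omega
  have hsum' : ∑ x ∈ insert i (T.erase j), v x = v i + (∑ x ∈ T, v x - v j) := by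
    rw [Finset.sum_insert hiT, Finset.sum_erase_eq_sub hj]
  have hle := sum_le_topSum (v := v) hcard'
  rw [hsum', ← htop] at hle
  linarith

lemma topSum_eq_of_topset {v : Fin n → ℝ} {T : Finset (Fin n)}
    (htop : ∀ i ∉ T, ∀ j ∈ T, v i ≤ v j) :
    ∑ i ∈ T, v i = topSum v T.card := by
  classical
  have hk : T.card ≤ n := by simpa using Finset.card_le_univ T
  refine le_antisymm (sum_le_topSum rfl) (topSum_le hk ?_)
  intro U hU
  have hcd : (U \ T).card = (T \ U).card := Finset.card_sdiff_comm (by rw [hU])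
  have key : ∑ i ∈ U \ T, v i ≤ ∑ i ∈ T \ U, v i := by
    have e := Finset.equivOfCardEq hcd
    calc ∑ i ∈ U \ T, v i = ∑ x : (U \ T : Finset (Fin n)), v x := by
          rw [Finset.sum_coe_sort]
      _ ≤ ∑ x : (U \ T : Finset (Fin n)), v (e x) := by
          refine Finset.sum_le_sum ?_
          intro x _
          have hx : (x : Fin n) ∉ T := (Finset.mem_sdiff.1 x.2).2
          have hex : ((e x : Fin n)) ∈ T := (Finset.mem_sdiff.1 (e x).2).1
          exact htop _ hx _ hex
      _ = ∑ y : (T \ U : Finset (Fin n)), v y := Fintype.sum_equiv e _ _ (fun x => rfl)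
      _ = ∑ i ∈ T \ U, v i := by rw [Finset.sum_coe_sort]
  have h1 : ∑ i ∈ U, v i = ∑ i ∈ U ∩ T, v i + ∑ i ∈ U \ T, v i :=
    (Finset.sum_inter_add_sum_sdiff U T v).symm
  have h2 : ∑ i ∈ T, v i = ∑ i ∈ T ∩ U, v i + ∑ i ∈ T \ U, v i :=
    (Finset.sum_inter_add_sum_sdiff T U v).symm
  rw [h1, h2, Finset.inter_comm]
  linarith

lemma topSum_zero (v : Fin n → ℝ) : topSum v 0 = 0 := by
  have := topSum_eq_of_topset (v := v) (T := ∅) (by simp)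
  simpa using this.symm

lemma topSum_univ (v : Fin n → ℝ) : topSum v n = ∑ i, v i := by
  have htop : ∀ i ∉ (Finset.univ : Finset (Fin n)), ∀ j ∈ (Finset.univ : Finset (Fin n)),
      v i ≤ v j := by simp
  have := topSum_eq_of_topset htop
  simpa using this.symm

lemma topSum_mono_card {v : Fin n → ℝ} (hv : ∀ i, 0 ≤ v i) {k k' : ℕ}
    (hkk : k ≤ k') (hk' : k' ≤ n) : topSum v k ≤ topSum v k' := by
  obtain ⟨T, hT, hTs, -⟩ := exists_topset v (le_trans hkk hk')
  obtain ⟨U, hTU, -, hU⟩ := Finset.exists_subsuperset_card_eq (n := k')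
    (Finset.subset_univ T) (by rw [hT]; omega) (by simpa using hk')
  have hUcard : U.card = k' := hU
  calc topSum v k = ∑ i ∈ T, v i := hTs.symm
    _ ≤ ∑ i ∈ U, v i := Finset.sum_le_sum_of_subset_of_nonneg hTU (fun i _ _ => hv i)
    _ ≤ topSum v k' := sum_le_topSum hUcard

lemma topSum_nonneg {v : Fin n → ℝ} (hv : ∀ i, 0 ≤ v i) {k : ℕ} (hk : k ≤ n) :
    0 ≤ topSum v k := by
  obtain ⟨T, hT⟩ := exists_card_eq (n := n) hk
  exact le_trans (Finset.sum_nonneg fun i _ => hv i) (sum_le_topSum hT)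

lemma topSum_le_topSum {v w : Fin n → ℝ} (hvw : ∀ i, v i ≤ w i) {k : ℕ} (hk : k ≤ n) :
    topSum v k ≤ topSum w k := by
  refine topSum_le hk ?_
  intro T hT
  exact le_trans (Finset.sum_le_sum fun i _ => hvw i) (sum_le_topSum hT)

lemma topSum_neg {v : Fin n → ℝ} {k : ℕ} (hk : k ≤ n) :
    topSum (fun i => -v i) k = topSum v (n - k) - ∑ i, v i := by
  have hnk : n - k ≤ n := Nat.sub_le n k
  refine le_antisymm ?_ ?_
  · refine topSum_le hk ?_
    intro U hU
    have hcompl : Uᶜ.card = n - k := by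
      rw [Finset.card_compl, hU]; simp
    have hsc : ∑ i ∈ Uᶜ, v i + ∑ i ∈ U, v i = ∑ i, v i := by
      rw [add_comm]; exact Finset.sum_add_sum_compl U v
    have : ∑ i ∈ U, (fun i => -v i) i = ∑ i ∈ Uᶜ, v i - ∑ i, v i := by
      simp only [Finset.sum_neg_distrib]
      linarith
    rw [this]
    have := sum_le_topSum (v := v) hcompl
    linarith
  · obtain ⟨T, hT, hTs, -⟩ := exists_topset v hnk
    have hcompl : Tᶜ.card = k := by
      rw [Finset.card_compl, hT]; simp; omega
    have hsc : ∑ i ∈ Tᶜ, v i + ∑ i ∈ T, v i = ∑ i, v i := by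
      rw [add_comm]; exact Finset.sum_add_sum_compl T v
    have h1 : ∑ i ∈ Tᶜ, (fun i => -v i) i = topSum v (n - k) - ∑ i, v i := by
      simp only [Finset.sum_neg_distrib]
      linarith
    calc topSum v (n-k) - ∑ i, v i = ∑ i ∈ Tᶜ, (fun i => -v i) i := h1.symm
      _ ≤ topSum (fun i => -v i) k := sum_le_topSum hcompl

end PolicyDev
namespace PolicyDev
open Finset

variable {n : ℕ}

/-- level sums dominate if topSums dominate -/
lemma lvl_of_top {a b : Fin n → ℝ} (h : ∀ u ≤ n, topSum b u ≤ topSum a u) (s : ℝ) :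
    ∑ i, max (b i - s) 0 ≤ ∑ i, max (a i - s) 0 := by
  classical
  set U := Finset.univ.filter (fun i => s < b i) with hU
  have hUcard : U.card ≤ n := by simpa using Finset.card_le_univ U
  have h1 : ∑ i, max (b i - s) 0 = ∑ i ∈ U, b i - U.card * s := by
    rw [← Finset.sum_filter_add_sum_filter_not Finset.univ (fun i => s < b i)]
    have e1 : ∑ i ∈ Finset.univ.filter (fun i => ¬ s < b i), max (b i - s) 0 = 0 := by
      refine Finset.sum_eq_zero ?_
      intro i hi
      have : b i ≤ s := by simpa using (Finset.mem_filter.1 hi).2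
      simp [max_eq_right, sub_nonpos.2 this]
    have e2 : ∑ i ∈ U, max (b i - s) 0 = ∑ i ∈ U, (b i - s) := by
      refine Finset.sum_congr rfl ?_
      intro i hi
      have : s < b i := (Finset.mem_filter.1 hi).2
      simp [max_eq_left, sub_nonneg.2 this.le]
    rw [e2, e1, add_zero, Finset.sum_sub_distrib, Finset.sum_const, nsmul_eq_mul]
  obtain ⟨T, hTcard, hTsum, -⟩ := exists_topset a hUcard
  have h2 : ∑ i ∈ U, b i ≤ topSum a U.card :=
    le_trans (sum_le_topSum rfl) (h _ hUcard)
  have h3 : topSum a U.card - U.card * s ≤ ∑ i, max (a i - s) 0 := by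
    have : topSum a U.card - U.card * s = ∑ i ∈ T, (a i - s) := by
      rw [Finset.sum_sub_distrib, Finset.sum_const, nsmul_eq_mul, hTsum, hTcard]
    rw [this]
    calc ∑ i ∈ T, (a i - s) ≤ ∑ i ∈ T, max (a i - s) 0 :=
          Finset.sum_le_sum (fun i _ => le_max_left _ _)
      _ ≤ ∑ i, max (a i - s) 0 :=
          Finset.sum_le_sum_of_subset_of_nonneg (Finset.subset_univ T)
            (fun i _ _ => le_max_right _ _)
  rw [h1]; linarith

/-- topSums dominate if level sums dominate -/
lemma top_of_lvl {a b : Fin n → ℝ}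
    (h : ∀ s : ℝ, ∑ i, max (b i - s) 0 ≤ ∑ i, max (a i - s) 0) :
    ∀ k ≤ n, topSum b k ≤ topSum a k := by
  intro k hk
  rcases Nat.eq_zero_or_pos k with hk0 | hkpos
  · subst hk0; rw [topSum_zero, topSum_zero]
  obtain ⟨T, hTcard, hTsum, hTtop⟩ := exists_topset a hk
  have hTne : T.Nonempty := Finset.card_pos.1 (by omega)
  set s := T.inf' hTne a with hs
  have honT : ∀ i ∈ T, s ≤ a i := fun i hi => Finset.inf'_le a hi
  have hoffT : ∀ i ∉ T, a i ≤ s := by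
    intro i hi
    obtain ⟨j, hj, hjs⟩ := Finset.exists_mem_eq_inf' hTne a
    rw [hs, hjs]
    exact hTtop i hi j hj
  have hmax : ∑ i, max (a i - s) 0 = ∑ i ∈ T, (a i - s) := by
    rw [← Finset.sum_filter_add_sum_filter_not Finset.univ (fun i => i ∈ T)]
    have e1 : Finset.univ.filter (fun i => i ∈ T) = T := by
      ext i; simp
    have e0 : ∑ i ∈ Finset.univ.filter (fun i => i ∉ T), max (a i - s) 0 = 0 := by
      refine Finset.sum_eq_zero ?_
      intro i hi
      have : a i ≤ s := hoffT i (by simpa using (Finset.mem_filter.1 hi).2)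
      simp [max_eq_right, sub_nonpos.2 this]
    have e2 : ∑ i ∈ Finset.univ.filter (fun i => i ∈ T), max (a i - s) 0
        = ∑ i ∈ T, (a i - s) := by
      rw [e1]
      refine Finset.sum_congr rfl ?_
      intro i hi
      simp [max_eq_left, sub_nonneg.2 (honT i hi)]
    rw [e0, e2, add_zero]
  have hA : topSum a k = k * s + ∑ i, max (a i - s) 0 := by
    rw [hmax, Finset.sum_sub_distrib, Finset.sum_const, nsmul_eq_mul, hTcard, ← hTsum]
    ring
  have hB : topSum b k ≤ k * s + ∑ i, max (b i - s) 0 := by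
    refine topSum_le hk ?_
    intro V hV
    calc ∑ i ∈ V, b i ≤ ∑ i ∈ V, (s + max (b i - s) 0) := by
          refine Finset.sum_le_sum ?_
          intro i _
          rcases le_or_gt (b i) s with hc | hc
          · have : max (b i - s) 0 = 0 := max_eq_right (sub_nonpos.2 hc)
            rw [this]; linarith
          · have : max (b i - s) 0 = b i - s := max_eq_left (sub_nonneg.2 hc.le)
            rw [this]; linarith
      _ = V.card * s + ∑ i ∈ V, max (b i - s) 0 := by
          rw [Finset.sum_add_distrib, Finset.sum_const, nsmul_eq_mul]
      _ ≤ k * s + ∑ i, max (b i - s) 0 := by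
          rw [hV]
          have := Finset.sum_le_sum_of_subset_of_nonneg (Finset.subset_univ V)
            (fun i _ _ => le_max_right (b i - s) 0)
          linarith
  have := h s
  linarith

lemma lvl_identity (v : Fin n → ℝ) (s : ℝ) :
    ∑ i, max (v i - s) 0 = ∑ i, v i - n * s + ∑ i, max (s - v i) 0 := by
  have : ∀ i, max (v i - s) 0 = v i - s + max (s - v i) 0 := by
    intro i
    rcases le_or_gt (v i) s with hc | hc
    · rw [max_eq_right (sub_nonpos.2 hc), max_eq_left (sub_nonneg.2 hc)]; ring
    · rw [max_eq_left (sub_nonneg.2 hc.le), max_eq_right (sub_nonpos.2 hc.le)]; ring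
  rw [Finset.sum_congr rfl (fun i _ => this i), Finset.sum_add_distrib,
    Finset.sum_sub_distrib, Finset.sum_const, nsmul_eq_mul]
  simp [Finset.card_univ]

/-- levels-dominate lemma for the "below" levels, needed for (‡). -/
lemma below_levels_dominate {a b : Fin n → ℝ}
    (hsum : ∑ i, a i = ∑ i, b i)
    (hdom : ∀ u ≤ n, topSum b u ≤ topSum a u) (s : ℝ) {k : ℕ} (hk : k ≤ n) :
    topSum (fun i => max (s - b i) 0) k ≤ topSum (fun i => max (s - a i) 0) k := by
  classical
  refine topSum_le hk ?_
  intro U hU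
  set U₁ := U.filter (fun i => b i < s) with hU₁
  have hu : U₁.card ≤ k := by rw [← hU]; exact Finset.card_le_card (Finset.filter_subset _ _)
  have hun : U₁.card ≤ n := le_trans hu hk
  have h1 : ∑ i ∈ U, max (s - b i) 0 = U₁.card * s - ∑ i ∈ U₁, b i := by
    rw [← Finset.sum_filter_add_sum_filter_not U (fun i => b i < s)]
    have e0 : ∑ i ∈ U.filter (fun i => ¬ b i < s), max (s - b i) 0 = 0 := by
      refine Finset.sum_eq_zero ?_
      intro i hi
      have : s ≤ b i := by simpa using (Finset.mem_filter.1 hi).2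
      simp [max_eq_right, sub_nonpos.2 this]
    have e2 : ∑ i ∈ U₁, max (s - b i) 0 = ∑ i ∈ U₁, (s - b i) := by
      refine Finset.sum_congr rfl ?_
      intro i hi
      have : b i < s := (Finset.mem_filter.1 hi).2
      simp [max_eq_left, sub_nonneg.2 this.le]
    rw [e0, e2, add_zero, Finset.sum_sub_distrib, Finset.sum_const, nsmul_eq_mul]
  have h2 : - ∑ i ∈ U₁, b i ≤ topSum (fun i => - b i) U₁.card := by
    have := sum_le_topSum (v := fun i => - b i) (T := U₁) rfl
    simpa using this
  have h3 : topSum (fun i => - b i) U₁.card ≤ topSum (fun i => - a i) U₁.card := by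
    rw [topSum_neg hun, topSum_neg hun, hsum]
    have := hdom (n - U₁.card) (Nat.sub_le n _)
    linarith
  obtain ⟨T, hTcard, hTsum, -⟩ := exists_topset (fun i => - a i) hun
  have h4 : U₁.card * s + topSum (fun i => - a i) U₁.card
      ≤ topSum (fun i => max (s - a i) 0) k := by
    have e : U₁.card * s + topSum (fun i => - a i) U₁.card = ∑ i ∈ T, (s - a i) := by
      rw [← hTsum, Finset.sum_sub_distrib, Finset.sum_const, nsmul_eq_mul, hTcard]
      have : ∑ i ∈ T, (fun i => - a i) i = - ∑ i ∈ T, a i := by simp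
      rw [this]; ring
    rw [e]
    calc ∑ i ∈ T, (s - a i) ≤ ∑ i ∈ T, max (s - a i) 0 :=
          Finset.sum_le_sum (fun i _ => le_max_left _ _)
      _ ≤ topSum (fun i => max (s - a i) 0) T.card := sum_le_topSum rfl
      _ ≤ topSum (fun i => max (s - a i) 0) k := by
          refine topSum_mono_card (fun i => le_max_right _ _) ?_ hk
          rw [hTcard]; exact hu
  rw [h1]
  linarith

end PolicyDev
namespace PolicyDev
open Finset

variable {n : ℕ}

lemma allocSet_sum {N : Finset (Fin n)} {qt : ℝ} {x : Fin n → ℝ}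
    (hx : x ∈ allocSet n N qt) : ∑ i, x i = qt := hx.2.2

/-- The key one-step comparison lemma. -/
lemma step_dom (a b y z : Fin n → ℝ) (S Nt : Finset (Fin n)) (qt : ℝ)
    (hsum : ∑ i, a i = ∑ i, b i)
    (hdom : ∀ u ≤ n, topSum b u ≤ topSum a u)
    (htop : ∀ i ∉ S, ∀ j ∈ S, a i ≤ a j)
    (hcard : S.card = Nt.card)
    (hy : y ∈ allocSet n S qt) (hz : z ∈ allocSet n Nt qt)
    (hne : Nt.Nonempty)
    (hstruct : ∀ i ∈ Nt, b i + z i = max (b i) (Nt.inf' hne (fun j => b j + z j))) :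
    (∑ i, (a i + y i) = ∑ i, (b i + z i)) ∧
      ∀ u ≤ n, topSum (fun i => b i + z i) u ≤ topSum (fun i => a i + y i) u := by
  classical
  set h := Nt.inf' hne (fun j => b j + z j) with hh
  have hsum' : ∑ i, (a i + y i) = ∑ i, (b i + z i) := by
    rw [Finset.sum_add_distrib, Finset.sum_add_distrib, hsum, allocSet_sum hy,
      allocSet_sum hz]
  refine ⟨hsum', ?_⟩
  refine top_of_lvl ?_
  intro s
  rcases le_or_gt h s with hcase | hcase
  · -- high levels: b+z has same level sums as b
    have e1 : ∀ i, max (b i + z i - s) 0 = max (b i - s) 0 := by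
      intro i
      by_cases hiN : i ∈ Nt
      · rw [hstruct i hiN]
        rcases le_or_gt (b i) h with hc | hc
        · rw [max_eq_right hc]
          have h1 : max (h - s) 0 = 0 := max_eq_right (sub_nonpos.2 hcase)
          have h2 : max (b i - s) 0 = 0 :=
            max_eq_right (sub_nonpos.2 (le_trans hc hcase))
          rw [h1, h2]
        · rw [max_eq_left hc.le]
      · rw [hz.2.1 i hiN, add_zero]
    calc ∑ i, max (b i + z i - s) 0 = ∑ i, max (b i - s) 0 :=
          Finset.sum_congr rfl (fun i _ => e1 i)
      _ ≤ ∑ i, max (a i - s) 0 := lvl_of_top hdom s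
      _ ≤ ∑ i, max (a i + y i - s) 0 := by
          refine Finset.sum_le_sum ?_
          intro i _
          refine max_le_max ?_ le_rfl
          have := hy.1 i
          linarith
  · -- low levels: use the identity and compare below-levels
    have key : ∑ i, max (s - (b i + z i)) 0 ≤ ∑ i, max (s - (a i + y i)) 0 := by
      have hL : ∑ i, max (s - (b i + z i)) 0 = ∑ i ∈ Ntᶜ, max (s - b i) 0 := by
        rw [← Finset.sum_add_sum_compl Nt (fun i => max (s - (b i + z i)) 0)]
        have e0 : ∑ i ∈ Nt, max (s - (b i + z i)) 0 = 0 := by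
          refine Finset.sum_eq_zero ?_
          intro i hi
          have h1 : h ≤ b i + z i := by
            rw [hstruct i hi]; exact le_max_right _ _
          exact max_eq_right (sub_nonpos.2 (le_trans hcase.le h1))
        have e2 : ∑ i ∈ Ntᶜ, max (s - (b i + z i)) 0 = ∑ i ∈ Ntᶜ, max (s - b i) 0 := by
          refine Finset.sum_congr rfl ?_
          intro i hi
          rw [hz.2.1 i (Finset.mem_compl.1 hi), add_zero]
        rw [e0, e2, zero_add]
      have hR : ∑ i ∈ Sᶜ, max (s - a i) 0 ≤ ∑ i, max (s - (a i + y i)) 0 := by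
        rw [← Finset.sum_add_sum_compl S (fun i => max (s - (a i + y i)) 0)]
        have e2 : ∑ i ∈ Sᶜ, max (s - (a i + y i)) 0 = ∑ i ∈ Sᶜ, max (s - a i) 0 := by
          refine Finset.sum_congr rfl ?_
          intro i hi
          rw [hy.2.1 i (Finset.mem_compl.1 hi), add_zero]
        rw [e2]
        have : 0 ≤ ∑ i ∈ S, max (s - (a i + y i)) 0 :=
          Finset.sum_nonneg (fun i _ => le_max_right _ _)
        linarith
      have hK : Ntᶜ.card = Sᶜ.card := by
        rw [Finset.card_compl, Finset.card_compl, hcard]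
      have hKn : Sᶜ.card ≤ n := by simpa using Finset.card_le_univ Sᶜ
      have step1 : ∑ i ∈ Ntᶜ, max (s - b i) 0
          ≤ topSum (fun i => max (s - b i) 0) Sᶜ.card := by
        exact sum_le_topSum hK
      have step2 : topSum (fun i => max (s - b i) 0) Sᶜ.card
          ≤ topSum (fun i => max (s - a i) 0) Sᶜ.card :=
        below_levels_dominate hsum hdom s hKn
      have step3 : topSum (fun i => max (s - a i) 0) Sᶜ.card = ∑ i ∈ Sᶜ, max (s - a i) 0 := by
        refine (topSum_eq_of_topset ?_).symm
        intro i hi j hj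
        have hiS : i ∈ S := by simpa using hi
        have hjS : j ∉ S := Finset.mem_compl.1 hj
        have : a j ≤ a i := htop j hjS i hiS
        exact max_le_max (by linarith) le_rfl
      calc ∑ i, max (s - (b i + z i)) 0 = ∑ i ∈ Ntᶜ, max (s - b i) 0 := hL
        _ ≤ topSum (fun i => max (s - b i) 0) Sᶜ.card := step1
        _ ≤ topSum (fun i => max (s - a i) 0) Sᶜ.card := step2
        _ = ∑ i ∈ Sᶜ, max (s - a i) 0 := step3
        _ ≤ ∑ i, max (s - (a i + y i)) 0 := hR
    have i1 := lvl_identity (fun i => b i + z i) s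
    have i2 := lvl_identity (fun i => a i + y i) s
    rw [i1, i2, hsum']
    linarith

end PolicyDev
namespace PolicyDev
open Finset

variable {n m : ℕ}

lemma allocSet_nonempty (N : Finset (Fin n)) (hN : N.Nonempty) (qt : ℝ) (hq : 0 ≤ qt) :
    (allocSet n N qt).Nonempty := by
  classical
  obtain ⟨i₀, hi₀⟩ := hN
  refine ⟨fun i => if i = i₀ then qt else 0, ?_, ?_, ?_⟩
  · intro i; by_cases h : i = i₀ <;> simp [h, hq]
  · intro i hi
    have : i ≠ i₀ := fun h => hi (h ▸ hi₀)
    simp [this]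
  · simp

lemma allocSet_isCompact (N : Finset (Fin n)) (qt : ℝ) :
    IsCompact (allocSet n N qt) := by
  classical
  have hsub : allocSet n N qt ⊆ Set.Icc (fun _ => 0) (fun _ => qt) := by
    rintro x ⟨h1, h2, h3⟩
    constructor
    · intro i; exact h1 i
    · intro i
      calc x i ≤ ∑ j, x j := Finset.single_le_sum (fun j _ => h1 j) (Finset.mem_univ i)
        _ = qt := h3
  have hclosed : IsClosed (allocSet n N qt) := by
    have e : allocSet n N qt =
        {x : Fin n → ℝ | ∀ i, 0 ≤ x i} ∩
        ((⋂ i : Fin n, {x : Fin n → ℝ | i ∉ N → x i = 0}) ∩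
          {x : Fin n → ℝ | ∑ i, x i = qt}) := by
      ext x
      simp only [allocSet, Set.mem_setOf_eq, Set.mem_inter_iff, Set.mem_iInter]
      try tauto
    rw [e]
    refine IsClosed.inter ?_ (IsClosed.inter ?_ ?_)
    · have : {x : Fin n → ℝ | ∀ i, 0 ≤ x i} = ⋂ i, {x : Fin n → ℝ | 0 ≤ x i} := by
        ext x; simp
      rw [this]
      exact isClosed_iInter (fun i => isClosed_le continuous_const (continuous_apply i))
    · refine isClosed_iInter ?_
      intro i
      by_cases hi : i ∈ N
      · have : {x : Fin n → ℝ | i ∉ N → x i = 0} = Set.univ := by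
          ext x; simp [hi]
        rw [this]; exact isClosed_univ
      · have : {x : Fin n → ℝ | i ∉ N → x i = 0} = {x : Fin n → ℝ | x i = 0} := by
          ext x; simp [hi]
        rw [this]; exact isClosed_eq (continuous_apply i) continuous_const
    · exact isClosed_eq (continuous_finset_sum _ (fun i _ => continuous_apply i))
        continuous_const
  exact (isCompact_Icc).of_isClosed_subset hclosed hsub

lemma continuous_inf' (N : Finset (Fin n)) (hN : N.Nonempty)
    (g : Fin n → (Fin n → ℝ) → ℝ) (hg : ∀ i, Continuous (g i)) :
    Continuous fun y => N.inf' hN fun i => g i y := by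
  classical
  induction N using Finset.cons_induction with
  | empty => exact absurd hN (by simp)
  | cons a s ha ih =>
    rcases s.eq_empty_or_nonempty with hs | hs
    · subst hs
      have : (fun y => (Finset.cons a ∅ ha).inf' hN fun i => g i y) = g a := by
        funext y; simp
      rw [this]; exact hg a
    · have : (fun y => (Finset.cons a s ha).inf' hN fun i => g i y)
          = fun y => min (g a y) (s.inf' hs fun i => g i y) := by
        funext y
        rw [Finset.inf'_cons]
        try rfl
      rw [this]
      exact (hg a).min (ih hs)

lemma exists_wf_step (N : Finset (Fin n)) (hN : N.Nonempty) (qt : ℝ) (hq : 0 ≤ qt)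
    (b : Fin n → ℝ) :
    ∃ z ∈ allocSet n N qt, ∀ y ∈ allocSet n N qt,
      N.inf' hN (fun i => y i + b i) ≤ N.inf' hN (fun i => z i + b i) := by
  have hcont : Continuous fun y : Fin n → ℝ => N.inf' hN fun i => y i + b i :=
    continuous_inf' N hN _ (fun i => (continuous_apply i).add continuous_const)
  obtain ⟨z, hz, hzmax⟩ := (allocSet_isCompact N qt).exists_isMaxOn
    (allocSet_nonempty N hN qt hq) hcont.continuousOn
  exact ⟨z, hz, fun y hy => hzmax hy⟩

noncomputable def wfStep (N : Finset (Fin n)) (hN : N.Nonempty) (qt : ℝ) (hq : 0 ≤ qt)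
    (b : Fin n → ℝ) : Fin n → ℝ :=
  (exists_wf_step N hN qt hq b).choose

lemma wfStep_spec (N : Finset (Fin n)) (hN : N.Nonempty) (qt : ℝ) (hq : 0 ≤ qt)
    (b : Fin n → ℝ) :
    wfStep N hN qt hq b ∈ allocSet n N qt ∧ ∀ y ∈ allocSet n N qt,
      N.inf' hN (fun i => y i + b i) ≤ N.inf' hN (fun i => wfStep N hN qt hq b i + b i) := by
  have h := (exists_wf_step N hN qt hq b).choose_spec
  exact ⟨h.1, h.2⟩

noncomputable def wfPre (E : ReqSeq n m) : ℕ → ℕ → (Fin n → ℝ)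
  | 0 => fun _ _ => 0
  | (T+1) => fun r =>
      if r < T then wfPre E T r
      else if r = T then
        (if hT : T < m then
          wfStep (E.N ⟨T, hT⟩) (E.N_nonempty _) (E.q ⟨T, hT⟩) (E.q_pos _).le
            (fun i => ∑ s ∈ Finset.range T, wfPre E T s i)
        else fun _ => 0)
      else fun _ => 0

noncomputable def wfX (E : ReqSeq n m) (r : ℕ) : Fin n → ℝ := wfPre E (r+1) r

lemma wfPre_eq (E : ReqSeq n m) : ∀ T r, r < T → wfPre E T r = wfX E r := by
  intro T
  induction T with
  | zero => intro r hr; omega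
  | succ T ih =>
    intro r hr
    rcases Nat.lt_or_ge r T with h | h
    · have : wfPre E (T+1) r = wfPre E T r := by
        simp [wfPre, h]
      rw [this, ih r h]
    · have hrT : r = T := by omega
      subst hrT
      rfl

noncomputable def prevW (E : ReqSeq n m) (T : ℕ) : Fin n → ℝ :=
  fun i => ∑ s ∈ Finset.range T, wfX E s i

lemma wfX_eq (E : ReqSeq n m) (T : ℕ) (hT : T < m) :
    wfX E T = wfStep (E.N ⟨T, hT⟩) (E.N_nonempty _) (E.q ⟨T, hT⟩) (E.q_pos _).le
      (prevW E T) := by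
  have h2 : (fun i => ∑ s ∈ Finset.range T, wfPre E T s i) = prevW E T := by
    funext i
    unfold prevW
    refine Finset.sum_congr rfl ?_
    intro s hs
    rw [wfPre_eq E T s (Finset.mem_range.1 hs)]
  show wfPre E (T+1) T = _
  simp only [wfPre]
  simp [hT, h2]

lemma sum_filter_lt_eq_range (t : Fin m) (f : ℕ → ℝ) :
    ∑ s ∈ Finset.univ.filter (fun s : Fin m => s < t), f s.val
      = ∑ r ∈ Finset.range t.val, f r := by
  refine Finset.sum_bij' (fun (s : Fin m) _ => s.val)
    (fun (r : ℕ) hr => (⟨r, lt_trans (Finset.mem_range.1 hr) t.isLt⟩ : Fin m)) ?_ ?_ ?_ ?_ ?_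
  · intro s hs
    have : s < t := (Finset.mem_filter.1 hs).2
    exact Finset.mem_range.2 this
  · intro r hr
    refine Finset.mem_filter.2 ⟨Finset.mem_univ _, ?_⟩
    exact Fin.mk_lt_of_lt_val (Finset.mem_range.1 hr)
  · intro s hs; rfl
  · intro r hr; rfl
  · intro s hs; rfl

lemma prevLoad_eq_prevW (E : ReqSeq n m) (t : Fin m) :
    prevLoad (fun s : Fin m => wfX E s.val) t = prevW E t.val := by
  funext i
  unfold prevLoad prevW
  exact sum_filter_lt_eq_range t (fun r => wfX E r i)

lemma exists_isWFAlloc (E : ReqSeq n m) : ∃ x, IsWFAlloc E x := by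
  refine ⟨fun t => wfX E t.val, ?_, ?_⟩
  · intro t
    show wfX E t.val ∈ allocSet n (E.N t) (E.q t)
    rw [wfX_eq E t.val t.isLt]
    exact (wfStep_spec (E.N ⟨t.val, t.isLt⟩) (E.N_nonempty _) (E.q ⟨t.val, t.isLt⟩)
      (E.q_pos _).le (prevW E t.val)).1
  · intro t y hy
    unfold reqMinOn
    rw [prevLoad_eq_prevW]
    show ((E.N t).inf' _ fun i => y i + prevW E t.val i)
        ≤ (E.N t).inf' _ fun i => wfX E t.val i + prevW E t.val i
    rw [wfX_eq E t.val t.isLt]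
    exact (wfStep_spec (E.N ⟨t.val, t.isLt⟩) (E.N_nonempty _) (E.q ⟨t.val, t.isLt⟩)
      (E.q_pos _).le (prevW E t.val)).2 y hy

end PolicyDev
namespace PolicyDev
open Finset

variable {n m : ℕ}

lemma wfmax_struct (Nt : Finset (Fin n)) (hne : Nt.Nonempty) (qt : ℝ) (b z : Fin n → ℝ)
    (hzmem : z ∈ allocSet n Nt qt)
    (hopt : ∀ y ∈ allocSet n Nt qt,
      Nt.inf' hne (fun j => y j + b j) ≤ Nt.inf' hne (fun j => z j + b j)) :
    ∀ i ∈ Nt, z i + b i = max (b i) (Nt.inf' hne (fun j => z j + b j)) := by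
  classical
  set h := Nt.inf' hne (fun j => z j + b j) with hh
  have hd_ge : ∀ i ∈ Nt, h ≤ z i + b i := fun i hi =>
    Finset.inf'_le (fun j => z j + b j) hi
  intro i hi
  by_cases hz0 : z i = 0
  · have hhb : h ≤ b i := by
      have := hd_ge i hi
      rw [hz0] at this
      linarith
    rw [hz0, zero_add, max_eq_left hhb]
  · have hzpos : 0 < z i := lt_of_le_of_ne (hzmem.1 i) (Ne.symm hz0)
    suffices hdi : z i + b i = h by
      have hbh : b i ≤ h := by linarith
      rw [hdi, max_eq_right hbh]
    refine le_antisymm ?_ (hd_ge i hi)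
    by_contra hlt
    push_neg at hlt
    set M := Nt.filter (fun j => z j + b j ≤ h) with hM
    have hMne : M.Nonempty := by
      obtain ⟨j₀, hj₀, hval⟩ := Finset.exists_mem_eq_inf' hne (fun j => z j + b j)
      exact ⟨j₀, Finset.mem_filter.2 ⟨hj₀, le_of_eq hval.symm⟩⟩
    have hiM : i ∉ M := fun hmem =>
      absurd ((Finset.mem_filter.1 hmem).2) (not_le.2 hlt)
    have hiR : i ∈ Nt \ M := Finset.mem_sdiff.2 ⟨hi, hiM⟩
    have hRne : (Nt \ M).Nonempty := ⟨i, hiR⟩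
    obtain ⟨δ, hδle, hδpos⟩ : ∃ δ : ℝ, (∀ j ∈ Nt \ M, δ ≤ z j + b j - h) ∧ 0 < δ := by
      refine ⟨(Nt \ M).inf' hRne (fun j => z j + b j - h),
        fun j hj => Finset.inf'_le _ hj, ?_⟩
      rw [Finset.lt_inf'_iff]
      intro j hj
      obtain ⟨hjN, hjM⟩ := Finset.mem_sdiff.1 hj
      have h2 : ¬ z j + b j ≤ h := fun hc => hjM (Finset.mem_filter.2 ⟨hjN, hc⟩)
      linarith [not_le.1 h2]
    obtain ⟨ε, hεz, hεδ, hεpos⟩ : ∃ ε : ℝ, ε ≤ z i ∧ ε ≤ δ / 2 ∧ 0 < ε :=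
      ⟨min (z i) (δ / 2), min_le_left _ _, min_le_right _ _,
        lt_min hzpos (by linarith)⟩
    have hMcard : (0:ℝ) < M.card := by exact_mod_cast Finset.card_pos.2 hMne
    set z' := fun j => z j + (if j ∈ M then ε / M.card else 0) - (if j = i then ε else 0)
      with hz'
    have hz'mem : z' ∈ allocSet n Nt qt := by
      refine ⟨?_, ?_, ?_⟩
      · intro j
        simp only [hz']
        by_cases hji : j = i
        · subst hji
          rw [if_pos rfl, if_neg hiM, add_zero]
          linarith
        · rw [if_neg hji, sub_zero]
          by_cases hjM : j ∈ M
          · rw [if_pos hjM]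
            have h0 := hzmem.1 j
            have : 0 ≤ ε / M.card := le_of_lt (div_pos hεpos hMcard)
            linarith
          · rw [if_neg hjM, add_zero]
            exact hzmem.1 j
      · intro j hj
        have hji : j ≠ i := fun hc => hj (hc ▸ hi)
        have hjM : j ∉ M := fun hc => hj (Finset.mem_filter.1 hc).1
        simp only [hz']
        rw [if_neg hji, if_neg hjM, add_zero, sub_zero]
        exact hzmem.2.1 j hj
      · simp only [hz']
        rw [Finset.sum_sub_distrib, Finset.sum_add_distrib]
        have e1 : ∑ j, (if j ∈ M then ε / M.card else 0) = ε := by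
          rw [Finset.sum_ite_mem, Finset.univ_inter, Finset.sum_const, nsmul_eq_mul]
          field_simp
        have e2 : ∑ j : Fin n, (if j = i then ε else 0) = ε := by
          simp [Finset.sum_ite_eq']
        rw [e1, e2, hzmem.2.2]
        ring
    have hgt : h < Nt.inf' hne (fun j => z' j + b j) := by
      rw [Finset.lt_inf'_iff]
      intro j hj
      simp only [hz']
      by_cases hji : j = i
      · subst hji
        rw [if_pos rfl, if_neg hiM, add_zero]
        have h1 : δ ≤ z j + b j - h := hδle j hiR
        linarith
      · rw [if_neg hji, sub_zero]
        by_cases hjM : j ∈ M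
        · rw [if_pos hjM]
          have h1 : h ≤ z j + b j := hd_ge j hj
          have hεM : 0 < ε / M.card := div_pos hεpos hMcard
          linarith
        · rw [if_neg hjM, add_zero]
          have hjR : j ∈ Nt \ M := Finset.mem_sdiff.2 ⟨hj, hjM⟩
          have h1 : δ ≤ z j + b j - h := hδle j hjR
          linarith
    have := hopt z' hz'mem
    linarith

lemma wf_struct (E : ReqSeq n m) (x : Fin m → Fin n → ℝ) (hx : IsWFAlloc E x) (t : Fin m) :
    ∀ i ∈ E.N t, x t i + prevLoad x t i
      = max (prevLoad x t i)
          ((E.N t).inf' (E.N_nonempty t) (fun j => x t j + prevLoad x t j)) := by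
  refine wfmax_struct (E.N t) (E.N_nonempty t) (E.q t) (prevLoad x t) (x t) (hx.1 t) ?_
  intro y hy
  exact hx.2 t y hy

end PolicyDev
namespace PolicyDev
open Finset MeasureTheory

variable {n m : ℕ}

lemma measurable_detpolicy (f : DetPolicy n → ℝ) : Measurable f := fun _ _ =>
  MeasurableSpace.measurableSet_top

lemma detAlloc_mem_ae (A : RandPolicy n) (E : ReqSeq n m) (t : Fin m) :
    ∀ᵐ p ∂A.μ, detAlloc p E t ∈ allocSet n (E.N t) (E.q t) := by
  filter_upwards [A.valid] with p hp
  exact hp _ _ _ (E.N_nonempty t) (E.q_pos t)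

lemma integrable_detAlloc (A : RandPolicy n) (E : ReqSeq n m) (t : Fin m) (i : Fin n) :
    Integrable (fun p => detAlloc p E t i) A.μ := by
  haveI := A.prob
  refine (integrable_const (E.q t)).mono'
    ((measurable_detpolicy _).aestronglyMeasurable) ?_
  filter_upwards [detAlloc_mem_ae A E t] with p hp
  have h0 := hp.1 i
  have hupper : detAlloc p E t i ≤ E.q t := by
    rw [← hp.2.2]
    exact Finset.single_le_sum (fun j _ => hp.1 j) (Finset.mem_univ i)
  rw [Real.norm_eq_abs, abs_of_nonneg h0]
  exact hupper

lemma expAlloc_mem (A : RandPolicy n) (E : ReqSeq n m) (t : Fin m) :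
    (fun i => ∫ p, detAlloc p E t i ∂A.μ) ∈ allocSet n (E.N t) (E.q t) := by
  haveI := A.prob
  refine ⟨?_, ?_, ?_⟩
  · intro i
    refine integral_nonneg_of_ae ?_
    filter_upwards [detAlloc_mem_ae A E t] with p hp
    exact hp.1 i
  · intro i hi
    show ∫ p, detAlloc p E t i ∂A.μ = 0
    have h0 : ∀ᵐ p ∂A.μ, detAlloc p E t i = (fun _ => (0:ℝ)) p := by
      filter_upwards [detAlloc_mem_ae A E t] with p hp
      exact hp.2.1 i hi
    rw [integral_congr_ae h0]
    simp
  · show ∑ i, ∫ p, detAlloc p E t i ∂A.μ = E.q t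
    rw [← integral_finset_sum _ (fun i _ => integrable_detAlloc A E t i)]
    have h0 : ∀ᵐ p ∂A.μ, ∑ i, detAlloc p E t i = (fun _ => E.q t) p := by
      filter_upwards [detAlloc_mem_ae A E t] with p hp
      exact hp.2.2
    rw [integral_congr_ae h0]
    simp

lemma expLoad_apply (A : RandPolicy n) (E : ReqSeq n m) (i : Fin n) :
    expLoad A E i = ∑ t, ∫ p, detAlloc p E t i ∂A.μ := by
  unfold expLoad
  have hrw : (fun p => detLoad p E i) = fun p => ∑ t, detAlloc p E t i := by
    funext p
    unfold detLoad
    simp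
  rw [hrw, integral_finset_sum _ (fun t _ => integrable_detAlloc A E t i)]

lemma hist_congr (A : DetPolicy n) (E₁ E₂ : ReqSeq n m) (k : ℕ)
    (hN : ∀ s : Fin m, s.val < k → E₁.N s = E₂.N s)
    (hq : ∀ s : Fin m, s.val < k → E₁.q s = E₂.q s) :
    hist A E₁ k = hist A E₂ k := by
  induction k with
  | zero => rfl
  | succ k ih =>
    have ihk : hist A E₁ k = hist A E₂ k :=
      ih (fun s hs => hN s (by omega)) (fun s hs => hq s (by omega))
    unfold hist
    by_cases hk : k < m
    · rw [dif_pos hk, dif_pos hk, ihk,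
        hN ⟨k, hk⟩ (Nat.lt_succ_self k), hq ⟨k, hk⟩ (Nat.lt_succ_self k)]
    · rw [dif_neg hk, dif_neg hk, ihk]

lemma detAlloc_congr (A : DetPolicy n) (E₁ E₂ : ReqSeq n m) (t : Fin m)
    (hN : ∀ s : Fin m, s.val ≤ t.val → E₁.N s = E₂.N s)
    (hq : ∀ s : Fin m, s.val ≤ t.val → E₁.q s = E₂.q s) :
    detAlloc A E₁ t = detAlloc A E₂ t := by
  unfold detAlloc
  rw [hist_congr A E₁ E₂ t.val (fun s hs => hN s hs.le) (fun s hs => hq s hs.le),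
    hN t le_rfl, hq t le_rfl]

/-- A maximizing `k`-subset of `P` under weight `w`, which is a top set within `P`. -/
lemma exists_topset_in (P : Finset (Fin n)) (w : Fin n → ℝ) {k : ℕ} (hk : k ≤ P.card) :
    ∃ S, S ⊆ P ∧ S.card = k ∧ ∀ i ∈ P, i ∉ S → ∀ j ∈ S, w i ≤ w j := by
  classical
  obtain ⟨S₀, hS₀P, hS₀⟩ := Finset.exists_subset_card_eq hk
  have hne : (P.powersetCard k).Nonempty :=
    ⟨S₀, Finset.mem_powersetCard.2 ⟨hS₀P, hS₀⟩⟩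
  obtain ⟨S, hSmem, hSmax⟩ := Finset.exists_max_image _ (fun s => ∑ i ∈ s, w i) hne
  obtain ⟨hSP, hScard⟩ := Finset.mem_powersetCard.1 hSmem
  refine ⟨S, hSP, hScard, ?_⟩
  intro i hiP hiS j hjS
  by_contra hlt
  push_neg at hlt
  have hiT : i ∉ S.erase j := fun h => hiS (Finset.mem_of_mem_erase h)
  have hsub : insert i (S.erase j) ⊆ P := by
    intro x hx
    rcases Finset.mem_insert.1 hx with hx | hx
    · exact hx ▸ hiP
    · exact hSP (Finset.mem_of_mem_erase hx)
  have hcard' : (insert i (S.erase j)).card = k := by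
    rw [Finset.card_insert_of_notMem hiT, Finset.card_erase_of_mem hjS, hScard]
    have : 1 ≤ k := by rw [← hScard]; exact Finset.card_pos.2 ⟨j, hjS⟩
    omega
  have hmem' : insert i (S.erase j) ∈ P.powersetCard k :=
    Finset.mem_powersetCard.2 ⟨hsub, hcard'⟩
  have hle := hSmax _ hmem'
  rw [Finset.sum_insert hiT, Finset.sum_erase_eq_sub hjS] at hle
  linarith

noncomputable def chooseTop (P : Finset (Fin n)) (k : ℕ) (w : Fin n → ℝ) :
    Finset (Fin n) :=
  if hk : k ≤ P.card then (exists_topset_in P w hk).choose else P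

lemma chooseTop_spec (P : Finset (Fin n)) (k : ℕ) (w : Fin n → ℝ) (hk : k ≤ P.card) :
    chooseTop P k w ⊆ P ∧ (chooseTop P k w).card = k ∧
      ∀ i ∈ P, i ∉ chooseTop P k w → ∀ j ∈ chooseTop P k w, w i ≤ w j := by
  unfold chooseTop
  rw [dif_pos hk]
  exact (exists_topset_in P w hk).choose_spec

/-- sizes of the nested sequence -/
def szfun (Etil : ReqSeq n m) : ℕ → ℕ := fun T =>
  if h : T < m then (Etil.N ⟨T, h⟩).card else 0

def mkSeq (Etil : ReqSeq n m) (hn : 0 < n) (NNf : ℕ → Finset (Fin n)) : ReqSeq n m where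
  N := fun s => if (NNf s.val).Nonempty then NNf s.val else Finset.univ
  q := Etil.q
  N_nonempty := fun s => by
    show (if (NNf s.val).Nonempty then NNf s.val else Finset.univ).Nonempty
    split
    · assumption
    · exact ⟨⟨0, hn⟩, Finset.mem_univ _⟩
  q_pos := Etil.q_pos

/-- expected cumulative load of policy `A` on `E'` before step `T` -/
noncomputable def advLoad (A : RandPolicy n) (E' : ReqSeq n m) (T : ℕ) : Fin n → ℝ :=
  fun i => ∑ s ∈ Finset.univ.filter (fun s : Fin m => s.val < T),
    ∫ p, detAlloc p E' s i ∂A.μ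

noncomputable def advN (A : RandPolicy n) (Etil : ReqSeq n m) (hn : 0 < n) :
    ℕ → ℕ → Finset (Fin n)
  | 0, _ => Finset.univ
  | (T+1), r =>
      if r < T then advN A Etil hn T r
      else if r = T then
        chooseTop (if T = 0 then Finset.univ else advN A Etil hn T (T-1)) (szfun Etil T)
          (advLoad A (mkSeq Etil hn (advN A Etil hn T)) T)
      else Finset.univ

noncomputable def advNN (A : RandPolicy n) (Etil : ReqSeq n m) (hn : 0 < n)
    (r : ℕ) : Finset (Fin n) := advN A Etil hn (r+1) r

noncomputable def Eadv (A : RandPolicy n) (Etil : ReqSeq n m) (hn : 0 < n) : ReqSeq n m :=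
  mkSeq Etil hn (advNN A Etil hn)

lemma advN_eq (A : RandPolicy n) (Etil : ReqSeq n m) (hn : 0 < n) :
    ∀ T r, r < T → advN A Etil hn T r = advNN A Etil hn r := by
  intro T
  induction T with
  | zero => intro r hr; omega
  | succ T ih =>
    intro r hr
    rcases Nat.lt_or_ge r T with h | h
    · have e : advN A Etil hn (T+1) r = advN A Etil hn T r := by
        simp [advN, h]
      rw [e, ih r h]
    · have hrT : r = T := by omega
      subst hrT
      rfl

end PolicyDev
namespace PolicyDev
open Finset MeasureTheory

variable {n m : ℕ}

section Adv

variable (A : RandPolicy n) (Etil : ReqSeq n m) (hn : 0 < n) (hnest : IsNested Etil)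

lemma advLoad_prefix (T : ℕ) :
    advLoad A (mkSeq Etil hn (advN A Etil hn T)) T = advLoad A (Eadv A Etil hn) T := by
  unfold advLoad
  funext i
  refine Finset.sum_congr rfl ?_
  intro s hs
  have hsT : s.val < T := (Finset.mem_filter.1 hs).2
  have hdet : ∀ p : DetPolicy n,
      detAlloc p (mkSeq Etil hn (advN A Etil hn T)) s = detAlloc p (Eadv A Etil hn) s := by
    intro p
    refine detAlloc_congr p _ _ s ?_ (fun r hr => rfl)
    intro r hr
    show (if (advN A Etil hn T r.val).Nonempty then advN A Etil hn T r.val else Finset.univ)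
      = (if (advNN A Etil hn r.val).Nonempty then advNN A Etil hn r.val else Finset.univ)
    rw [advN_eq A Etil hn T r.val (by omega)]
  rw [show (fun p => detAlloc p (mkSeq Etil hn (advN A Etil hn T)) s i)
      = fun p => detAlloc p (Eadv A Etil hn) s i from funext fun p => by rw [hdet p]]

lemma advNN_eq2 (T : ℕ) :
    advNN A Etil hn T = chooseTop (if T = 0 then Finset.univ else advNN A Etil hn (T-1))
      (szfun Etil T) (advLoad A (Eadv A Etil hn) T) := by
  show advN A Etil hn (T+1) T = _
  simp only [advN, lt_irrefl, if_false, if_true]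
  rw [advLoad_prefix]
  by_cases hT0 : T = 0
  · subst hT0; rfl
  · rw [if_neg hT0, if_neg hT0, advN_eq A Etil hn T (T-1) (by omega)]

include hnest in
lemma sz_le_card_prev : ∀ T, T < m →
    szfun Etil T ≤ (if T = 0 then (Finset.univ : Finset (Fin n)) else advNN A Etil hn (T-1)).card ∧
    (advNN A Etil hn T).card = szfun Etil T := by
  intro T
  induction T with
  | zero =>
    intro h0
    have hk : szfun Etil 0 ≤ (if (0:ℕ) = 0 then (Finset.univ : Finset (Fin n))
        else advNN A Etil hn (0-1)).card := by
      rw [if_pos rfl]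
      unfold szfun
      rw [dif_pos h0]
      exact Finset.card_le_univ _
    refine ⟨hk, ?_⟩
    rw [advNN_eq2]
    exact (chooseTop_spec _ _ _ hk).2.1
  | succ T ih =>
    intro hT1
    have hTm : T < m := by omega
    have hcard := (ih hTm).2
    have hle : szfun Etil (T+1) ≤ szfun Etil T := by
      unfold szfun
      rw [dif_pos hT1, dif_pos hTm]
      refine Finset.card_le_card ?_
      exact hnest ⟨T, hTm⟩ ⟨T+1, hT1⟩ (by simp [Fin.le_def])
    have hk : szfun Etil (T+1) ≤ (if T+1 = 0 then (Finset.univ : Finset (Fin n))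
        else advNN A Etil hn (T+1-1)).card := by
      rw [if_neg (Nat.succ_ne_zero T), Nat.add_sub_cancel, hcard]
      exact hle
    refine ⟨hk, ?_⟩
    rw [advNN_eq2]
    exact (chooseTop_spec _ _ _ hk).2.1

include hnest in
lemma advNN_spec (T : ℕ) (hT : T < m) :
    advNN A Etil hn T ⊆ (if T = 0 then Finset.univ else advNN A Etil hn (T-1)) ∧
    (advNN A Etil hn T).card = szfun Etil T ∧
    ∀ i ∈ (if T = 0 then Finset.univ else advNN A Etil hn (T-1)),
      i ∉ advNN A Etil hn T → ∀ j ∈ advNN A Etil hn T,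
        advLoad A (Eadv A Etil hn) T i ≤ advLoad A (Eadv A Etil hn) T j := by
  have hk := (sz_le_card_prev A Etil hn hnest T hT).1
  rw [advNN_eq2]
  exact chooseTop_spec _ _ _ hk

include hnest in
lemma advNN_nonempty (T : ℕ) (hT : T < m) : (advNN A Etil hn T).Nonempty := by
  rw [← Finset.card_pos, (sz_le_card_prev A Etil hn hnest T hT).2]
  unfold szfun
  rw [dif_pos hT]
  exact Finset.card_pos.2 (Etil.N_nonempty _)

include hnest in
lemma Eadv_N (t : Fin m) :
    (Eadv A Etil hn).N t = advNN A Etil hn t.val := by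
  show (if (advNN A Etil hn t.val).Nonempty then advNN A Etil hn t.val else Finset.univ) = _
  rw [if_pos (advNN_nonempty A Etil hn hnest t.val t.isLt)]

include hnest in
lemma advNN_succ_subset (T : ℕ) (hT1 : T + 1 < m) :
    advNN A Etil hn (T+1) ⊆ advNN A Etil hn T := by
  have h := (advNN_spec A Etil hn hnest (T+1) hT1).1
  rwa [if_neg (Nat.succ_ne_zero T), Nat.add_sub_cancel] at h

include hnest in
lemma advNN_mono : ∀ T, T < m → ∀ s ≤ T, advNN A Etil hn T ⊆ advNN A Etil hn s := by
  intro T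
  induction T with
  | zero =>
    intro _ s hs
    have hs0 : s = 0 := by omega
    subst hs0
    exact subset_rfl
  | succ T ih =>
    intro hT1 s hs
    rcases Nat.eq_or_lt_of_le hs with h | h
    · subst h; exact subset_rfl
    · exact (advNN_succ_subset A Etil hn hnest T hT1).trans
        (ih (by omega) s (by omega))

include hnest in
lemma Eadv_nested : IsNested (Eadv A Etil hn) := by
  intro s t hst
  rw [Eadv_N A Etil hn hnest, Eadv_N A Etil hn hnest]
  exact advNN_mono A Etil hn hnest t.val t.isLt s.val hst

lemma filter_lt_succ (T : ℕ) (hT : T < m) :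
    (Finset.univ.filter (fun s : Fin m => s.val < T+1))
      = insert ⟨T,hT⟩ (Finset.univ.filter (fun s : Fin m => s.val < T)) := by
  ext s
  simp only [Finset.mem_filter, Finset.mem_univ, true_and, Finset.mem_insert]
  constructor
  · intro h
    rcases Nat.lt_succ_iff_lt_or_eq.1 h with h | h
    · exact Or.inr h
    · exact Or.inl (Fin.ext h)
  · rintro (rfl | h)
    · exact Nat.lt_succ_self T
    · omega

lemma advLoad_succ_apply (T : ℕ) (hT : T < m) (i : Fin n) :
    advLoad A (Eadv A Etil hn) (T+1) i = advLoad A (Eadv A Etil hn) T i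
      + ∫ p, detAlloc p (Eadv A Etil hn) ⟨T,hT⟩ i ∂A.μ := by
  unfold advLoad
  rw [filter_lt_succ T hT, Finset.sum_insert (by simp)]
  ring

include hnest in
lemma ybar_mem (T : ℕ) (hT : T < m) :
    (fun i => ∫ p, detAlloc p (Eadv A Etil hn) ⟨T,hT⟩ i ∂A.μ)
      ∈ allocSet n (advNN A Etil hn T) (Etil.q ⟨T,hT⟩) := by
  have h := expAlloc_mem A (Eadv A Etil hn) ⟨T,hT⟩
  rwa [Eadv_N A Etil hn hnest ⟨T,hT⟩] at h

lemma advLoad_zero (i : Fin n) : advLoad A (Eadv A Etil hn) 0 i = 0 := by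
  unfold advLoad
  rw [Finset.sum_eq_zero]
  intro s hs
  exact absurd ((Finset.mem_filter.1 hs).2) (by omega)

include hnest in
lemma G_inv : ∀ T, T < m → ∀ i, i ∉ advNN A Etil hn T → ∀ j ∈ advNN A Etil hn T,
    advLoad A (Eadv A Etil hn) T i ≤ advLoad A (Eadv A Etil hn) T j := by
  intro T
  induction T with
  | zero =>
    intro h0 i hi j hj
    rw [advLoad_zero, advLoad_zero]
  | succ T ih =>
    intro hT1 i hi j hj
    have hTm : T < m := by omega
    have hsub1 := advNN_succ_subset A Etil hn hnest T hT1
    by_cases hiP : i ∈ advNN A Etil hn T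
    · have h := (advNN_spec A Etil hn hnest (T+1) hT1).2.2
      rw [if_neg (Nat.succ_ne_zero T), Nat.add_sub_cancel] at h
      exact h i hiP hi j hj
    · have h1 := ih hTm i hiP j (hsub1 hj)
      have h2 : ∫ p, detAlloc p (Eadv A Etil hn) ⟨T,hTm⟩ i ∂A.μ = 0 :=
        (ybar_mem A Etil hn hnest T hTm).2.1 i hiP
      have h3 : 0 ≤ ∫ p, detAlloc p (Eadv A Etil hn) ⟨T,hTm⟩ j ∂A.μ :=
        (ybar_mem A Etil hn hnest T hTm).1 j
      rw [advLoad_succ_apply A Etil hn T hTm i, advLoad_succ_apply A Etil hn T hTm j, h2]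
      linarith

/-- the WF cumulative load before step `T` -/
def bload (x : Fin m → Fin n → ℝ) (T : ℕ) : Fin n → ℝ :=
  fun i => ∑ s ∈ Finset.univ.filter (fun s : Fin m => s.val < T), x s i

lemma bload_zero (x : Fin m → Fin n → ℝ) (i : Fin n) : bload x 0 i = 0 := by
  unfold bload
  rw [Finset.sum_eq_zero]
  intro s hs
  exact absurd ((Finset.mem_filter.1 hs).2) (by omega)

lemma bload_succ_apply (x : Fin m → Fin n → ℝ) (T : ℕ) (hT : T < m) (i : Fin n) :
    bload x (T+1) i = bload x T i + x ⟨T,hT⟩ i := by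
  unfold bload
  rw [filter_lt_succ T hT, Finset.sum_insert (by simp)]
  ring

lemma bload_eq_prevLoad (x : Fin m → Fin n → ℝ) (t : Fin m) :
    prevLoad x t = bload x t.val := by
  funext i
  unfold prevLoad bload
  refine Finset.sum_congr ?_ (fun s _ => rfl)
  refine Finset.filter_congr ?_
  intro s _
  rw [Fin.lt_def]

include hnest in
lemma main_inv (x : Fin m → Fin n → ℝ) (hx : IsWFAlloc Etil x) : ∀ T ≤ m,
    (∑ i, advLoad A (Eadv A Etil hn) T i = ∑ i, bload x T i) ∧
    ∀ u ≤ n, topSum (bload x T) u ≤ topSum (advLoad A (Eadv A Etil hn) T) u := by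
  intro T
  induction T with
  | zero =>
    intro _
    have e1 : advLoad A (Eadv A Etil hn) 0 = bload x 0 := by
      funext i
      rw [advLoad_zero, bload_zero]
    rw [e1]
    exact ⟨rfl, fun u _ => le_rfl⟩
  | succ T ih =>
    intro hT1
    have hTm : T < m := by omega
    obtain ⟨hsum, hdom⟩ := ih (by omega)
    set t : Fin m := ⟨T, hTm⟩ with ht
    have hcard : (advNN A Etil hn T).card = (Etil.N t).card := by
      rw [(sz_le_card_prev A Etil hn hnest T hTm).2]
      unfold szfun
      rw [dif_pos hTm]
    have hstruct0 := wf_struct Etil x hx t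
    rw [bload_eq_prevLoad] at hstruct0
    have hstruct : ∀ i ∈ Etil.N t, bload x T i + x t i
        = max (bload x T i)
          ((Etil.N t).inf' (Etil.N_nonempty t) (fun j => bload x T j + x t j)) := by
      intro i hi
      have hcomm : (fun j => bload x (t:Fin m).val j + x t j)
          = (fun j => x t j + bload x (t:Fin m).val j) := funext fun j => add_comm _ _
      have := hstruct0 i hi
      rw [add_comm (bload x T i) (x t i)]
      show x t i + bload x t.val i = max (bload x t.val i) _
      rw [hcomm]
      exact this
    have hstep := step_dom (advLoad A (Eadv A Etil hn) T) (bload x T)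
      (fun i => ∫ p, detAlloc p (Eadv A Etil hn) t i ∂A.μ) (x t)
      (advNN A Etil hn T) (Etil.N t) (Etil.q t)
      hsum hdom
      (G_inv A Etil hn hnest T hTm)
      hcard
      (ybar_mem A Etil hn hnest T hTm)
      (hx.1 t)
      (Etil.N_nonempty t)
      hstruct
    have ea : (fun i => advLoad A (Eadv A Etil hn) T i
        + ∫ p, detAlloc p (Eadv A Etil hn) t i ∂A.μ) = advLoad A (Eadv A Etil hn) (T+1) := by
      funext i
      rw [advLoad_succ_apply A Etil hn T hTm i]
    have eb : (fun i => bload x T i + x t i) = bload x (T+1) := by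
      funext i
      rw [bload_succ_apply x T hTm i]
    rw [ea, eb] at hstep
    exact hstep

lemma filter_lt_m : (Finset.univ.filter (fun s : Fin m => s.val < m)) = Finset.univ := by
  ext s
  simp [s.isLt]

include hnest in
lemma majorizes_exp_wf : Majorizes (expLoad A (Eadv A Etil hn)) (wfLoad Etil) := by
  have hex : ∃ x, IsWFAlloc Etil x := exists_isWFAlloc Etil
  have hwf : wfLoad Etil = ∑ t, hex.choose t := by
    unfold wfLoad
    rw [dif_pos hex]
  have hinv := main_inv A Etil hn hnest hex.choose hex.choose_spec m le_rfl
  have ha : advLoad A (Eadv A Etil hn) m = expLoad A (Eadv A Etil hn) := by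
    funext i
    unfold advLoad
    rw [filter_lt_m, expLoad_apply]
  have hb : bload hex.choose m = wfLoad Etil := by
    funext i
    unfold bload
    rw [filter_lt_m, hwf]
    simp
  rw [ha, hb] at hinv
  exact ⟨hinv.1, hinv.2⟩

end Adv
end PolicyDev
namespace PolicyDev
open Finset

variable {n : ℕ}

lemma image_swap_of_mem {X : Finset (Fin n)} {x y : Fin n} (hx : x ∈ X) (hy : y ∉ X) :
    X.image (Equiv.swap x y) = insert y (X.erase x) := by
  classical
  ext a
  simp only [Finset.mem_image, Finset.mem_insert, Finset.mem_erase]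
  constructor
  · rintro ⟨b, hb, rfl⟩
    by_cases hbx : b = x
    · subst hbx
      left
      exact Equiv.swap_apply_left b y
    · have hby : b ≠ y := fun h => hy (h ▸ hb)
      rw [Equiv.swap_apply_of_ne_of_ne hbx hby]
      exact Or.inr ⟨hbx, hb⟩
  · rintro (rfl | ⟨hax, haX⟩)
    · exact ⟨x, hx, Equiv.swap_apply_left x a⟩
    · have hay : a ≠ y := fun h => hy (h ▸ haX)
      exact ⟨a, haX, Equiv.swap_apply_of_ne_of_ne hax hay⟩

lemma exists_perm_subsets (W : Finset (Fin n)) :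
    ∀ d (X Y : Finset (Fin n)), X ⊆ W → Y ⊆ W → X.card = Y.card → (X \ Y).card = d →
    ∃ σ : Equiv.Perm (Fin n), (∀ a ∉ W, σ a = a) ∧ X.image σ = Y := by
  intro d
  induction d with
  | zero =>
    intro X Y hXW hYW hcard hd
    have hsub : X ⊆ Y := by
      intro a ha
      by_contra hna
      have : a ∈ X \ Y := Finset.mem_sdiff.2 ⟨ha, hna⟩
      have := Finset.card_pos.2 ⟨a, this⟩
      omega
    have hXY : X = Y := Finset.eq_of_subset_of_card_le hsub (le_of_eq hcard.symm)
    exact ⟨1, fun a _ => rfl, by simp [hXY]⟩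
  | succ d ih =>
    intro X Y hXW hYW hcard hd
    have hXYne : (X \ Y).Nonempty := Finset.card_pos.1 (by omega)
    obtain ⟨x, hxmem⟩ := hXYne
    obtain ⟨hxX, hxY⟩ := Finset.mem_sdiff.1 hxmem
    have hYXcard : (Y \ X).card = d + 1 := by
      rw [Finset.card_sdiff_comm hcard.symm, hd]
    have hYXne : (Y \ X).Nonempty := Finset.card_pos.1 (by omega)
    obtain ⟨y, hymem⟩ := hYXne
    obtain ⟨hyY, hyX⟩ := Finset.mem_sdiff.1 hymem
    have himg : X.image (Equiv.swap x y) = insert y (X.erase x) :=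
      image_swap_of_mem hxX hyX
    obtain ⟨X', hX'⟩ : ∃ X', X' = insert y (X.erase x) := ⟨_, rfl⟩
    rw [← hX'] at himg
    have hX'W : X' ⊆ W := by
      intro a ha
      rw [hX'] at ha
      rcases Finset.mem_insert.1 ha with rfl | ha
      · exact hYW hyY
      · exact hXW (Finset.mem_of_mem_erase ha)
    have hyJ : y ∉ X.erase x := fun h => hyX (Finset.mem_of_mem_erase h)
    have hX'card : X'.card = Y.card := by
      rw [hX', Finset.card_insert_of_notMem hyJ, Finset.card_erase_of_mem hxX, ← hcard]
      have : 1 ≤ X.card := Finset.card_pos.2 ⟨x, hxX⟩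
      omega
    have hX'd : (X' \ Y).card = d := by
      have e : X' \ Y = (X \ Y).erase x := by
        ext a
        simp only [hX', Finset.mem_sdiff, Finset.mem_insert, Finset.mem_erase]
        constructor
        · rintro ⟨rfl | ⟨hax, haX⟩, haY⟩
          · exact absurd hyY haY
          · exact ⟨hax, haX, haY⟩
        · rintro ⟨hax, haX, haY⟩
          exact ⟨Or.inr ⟨hax, haX⟩, haY⟩
      rw [e, Finset.card_erase_of_mem hxmem, hd]
      omega
    obtain ⟨σ', hfix, himg'⟩ := ih X' Y hX'W hYW hX'card hX'd
    refine ⟨(Equiv.swap x y).trans σ', ?_, ?_⟩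
    · intro a ha
      have hax : a ≠ x := fun h => ha (h ▸ hXW hxX)
      have hay : a ≠ y := fun h => ha (h ▸ hYW hyY)
      show σ' ((Equiv.swap x y) a) = a
      rw [Equiv.swap_apply_of_ne_of_ne hax hay]
      exact hfix a ha
    · have : X.image ((Equiv.swap x y).trans σ') = (X.image (Equiv.swap x y)).image σ' := by
        rw [Finset.image_image]
        rfl
      rw [this, himg, himg']

lemma perm_maps_to_self {W : Finset (Fin n)} {τ : Equiv.Perm (Fin n)}
    (hfix : ∀ a ∉ W, τ a = a) : ∀ a ∈ W, τ a ∈ W := by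
  intro a ha
  by_contra hna
  have h1 : τ (τ a) = τ a := hfix (τ a) hna
  have h2 : τ a = a := τ.injective h1
  rw [h2] at hna
  exact hna ha

lemma chain_antitone {D : ℕ → Finset (Fin n)} (hD : ∀ k, D (k+1) ⊆ D k) :
    ∀ j l, j ≤ l → D l ⊆ D j := by
  intro j l hjl
  induction l with
  | zero =>
    have : j = 0 := by omega
    subst this; exact subset_rfl
  | succ l ih =>
    rcases Nat.eq_or_lt_of_le hjl with h | h
    · subst h; exact subset_rfl
    · exact (hD l).trans (ih (by omega))

lemma exists_perm_chain (M : ℕ) (C D : ℕ → Finset (Fin n))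
    (hC : ∀ k, C (k+1) ⊆ C k) (hD : ∀ k, D (k+1) ⊆ D k)
    (hcard : ∀ k, (C k).card = (D k).card) :
    ∃ σ : Equiv.Perm (Fin n), ∀ k < M, (C k).image σ = D k := by
  classical
  induction M with
  | zero => exact ⟨1, fun k hk => absurd hk (by omega)⟩
  | succ M ih =>
    obtain ⟨σ₀, hσ₀⟩ := ih
    set W : Finset (Fin n) := if M = 0 then Finset.univ else D (M-1) with hW
    have hXW : (C M).image σ₀ ⊆ W := by
      by_cases hM0 : M = 0
      · rw [hW, if_pos hM0]; exact Finset.subset_univ _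
      · rw [hW, if_neg hM0]
        have h1 : C M ⊆ C (M-1) := by
          have h2 := hC (M-1)
          have h3 : M - 1 + 1 = M := by omega
          rwa [h3] at h2
        calc (C M).image σ₀ ⊆ (C (M-1)).image σ₀ := Finset.image_subset_image h1
          _ = D (M-1) := hσ₀ (M-1) (by omega)
    have hYW : D M ⊆ W := by
      by_cases hM0 : M = 0
      · rw [hW, if_pos hM0]; exact Finset.subset_univ _
      · rw [hW, if_neg hM0]
        have h2 := hD (M-1)
        have h3 : M - 1 + 1 = M := by omega
        rwa [h3] at h2
    have hXcard : ((C M).image σ₀).card = (D M).card := by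
      rw [Finset.card_image_of_injective _ σ₀.injective, hcard M]
    obtain ⟨τ, hτfix, hτimg⟩ :=
      exists_perm_subsets W (((C M).image σ₀) \ (D M)).card ((C M).image σ₀) (D M)
        hXW hYW hXcard rfl
    refine ⟨σ₀.trans τ, ?_⟩
    intro k hk
    have himg : (C k).image (σ₀.trans τ) = ((C k).image σ₀).image τ := by
      rw [Finset.image_image]; rfl
    rcases Nat.lt_succ_iff_lt_or_eq.1 hk with hkM | hkM
    · rw [himg, hσ₀ k hkM]
      have hWk : W ⊆ D k := by
        have hM0 : M ≠ 0 := by omega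
        rw [hW, if_neg hM0]
        exact chain_antitone hD k (M-1) (by omega)
      have hsub : (D k).image τ ⊆ D k := by
        intro a ha
        obtain ⟨b, hb, rfl⟩ := Finset.mem_image.1 ha
        by_cases hbW : b ∈ W
        · exact hWk (perm_maps_to_self hτfix b hbW)
        · rw [hτfix b hbW]; exact hb
      refine Finset.eq_of_subset_of_card_le hsub ?_
      rw [Finset.card_image_of_injective _ τ.injective]
    · subst hkM
      rw [himg, hτimg]

lemma topSum_perm (σ : Equiv.Perm (Fin n)) (v : Fin n → ℝ) (k : ℕ) :
    topSum (fun i => v (σ i)) k = topSum v k := by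
  classical
  unfold topSum
  congr 1
  ext r
  simp only [Set.mem_image, Set.mem_setOf_eq]
  constructor
  · rintro ⟨s, hs, rfl⟩
    refine ⟨s.image σ, by rw [Finset.card_image_of_injective _ σ.injective, hs], ?_⟩
    rw [Finset.sum_image (fun a _ b _ h => σ.injective h)]
  · rintro ⟨s, hs, rfl⟩
    refine ⟨s.image σ.symm,
      by rw [Finset.card_image_of_injective _ σ.symm.injective, hs], ?_⟩
    rw [Finset.sum_image (fun a _ b _ h => σ.symm.injective h)]
    simp

lemma majorizes_refl (v : Fin n → ℝ) : Majorizes v v := ⟨rfl, fun _ _ => le_rfl⟩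

lemma majorizes_perm_left (σ : Equiv.Perm (Fin n)) (u v : Fin n → ℝ) :
    Majorizes (fun i => u (σ i)) v ↔ Majorizes u v := by
  unfold Majorizes
  rw [Equiv.sum_comp σ u]
  constructor
  · rintro ⟨h1, h2⟩
    exact ⟨h1, fun k hk => by rw [← topSum_perm σ u k]; exact h2 k hk⟩
  · rintro ⟨h1, h2⟩
    exact ⟨h1, fun k hk => by rw [topSum_perm σ u k]; exact h2 k hk⟩

lemma majorizes_perm_right (σ : Equiv.Perm (Fin n)) (u v : Fin n → ℝ) :
    Majorizes u (fun i => v (σ i)) ↔ Majorizes u v := by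
  unfold Majorizes
  rw [Equiv.sum_comp σ v]
  constructor
  · rintro ⟨h1, h2⟩
    exact ⟨h1, fun k hk => by rw [← topSum_perm σ v k]; exact h2 k hk⟩
  · rintro ⟨h1, h2⟩
    exact ⟨h1, fun k hk => by rw [topSum_perm σ v k]; exact h2 k hk⟩

end PolicyDev
namespace PolicyDev
open Finset MeasureTheory

variable {n m : ℕ}

lemma mem_image_perm_iff {σ : Equiv.Perm (Fin n)} {N : Finset (Fin n)} {i : Fin n} :
    i ∈ N.image σ ↔ σ.symm i ∈ N := by
  constructor
  · intro h
    obtain ⟨j, hj, rfl⟩ := Finset.mem_image.1 h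
    simpa using hj
  · intro h
    exact Finset.mem_image.2 ⟨σ.symm i, h, by simp⟩

lemma loads_map (E₁ E₂ : ReqSeq n m) (σ : Equiv.Perm (Fin n))
    (hσ : ∀ t, (E₁.N t).image σ = E₂.N t) (hq : ∀ t, E₁.q t = E₂.q t) :
    ∀ ℓ ∈ loads E₁, (fun i => ℓ (σ.symm i)) ∈ loads E₂ := by
  rintro ℓ ⟨x, hx, rfl⟩
  refine ⟨fun t => fun i => x t (σ.symm i), ?_, ?_⟩
  · intro t
    obtain ⟨h1, h2, h3⟩ := hx t
    refine ⟨fun i => h1 _, ?_, ?_⟩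
    · intro i hi
      refine h2 _ ?_
      intro hmem
      apply hi
      rw [← hσ t]
      exact mem_image_perm_iff.2 hmem
    · rw [Equiv.sum_comp σ.symm (x t), h3, hq t]
  · funext i
    simp only [Finset.sum_apply]

lemma opt_pair (E₁ E₂ : ReqSeq n m) (σ : Equiv.Perm (Fin n))
    (hσ : ∀ t, (E₁.N t).image σ = E₂.N t) (hq : ∀ t, E₁.q t = E₂.q t) :
    Majorizes (optLoad E₁) (optLoad E₂) ∧ Majorizes (optLoad E₂) (optLoad E₁) := by
  have hσ' : ∀ t, (E₂.N t).image σ.symm = E₁.N t := by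
    intro t
    rw [← hσ t, Finset.image_image]
    have e : ⇑σ.symm ∘ ⇑σ = id := funext fun a => σ.symm_apply_apply a
    rw [e, Finset.image_id]
  have hq' : ∀ t, E₂.q t = E₁.q t := fun t => (hq t).symm
  have hmap₁ := loads_map E₁ E₂ σ hσ hq
  have hmap₂ := loads_map E₂ E₁ σ.symm hσ' hq'
  have hopt₁ : ∀ ℓ, IsOpt E₁ ℓ → IsOpt E₂ (fun i => ℓ (σ.symm i)) := by
    rintro ℓ ⟨hmem, hmin⟩
    refine ⟨hmap₁ ℓ hmem, ?_⟩
    intro ℓ' hℓ'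
    have h1 : (fun i => ℓ' (σ.symm.symm i)) ∈ loads E₁ := hmap₂ ℓ' hℓ'
    have h2 := hmin _ h1
    simp only [Equiv.symm_symm] at h2
    rw [majorizes_perm_right σ.symm]
    rw [← majorizes_perm_left σ]
    exact h2
  have hopt₂ : ∀ ℓ, IsOpt E₂ ℓ → IsOpt E₁ (fun i => ℓ (σ i)) := by
    rintro ℓ ⟨hmem, hmin⟩
    have hmem' : (fun i => ℓ (σ.symm.symm i)) ∈ loads E₁ := hmap₂ ℓ hmem
    simp only [Equiv.symm_symm] at hmem'
    refine ⟨hmem', ?_⟩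
    intro ℓ' hℓ'
    have h1 : (fun i => ℓ' (σ.symm i)) ∈ loads E₂ := hmap₁ ℓ' hℓ'
    have h2 := hmin _ h1
    rw [majorizes_perm_right σ]
    rw [← majorizes_perm_left σ.symm]
    exact h2
  by_cases hex : ∃ ℓ, IsOpt E₁ ℓ
  · have hex₂ : ∃ ℓ, IsOpt E₂ ℓ := ⟨_, hopt₁ _ hex.choose_spec⟩
    have h1 : IsOpt E₁ (optLoad E₁) := by
      unfold optLoad
      rw [dif_pos hex]
      exact hex.choose_spec
    have h2 : IsOpt E₂ (optLoad E₂) := by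
      unfold optLoad
      rw [dif_pos hex₂]
      exact hex₂.choose_spec
    constructor
    · have h3 := h2.2 _ (hmap₁ _ h1.1)
      rwa [majorizes_perm_left σ.symm] at h3
    · have h4 := h1.2 _ (hmap₂ _ h2.1)
      simp only [Equiv.symm_symm] at h4
      rwa [majorizes_perm_left σ] at h4
  · have hex₂ : ¬ ∃ ℓ, IsOpt E₂ ℓ := by
      rintro ⟨ℓ, hℓ⟩
      exact hex ⟨_, hopt₂ ℓ hℓ⟩
    unfold optLoad
    rw [dif_neg hex, dif_neg hex₂]
    exact ⟨majorizes_refl _, majorizes_refl _⟩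

/-- extend a `Fin m`-indexed chain to `ℕ` -/
def Cfun (E : ReqSeq n m) (hm : 0 < m) : ℕ → Finset (Fin n) := fun k =>
  if h : k < m then E.N ⟨k, h⟩ else E.N ⟨m-1, by omega⟩

lemma Cfun_chain (E : ReqSeq n m) (hm : 0 < m) (hnestE : IsNested E) :
    ∀ k, Cfun E hm (k+1) ⊆ Cfun E hm k := by
  intro k
  unfold Cfun
  by_cases h1 : k + 1 < m
  · have h0 : k < m := by omega
    rw [dif_pos h1, dif_pos h0]
    exact hnestE ⟨k, h0⟩ ⟨k+1, h1⟩ (by simp [Fin.le_def])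
  · by_cases h0 : k < m
    · rw [dif_neg h1, dif_pos h0]
      have e : (⟨m-1, by omega⟩ : Fin m) = ⟨k, h0⟩ := Fin.ext (by simp; omega)
      rw [e]
    · rw [dif_neg h1, dif_neg h0]

lemma Cfun_card (E₁ E₂ : ReqSeq n m) (hm : 0 < m)
    (hc : ∀ t : Fin m, (E₁.N t).card = (E₂.N t).card) :
    ∀ k, (Cfun E₁ hm k).card = (Cfun E₂ hm k).card := by
  intro k
  unfold Cfun
  by_cases h : k < m
  · rw [dif_pos h, dif_pos h]
    exact hc _
  · rw [dif_neg h, dif_neg h]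
    exact hc _

end PolicyDev

/-- **Lemma (Policy Deviation).** For any (possibly randomized) allocation policy `A` and
any nested sequence `Ẽ ∈ E^nest_{n,m,q}`, there is a nested sequence `E' ∈ E^nest_{n,m,q}`
with `WF(Ẽ) ⪯ 𝔼[A(E')]` and `OPT(Ẽ) ∼ OPT(E')`. -/
theorem policy_deviation (n m : ℕ) (q : ℝ)
    (A : RandPolicy n) (Etil : ReqSeq n m) (hEtil : Etil ∈ seqs n m q)
    (hnest : IsNested Etil) :
    ∃ E' : ReqSeq n m, E' ∈ seqs n m q ∧ IsNested E' ∧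
      Majorizes (expLoad A E') (wfLoad Etil) ∧
      (Majorizes (optLoad Etil) (optLoad E') ∧ Majorizes (optLoad E') (optLoad Etil)) := by
  classical
  by_cases hm : m = 0
  · subst hm
    refine ⟨Etil, hEtil, hnest, ?_, PolicyDev.majorizes_refl _, PolicyDev.majorizes_refl _⟩
    have he : expLoad A Etil = fun _ => 0 := by
      funext i
      unfold expLoad
      have e : (fun p => detLoad p Etil i) = fun _ => (0:ℝ) := by
        funext p
        unfold detLoad
        simp
      rw [e]
      simp
    have hw : wfLoad Etil = fun _ => 0 := by
      unfold wfLoad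
      split
      · funext i
        simp
      · rfl
    rw [he, hw]
    exact PolicyDev.majorizes_refl _
  · have hm' : 0 < m := Nat.pos_of_ne_zero hm
    obtain ⟨i0, -⟩ := Etil.N_nonempty ⟨0, hm'⟩
    have hn : 0 < n := lt_of_le_of_lt (Nat.zero_le _) i0.isLt
    refine ⟨PolicyDev.Eadv A Etil hn, hEtil, PolicyDev.Eadv_nested A Etil hn hnest,
      PolicyDev.majorizes_exp_wf A Etil hn hnest, ?_⟩
    have hcard : ∀ t : Fin m, (Etil.N t).card = ((PolicyDev.Eadv A Etil hn).N t).card := by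
      intro t
      rw [PolicyDev.Eadv_N A Etil hn hnest t,
        (PolicyDev.sz_le_card_prev A Etil hn hnest t.val t.isLt).2]
      unfold PolicyDev.szfun
      rw [dif_pos t.isLt]
    obtain ⟨σ, hσ⟩ := PolicyDev.exists_perm_chain m (PolicyDev.Cfun Etil hm')
      (PolicyDev.Cfun (PolicyDev.Eadv A Etil hn) hm')
      (PolicyDev.Cfun_chain Etil hm' hnest)
      (PolicyDev.Cfun_chain _ hm' (PolicyDev.Eadv_nested A Etil hn hnest))
      (PolicyDev.Cfun_card _ _ hm' hcard)
    have hσ' : ∀ t : Fin m, (Etil.N t).image σ = (PolicyDev.Eadv A Etil hn).N t := by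
      intro t
      have h := hσ t.val t.isLt
      unfold PolicyDev.Cfun at h
      rw [dif_pos t.isLt, dif_pos t.isLt] at h
      exact h
    exact PolicyDev.opt_pair Etil _ σ hσ' (fun t => rfl)
end

section
/- Let n = 2 offline nodes, m = 2 online nodes, total quantity q = 2, and define f(x) = 1 if x(1) > 1/2 and x(2) > 1/2, and f(x) = 0 otherwise. Then f is Schur-concave, and there exists a randomized allocation policy A such that for all α > 0: Reg^max_{(2,2,2),α,f}(A) ≤ max(α − 1/2, 0) < α ≤ Reg^max_{(2,2,2),α,f}(WF). In particular, water-filling is not minimax optimal among randomized policies for this Schur-concave objective. -/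
open Finset MeasureTheory

/-- The optimal hindsight objective value `max_{ℓ ∈ Δ(E)} f(ℓ)`. -/
noncomputable def hindMax {n m : ℕ} (f : (Fin n → ℝ) → ℝ) (E : ReqSeq n m) : ℝ :=
  sSup (f '' loads E)

/-- The optimal hindsight objective value `min_{ℓ ∈ Δ(E)} g(ℓ)`. -/
noncomputable def hindMin {n m : ℕ} (g : (Fin n → ℝ) → ℝ) (E : ReqSeq n m) : ℝ :=
  sInf (g '' loads E)

/-- `Reg^max_{(n,m,q),α,f}(WF)`. -/
noncomputable def regMaxWF (n m : ℕ) (q α : ℝ) (f : (Fin n → ℝ) → ℝ) : ℝ :=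
  sSup ((fun E => α * hindMax f E - f (wfLoad E)) '' seqs n m q)

/-- `Reg^min_{(n,m,q),α,g}(WF)`. -/
noncomputable def regMinWF (n m : ℕ) (q α : ℝ) (g : (Fin n → ℝ) → ℝ) : ℝ :=
  sSup ((fun E => g (wfLoad E) - α * hindMin g E) '' seqs n m q)

/-- `Reg^max_{(n,m,q),α,f}(A)` for a deterministic policy `A`. -/
noncomputable def regMaxDet (n m : ℕ) (q α : ℝ) (f : (Fin n → ℝ) → ℝ) (A : DetPolicy n) : ℝ :=
  sSup ((fun E => α * hindMax f E - f (detLoad A E)) '' seqs n m q)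

/-- `Reg^min_{(n,m,q),α,g}(A)` for a deterministic policy `A`. -/
noncomputable def regMinDet (n m : ℕ) (q α : ℝ) (g : (Fin n → ℝ) → ℝ) (A : DetPolicy n) : ℝ :=
  sSup ((fun E => g (detLoad A E) - α * hindMin g E) '' seqs n m q)

/-- `Reg^max_{(n,m,q),α,f}(A)` for a randomized policy `A` (cost uses `𝔼[f(A(E))]`). -/
noncomputable def regMaxRand (n m : ℕ) (q α : ℝ) (f : (Fin n → ℝ) → ℝ) (A : RandPolicy n) : ℝ :=
  sSup ((fun E => α * hindMax f E - ∫ p, f (detLoad p E) ∂A.μ) '' seqs n m q)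

/-- `Reg^min_{(n,m,q),α,g}(A)` for a randomized policy `A` (cost uses `𝔼[g(A(E))]`). -/
noncomputable def regMinRand (n m : ℕ) (q α : ℝ) (g : (Fin n → ℝ) → ℝ) (A : RandPolicy n) : ℝ :=
  sSup ((fun E => (∫ p, g (detLoad p E) ∂A.μ) - α * hindMin g E) '' seqs n m q)

/-- The indicator objective `f(x) = 1{x(1) > 1/2 and x(2) > 1/2}`. -/
noncomputable def fInd : (Fin 2 → ℝ) → ℝ :=
  fun x => if 1 / 2 < x 0 ∧ 1 / 2 < x 1 then 1 else 0

/-! ### Auxiliary lemmas -/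

lemma fInd_nonneg (x : Fin 2 → ℝ) : 0 ≤ fInd x := by
  unfold fInd; split <;> norm_num

lemma fInd_le_one (x : Fin 2 → ℝ) : fInd x ≤ 1 := by
  unfold fInd; split <;> norm_num

lemma hindMax_le_one {m : ℕ} (E : ReqSeq 2 m) : hindMax fInd E ≤ 1 :=
  Real.sSup_le (by rintro y ⟨ℓ, _, rfl⟩; exact fInd_le_one ℓ) one_pos.le

lemma finset2_cases (N : Finset (Fin 2)) (h : N.Nonempty) :
    N = {0} ∨ N = {1} ∨ N = {0, 1} := by
  revert h; revert N; decide

/-- Water-filling step on two nodes with previous loads `ℓ` and quantity `q`. -/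
noncomputable def wfStep (ℓ : Fin 2 → ℝ) (q : ℝ) : Fin 2 → ℝ :=
  fun i => if i = 0 then max 0 (min q ((q + ℓ 1 - ℓ 0) / 2))
           else q - max 0 (min q ((q + ℓ 1 - ℓ 0) / 2))

/-- Previous loads encoded in a history list (only the head entry matters for
two-round sequences). -/
def prevOf (h : List (Finset (Fin 2) × ℝ × (Fin 2 → ℝ))) : Fin 2 → ℝ :=
  fun i => h.headI.2.2 i

lemma fin2_ne10 : (1 : Fin 2) ≠ 0 := by decide

/-- Key water-filling bound: both post-fill loads dominate any `m` below the
equal-split level and below each `load + q`. -/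
lemma fill_ge (l0 l1 q m : ℝ) (hq : 0 ≤ q)
    (hm1 : m ≤ (l0 + l1 + q) / 2) (hm2 : m ≤ l0 + q) (hm3 : m ≤ l1 + q) :
    m ≤ l0 + max 0 (min q ((q + l1 - l0) / 2)) ∧
    m ≤ l1 + (q - max 0 (min q ((q + l1 - l0) / 2))) := by
  rcases le_total ((q + l1 - l0) / 2) 0 with h | h
  · rw [min_eq_right (h.trans hq), max_eq_left h]
    constructor <;> linarith
  · rcases le_total q ((q + l1 - l0) / 2) with h2 | h2
    · rw [min_eq_left h2, max_eq_right hq]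
      constructor <;> linarith
    · rw [min_eq_right h2, max_eq_right h]
      constructor <;> linarith

/-- The deterministic policy with bias `β`: on the first arrival with full
neighborhood, push (up to one unit of) mass to node `β`; afterwards water-fill. -/
noncomputable def pol (β : Fin 2) : DetPolicy 2 := fun h Nq =>
  if 0 ∈ Nq.1 ∧ 1 ∈ Nq.1 then
    if h.isEmpty then (fun i => if i = β then min Nq.2 1 else Nq.2 - min Nq.2 1)
    else wfStep (prevOf h) Nq.2
  else if 0 ∈ Nq.1 then (fun i => if i = 0 then Nq.2 else 0)
  else (fun i => if i = 1 then Nq.2 else 0)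

instance : MeasurableSingletonClass (DetPolicy 2) :=
  ⟨fun _ => MeasurableSpace.measurableSet_top⟩

lemma measurable_detPolicy {X : Type*} [MeasurableSpace X] (g : DetPolicy 2 → X) :
    Measurable g := fun _ _ => MeasurableSpace.measurableSet_top

lemma mem_of_ne_of_nonempty {N : Finset (Fin 2)} (hN : N.Nonempty) (h0 : 0 ∉ N) :
    (1 : Fin 2) ∈ N := by
  obtain ⟨j, hj⟩ := hN
  fin_cases j
  · exact absurd hj h0
  · exact hj

lemma pol_valid (β : Fin 2) : ValidDetPolicy (pol β) := by
  intro h N q hN hq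
  unfold pol
  split
  · next hmem =>
    split
    · refine ⟨?_, ?_, ?_⟩
      · intro i
        have h1 : 0 ≤ min q 1 := le_min hq.le zero_le_one
        have h2 : min q 1 ≤ q := min_le_left _ _
        dsimp only
        split <;> linarith
      · intro i hi
        fin_cases i
        · exact absurd hmem.1 hi
        · exact absurd hmem.2 hi
      · rw [Fin.sum_univ_two]
        fin_cases β <;> simp
    · refine ⟨?_, ?_, ?_⟩
      · intro i
        have h1 : (0:ℝ) ≤ max 0 (min q ((q + prevOf h 1 - prevOf h 0) / 2)) :=
          le_max_left _ _
        have h2 : max 0 (min q ((q + prevOf h 1 - prevOf h 0) / 2)) ≤ q :=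
          max_le hq.le (min_le_left _ _)
        unfold wfStep
        split <;> linarith
      · intro i hi
        fin_cases i
        · exact absurd hmem.1 hi
        · exact absurd hmem.2 hi
      · unfold wfStep
        rw [Fin.sum_univ_two]
        norm_num
  · next hmem =>
    split
    · next h0 =>
      refine ⟨?_, ?_, ?_⟩
      · intro i; dsimp only; split
        · exact hq.le
        · exact le_rfl
      · intro i hi
        fin_cases i
        · exact absurd h0 hi
        · simp
      · rw [Fin.sum_univ_two]; norm_num
    · next h0 =>
      have h1 : (1 : Fin 2) ∈ N := mem_of_ne_of_nonempty hN h0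
      refine ⟨?_, ?_, ?_⟩
      · intro i; dsimp only; split
        · exact hq.le
        · exact le_rfl
      · intro i hi
        fin_cases i
        · simp
        · exact absurd h1 hi
      · rw [Fin.sum_univ_two]; norm_num

lemma detLoad_two (A : DetPolicy 2) (E : ReqSeq 2 2) (i : Fin 2) :
    detLoad A E i = A [] (E.N 0, E.q 0) i +
      A [(E.N 0, E.q 0, A [] (E.N 0, E.q 0))] (E.N 1, E.q 1) i := by
  have h1 : hist A E 1 = [(E.N 0, E.q 0, A [] (E.N 0, E.q 0))] := by
    show (if ht : 0 < 2 then
        hist A E 0 ++ [(E.N ⟨0, ht⟩, E.q ⟨0, ht⟩, A (hist A E 0) (E.N ⟨0, ht⟩, E.q ⟨0, ht⟩))]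
      else hist A E 0) = _
    rw [dif_pos (by norm_num)]
    rfl
  have h2 : detAlloc A E 1 = A [(E.N 0, E.q 0, A [] (E.N 0, E.q 0))] (E.N 1, E.q 1) := by
    show A (hist A E 1) (E.N 1, E.q 1) = _
    rw [h1]
  have h0 : detAlloc A E 0 = A [] (E.N 0, E.q 0) := rfl
  simp only [detLoad, Fin.sum_univ_two, Finset.sum_apply, Pi.add_apply, h0, h2]

lemma core (E : ReqSeq 2 2) (hq2 : E.q 0 + E.q 1 = 2)
    (ℓ : Fin 2 → ℝ) (hℓ : ℓ ∈ loads E) (h0 : 1 / 2 < ℓ 0) (h1 : 1 / 2 < ℓ 1) :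
    ∃ β : Fin 2, 1 / 2 < detLoad (pol β) E 0 ∧ 1 / 2 < detLoad (pol β) E 1 := by
  obtain ⟨u, hu, rfl⟩ := hℓ
  simp only [Finset.sum_apply, Fin.sum_univ_two, Pi.add_apply] at h0 h1
  have ha : 0 < E.q 0 := E.q_pos 0
  have hb : 0 < E.q 1 := E.q_pos 1
  have hpos : ∀ t i, 0 ≤ u t i := fun t i => (hu t).1 i
  have hsa : u 0 0 + u 0 1 = E.q 0 := by
    have := (hu 0).2.2; rwa [Fin.sum_univ_two] at this
  have hsb : u 1 0 + u 1 1 = E.q 1 := by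
    have := (hu 1).2.2; rwa [Fin.sum_univ_two] at this
  rcases finset2_cases (E.N 0) (E.N_nonempty 0) with hN0 | hN0 | hN0 <;>
    rcases finset2_cases (E.N 1) (E.N_nonempty 1) with hN1 | hN1 | hN1
  · -- N0 = {0}, N1 = {0}: hindsight infeasible
    have e1 : u 0 1 = 0 := (hu 0).2.1 1 (by rw [hN0]; decide)
    have e2 : u 1 1 = 0 := (hu 1).2.1 1 (by rw [hN1]; decide)
    exact absurd h1 (by rw [e1, e2]; norm_num)
  · -- N0 = {0}, N1 = {1}
    have e1 : u 0 1 = 0 := (hu 0).2.1 1 (by rw [hN0]; decide)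
    have e2 : u 1 0 = 0 := (hu 1).2.1 0 (by rw [hN1]; decide)
    refine ⟨0, ?_⟩
    rw [detLoad_two, detLoad_two, hN0, hN1]
    show 1 / 2 < E.q 0 + 0 ∧ 1 / 2 < 0 + E.q 1
    constructor <;> linarith
  · -- N0 = {0}, N1 = {0,1}
    have e1 : u 0 1 = 0 := (hu 0).2.1 1 (by rw [hN0]; decide)
    have hb' : 1 / 2 < E.q 1 := by linarith [hpos 1 0]
    refine ⟨0, ?_⟩
    rw [detLoad_two, detLoad_two, hN0, hN1]
    show 1 / 2 < E.q 0 + max 0 (min (E.q 1) ((E.q 1 + 0 - E.q 0) / 2)) ∧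
      1 / 2 < 0 + (E.q 1 - max 0 (min (E.q 1) ((E.q 1 + 0 - E.q 0) / 2)))
    obtain ⟨g1, g2⟩ := fill_ge (E.q 0) 0 (E.q 1) (min 1 (E.q 1)) hb.le
      (by linarith [min_le_left (1 : ℝ) (E.q 1)])
      (by linarith [min_le_left (1 : ℝ) (E.q 1)])
      (by linarith [min_le_right (1 : ℝ) (E.q 1)])
    have hm : 1 / 2 < min (1 : ℝ) (E.q 1) := lt_min (by norm_num) hb'
    exact ⟨lt_of_lt_of_le hm g1, lt_of_lt_of_le hm g2⟩
  · -- N0 = {1}, N1 = {0}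
    have e1 : u 0 0 = 0 := (hu 0).2.1 0 (by rw [hN0]; decide)
    have e2 : u 1 1 = 0 := (hu 1).2.1 1 (by rw [hN1]; decide)
    refine ⟨0, ?_⟩
    rw [detLoad_two, detLoad_two, hN0, hN1]
    show 1 / 2 < 0 + E.q 1 ∧ 1 / 2 < E.q 0 + 0
    constructor <;> linarith
  · -- N0 = {1}, N1 = {1}: hindsight infeasible
    have e1 : u 0 0 = 0 := (hu 0).2.1 0 (by rw [hN0]; decide)
    have e2 : u 1 0 = 0 := (hu 1).2.1 0 (by rw [hN1]; decide)
    exact absurd h0 (by rw [e1, e2]; norm_num)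
  · -- N0 = {1}, N1 = {0,1}
    have e1 : u 0 0 = 0 := (hu 0).2.1 0 (by rw [hN0]; decide)
    have hb' : 1 / 2 < E.q 1 := by linarith [hpos 1 1]
    refine ⟨0, ?_⟩
    rw [detLoad_two, detLoad_two, hN0, hN1]
    show 1 / 2 < 0 + max 0 (min (E.q 1) ((E.q 1 + E.q 0 - 0) / 2)) ∧
      1 / 2 < E.q 0 + (E.q 1 - max 0 (min (E.q 1) ((E.q 1 + E.q 0 - 0) / 2)))
    obtain ⟨g1, g2⟩ := fill_ge 0 (E.q 0) (E.q 1) (min 1 (E.q 1)) hb.le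
      (by linarith [min_le_left (1 : ℝ) (E.q 1)])
      (by linarith [min_le_right (1 : ℝ) (E.q 1)])
      (by linarith [min_le_left (1 : ℝ) (E.q 1)])
    have hm : 1 / 2 < min (1 : ℝ) (E.q 1) := lt_min (by norm_num) hb'
    exact ⟨lt_of_lt_of_le hm g1, lt_of_lt_of_le hm g2⟩
  · -- N0 = {0,1}, N1 = {0}
    have e2 : u 1 1 = 0 := (hu 1).2.1 1 (by rw [hN1]; decide)
    have ha' : 1 / 2 < E.q 0 := by linarith [hpos 0 0]
    refine ⟨1, ?_⟩
    rw [detLoad_two, detLoad_two, hN0, hN1]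
    show 1 / 2 < (E.q 0 - min (E.q 0) 1) + E.q 1 ∧ 1 / 2 < min (E.q 0) 1 + 0
    constructor
    · linarith [min_le_right (E.q 0) 1]
    · have := lt_min ha' (by norm_num : (1 : ℝ) / 2 < 1)
      linarith
  · -- N0 = {0,1}, N1 = {1}
    have e2 : u 1 0 = 0 := (hu 1).2.1 0 (by rw [hN1]; decide)
    have ha' : 1 / 2 < E.q 0 := by linarith [hpos 0 1]
    refine ⟨0, ?_⟩
    rw [detLoad_two, detLoad_two, hN0, hN1]
    show 1 / 2 < min (E.q 0) 1 + 0 ∧ 1 / 2 < (E.q 0 - min (E.q 0) 1) + E.q 1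
    constructor
    · have := lt_min ha' (by norm_num : (1 : ℝ) / 2 < 1)
      linarith
    · linarith [min_le_right (E.q 0) 1]
  · -- N0 = {0,1}, N1 = {0,1}
    refine ⟨0, ?_⟩
    rw [detLoad_two, detLoad_two, hN0, hN1]
    show 1 / 2 < min (E.q 0) 1 +
        max 0 (min (E.q 1) ((E.q 1 + (E.q 0 - min (E.q 0) 1) - min (E.q 0) 1) / 2)) ∧
      1 / 2 < (E.q 0 - min (E.q 0) 1) +
        (E.q 1 - max 0 (min (E.q 1) ((E.q 1 + (E.q 0 - min (E.q 0) 1) - min (E.q 0) 1) / 2)))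
    obtain ⟨g1, g2⟩ := fill_ge (min (E.q 0) 1) (E.q 0 - min (E.q 0) 1) (E.q 1) 1 hb.le
      (by rcases le_total (E.q 0) 1 with h | h
          · rw [min_eq_left h]; linarith
          · rw [min_eq_right h]; linarith)
      (by rcases le_total (E.q 0) 1 with h | h
          · rw [min_eq_left h]; linarith
          · rw [min_eq_right h]; linarith)
      (by rcases le_total (E.q 0) 1 with h | h
          · rw [min_eq_left h]; linarith
          · rw [min_eq_right h]; linarith)
    exact ⟨lt_of_lt_of_le (by norm_num) g1, lt_of_lt_of_le (by norm_num) g2⟩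

noncomputable def randA : RandPolicy 2 where
  μ := (1 / 2 : ENNReal) • Measure.dirac (pol 0) + (1 / 2 : ENNReal) • Measure.dirac (pol 1)
  prob := by
    constructor
    rw [Measure.add_apply, Measure.smul_apply, Measure.smul_apply]
    rw [Measure.dirac_apply' _ MeasurableSet.univ, Measure.dirac_apply' _ MeasurableSet.univ]
    simp only [Set.indicator_univ, Pi.one_apply, mul_one, smul_eq_mul]
    rw [show (1 / 2 : ENNReal) + 1 / 2 = 1 from ENNReal.add_halves 1]
  valid := by
    rw [ae_iff]
    have hS : MeasurableSet {p : DetPolicy 2 | ¬ ValidDetPolicy p} :=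
      MeasurableSpace.measurableSet_top
    rw [Measure.add_apply, Measure.smul_apply, Measure.smul_apply,
        Measure.dirac_apply' _ hS, Measure.dirac_apply' _ hS,
        Set.indicator_of_notMem (show pol 0 ∉ {p : DetPolicy 2 | ¬ ValidDetPolicy p}
          from fun hc => hc (pol_valid 0)),
        Set.indicator_of_notMem (show pol 1 ∉ {p : DetPolicy 2 | ¬ ValidDetPolicy p}
          from fun hc => hc (pol_valid 1))]
    simp

lemma integrable_randA (g : DetPolicy 2 → ℝ) : Integrable g randA.μ := by
  refine ⟨((measurable_detPolicy g).stronglyMeasurable).aestronglyMeasurable, ?_⟩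
  show ∫⁻ p, ‖g p‖₊ ∂randA.μ < ⊤
  show ∫⁻ p, ‖g p‖₊
      ∂((1 / 2 : ENNReal) • Measure.dirac (pol 0) + (1 / 2 : ENNReal) • Measure.dirac (pol 1)) < ⊤
  rw [lintegral_add_measure, lintegral_smul_measure, lintegral_smul_measure,
      lintegral_dirac, lintegral_dirac]
  refine ENNReal.add_lt_top.2 ⟨?_, ?_⟩ <;>
    exact ENNReal.mul_lt_top (by norm_num) ENNReal.coe_lt_top

lemma integral_randA (g : DetPolicy 2 → ℝ) :
    ∫ p, g p ∂randA.μ = (g (pol 0) + g (pol 1)) / 2 := by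
  have hint := integrable_randA g
  have h0 : Integrable g ((1 / 2 : ENNReal) • Measure.dirac (pol 0)) :=
    hint.left_of_add_measure
  have h1 : Integrable g ((1 / 2 : ENNReal) • Measure.dirac (pol 1)) :=
    hint.right_of_add_measure
  show ∫ p, g p
      ∂((1 / 2 : ENNReal) • Measure.dirac (pol 0) + (1 / 2 : ENNReal) • Measure.dirac (pol 1)) = _
  rw [integral_add_measure h0 h1, integral_smul_measure, integral_smul_measure,
      integral_dirac, integral_dirac]
  norm_num
  ring

noncomputable def Estar : ReqSeq 2 2 where
  N := ![{0, 1}, {0}]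
  q := ![1, 1]
  N_nonempty := by decide
  q_pos := by intro t; fin_cases t <;> norm_num

lemma hindMax_Estar : hindMax fInd Estar = 1 := by
  have hmem : (fun _ => 1 : Fin 2 → ℝ) ∈ loads Estar := by
    refine ⟨![![0, 1], ![1, 0]], ?_, ?_⟩
    · intro t
      fin_cases t
      · refine ⟨?_, ?_, ?_⟩
        · intro i; fin_cases i <;> norm_num
        · intro i hi
          exact absurd (show i ∈ Estar.N 0 by fin_cases i <;> decide) hi
        · rw [Fin.sum_univ_two]; norm_num [Estar]
      · refine ⟨?_, ?_, ?_⟩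
        · intro i; fin_cases i <;> norm_num
        · intro i hi
          fin_cases i
          · exact absurd (show (0 : Fin 2) ∈ Estar.N 1 by decide) hi
          · norm_num
        · rw [Fin.sum_univ_two]; norm_num [Estar]
    · funext i
      rw [Fin.sum_univ_two]
      fin_cases i <;> norm_num
  have h1 : fInd (fun _ => 1) = 1 := by
    unfold fInd; rw [if_pos (by norm_num)]
  apply le_antisymm (hindMax_le_one Estar)
  calc (1 : ℝ) = fInd (fun _ => 1) := h1.symm
  _ ≤ hindMax fInd Estar :=
      le_csSup ⟨1, by rintro z ⟨ℓ, _, rfl⟩; exact fInd_le_one ℓ⟩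
        (Set.mem_image_of_mem _ hmem)

lemma minOn_Estar0 (v : Fin 2 → ℝ) : reqMinOn Estar 0 v = min (v 0) (v 1) := by
  apply le_antisymm
  · exact le_min (Finset.inf'_le _ (by decide)) (Finset.inf'_le _ (by decide))
  · apply Finset.le_inf'
    intro i hi
    fin_cases i
    · exact min_le_left _ _
    · exact min_le_right _ _

lemma wf_fails : fInd (wfLoad Estar) = 0 := by
  unfold wfLoad
  split
  · next hex =>
    obtain ⟨hfeas, hopt⟩ := hex.choose_spec
    set x := hex.choose with hxdef
    have hprev : ∀ i, prevLoad x 0 i = 0 := by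
      intro i
      unfold prevLoad
      apply Finset.sum_eq_zero
      intro s hs
      simp only [Finset.mem_filter] at hs
      exact absurd hs.2 (Fin.not_lt_zero s)
    have hy : (fun _ => (1 / 2 : ℝ)) ∈ allocSet 2 (Estar.N 0) (Estar.q 0) := by
      refine ⟨fun i => by norm_num, fun i hi =>
        absurd (show i ∈ Estar.N 0 by fin_cases i <;> decide) hi, ?_⟩
      rw [Fin.sum_univ_two]
      norm_num [Estar]
    have hopt0 := hopt 0 _ hy
    rw [minOn_Estar0, minOn_Estar0] at hopt0
    simp only [hprev, add_zero] at hopt0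
    have hsum : x 0 0 + x 0 1 = 1 := by
      have := (hfeas 0).2.2
      rw [Fin.sum_univ_two] at this
      exact this.trans (by norm_num [Estar])
    have h2 : (1 / 2 : ℝ) ≤ min (x 0 0) (x 0 1) := by
      simpa using hopt0
    have hm0 := le_trans h2 (min_le_left (x 0 0) (x 0 1))
    have hm1 := le_trans h2 (min_le_right (x 0 0) (x 0 1))
    have hx11 : x 1 1 = 0 := (hfeas 1).2.1 1 (by decide)
    unfold fInd
    rw [if_neg]
    rintro ⟨-, hc⟩
    have : (∑ t, x t) 1 = x 0 1 + x 1 1 := by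
      rw [Fin.sum_univ_two]; rfl
    rw [this, hx11] at hc
    linarith
  · unfold fInd
    rw [if_neg]
    rintro ⟨hc, -⟩
    simp only [Pi.zero_apply] at hc
    linarith

lemma topSum_one (x : Fin 2 → ℝ) : topSum x 1 = max (x 0) (x 1) := by
  have himg : (fun s : Finset (Fin 2) => ∑ i ∈ s, x i) '' {s | s.card = 1}
      = {x 0, x 1} := by
    ext r
    constructor
    · rintro ⟨s, hs, rfl⟩
      have hcase := (by decide :
        ∀ s : Finset (Fin 2), s.card = 1 → s = {0} ∨ s = {1}) s hs
      rcases hcase with rfl | rfl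
      · exact Or.inl (Finset.sum_singleton _ _)
      · exact Or.inr (Finset.sum_singleton _ _)
    · rintro (rfl | rfl)
      · exact ⟨{0}, by simp, by simp⟩
      · exact ⟨{1}, by simp, by simp⟩
  rw [topSum, himg, csSup_pair]

lemma schur_fInd : SchurConcave fInd := by
  intro x y hx hy hmaj
  obtain ⟨hsum, hks⟩ := hmaj
  by_cases hcy : 1 / 2 < y 0 ∧ 1 / 2 < y 1
  · have h1 := hks 1 (by norm_num)
    rw [topSum_one, topSum_one] at h1
    have hsum2 : y 0 + y 1 = x 0 + x 1 := by
      rw [Fin.sum_univ_two, Fin.sum_univ_two] at hsum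
      exact hsum
    have hcx : 1 / 2 < x 0 ∧ 1 / 2 < x 1 := by
      obtain ⟨hc1, hc2⟩ := hcy
      constructor <;>
      · rcases max_cases (x 0) (x 1) with ⟨he', _⟩ | ⟨he', _⟩ <;>
          rcases max_cases (y 0) (y 1) with ⟨he, _⟩ | ⟨he, _⟩ <;>
          linarith
    unfold fInd
    rw [if_pos hcx, if_pos hcy]
  · unfold fInd
    rw [if_neg hcy]
    split <;> norm_num

/-- **Theorem (Deterministic and Randomized Separation).** With `n = m = 2`, `q = 2`, and
the Schur-concave objective `f(x) = 1{x(1) > 1/2 ∧ x(2) > 1/2}`, there is a randomized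
policy `A` with `Reg^max_{(2,2,2),α,f}(A) ≤ (α − 1/2)⁺ < α ≤ Reg^max_{(2,2,2),α,f}(WF)`
for all `α > 0`. -/
theorem det_rand_separation :
    SchurConcave fInd ∧
    ∃ A : RandPolicy 2, ∀ α : ℝ, 0 < α →
      regMaxRand 2 2 2 α fInd A ≤ max (α - 1 / 2) 0 ∧
      max (α - 1 / 2) 0 < α ∧
      α ≤ regMaxWF 2 2 2 α fInd := by
  refine ⟨schur_fInd, randA, fun α hα => ⟨?_, ?_, ?_⟩⟩
  · -- randomized regret bound
    apply Real.sSup_le _ (le_max_right _ _)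
    rintro y ⟨E, hE, rfl⟩
    dsimp only
    rw [integral_randA (fun p => fInd (detLoad p E))]
    have hq2 : E.q 0 + E.q 1 = 2 := by
      have : ∑ t, E.q t = 2 := hE
      rwa [Fin.sum_univ_two] at this
    have hf0 := fInd_nonneg (detLoad (pol 0) E)
    have hf1 := fInd_nonneg (detLoad (pol 1) E)
    by_cases H : ∃ ℓ ∈ loads E, 1 / 2 < ℓ 0 ∧ 1 / 2 < ℓ 1
    · obtain ⟨ℓ, hℓ, hg0, hg1⟩ := H
      obtain ⟨β, hb0, hb1⟩ := core E hq2 ℓ hℓ hg0 hg1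
      have hβ : fInd (detLoad (pol β) E) = 1 := by
        unfold fInd; rw [if_pos ⟨hb0, hb1⟩]
      have hsum : 1 ≤ fInd (detLoad (pol 0) E) + fInd (detLoad (pol 1) E) := by
        fin_cases β
        · have h : fInd (detLoad (pol 0) E) = 1 := hβ
          linarith
        · have h : fInd (detLoad (pol 1) E) = 1 := hβ
          linarith
      have hm := hindMax_le_one E
      have : α * hindMax fInd E ≤ α := by nlinarith
      have : α * hindMax fInd E -
          (fInd (detLoad (pol 0) E) + fInd (detLoad (pol 1) E)) / 2 ≤ α - 1 / 2 := by
        linarith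
      exact le_trans this (le_max_left _ _)
    · push_neg at H
      have hzero : ∀ ℓ ∈ loads E, fInd ℓ = 0 := by
        intro ℓ hℓ
        unfold fInd
        rw [if_neg]
        intro ⟨c0, c1⟩
        exact absurd c1 (by simpa using H ℓ hℓ c0)
      have hh : hindMax fInd E ≤ 0 :=
        Real.sSup_le (by rintro y ⟨ℓ, hℓ, rfl⟩; rw [hzero ℓ hℓ]) le_rfl
      have : α * hindMax fInd E ≤ 0 := mul_nonpos_iff.2 (Or.inl ⟨hα.le, hh⟩)
      have : α * hindMax fInd E -
          (fInd (detLoad (pol 0) E) + fInd (detLoad (pol 1) E)) / 2 ≤ 0 := by linarith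
      exact le_trans this (le_max_right _ _)
  · -- max (α - 1/2) 0 < α
    exact max_lt (by linarith) hα
  · -- WF lower bound
    have hbdd : BddAbove ((fun E => α * hindMax fInd E - fInd (wfLoad E)) '' seqs 2 2 2) := by
      refine ⟨α, ?_⟩
      rintro y ⟨E, hE, rfl⟩
      have h1 := hindMax_le_one E
      have h2 := fInd_nonneg (wfLoad E)
      dsimp only
      nlinarith
    have hmem : Estar ∈ seqs 2 2 2 := by
      show ∑ t, Estar.q t = 2
      rw [Fin.sum_univ_two]
      norm_num [Estar]
    have := le_csSup hbdd (Set.mem_image_of_mem _ hmem)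
    rw [hindMax_Estar, wf_fails] at this
    calc α = α * 1 - 0 := by ring
    _ ≤ regMaxWF 2 2 2 α fInd := this
end
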